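/- arXiv:1911.04358 — 9 statements merged into one kernel-verified Lean document; each statement's English description precedes it below -/
import Mathlib

section
/- For every n ≥ 4, the maximum number of colors in an edge-coloring of K_n with no properly colored path on 4 vertices equals 2. -/
/-- Number of distinct colors used on the edges of `K_n` by the edge-coloring `c`. -/
def colorsUsed (n : ℕ) (c : Fin n → Fin n → ℕ) : ℕ :=
  ((Finset.univ.filter fun p : Fin n × Fin n => p.1 ≠ p.2).image fun p => c p.1 p.2).card

/-- The edge-colored `K_n` contains a properly colored path on `l` vertices. -/
def HasPCPath (n l : ℕ) (c : Fin n → Fin n → ℕ) : Prop :=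
  ∃ p : Fin l → Fin n, Function.Injective p ∧
    ∀ i : ℕ, (h : i + 2 < l) →
      c (p ⟨i, by omega⟩) (p ⟨i + 1, by omega⟩) ≠
        c (p ⟨i + 1, by omega⟩) (p ⟨i + 2, h⟩)

lemma key {n : ℕ} {c : Fin n → Fin n → ℕ} (hnp : ¬ HasPCPath n 4 c)
    {w x y z : Fin n} (hwx : w ≠ x) (hwy : w ≠ y) (hwz : w ≠ z)
    (hxy : x ≠ y) (hxz : x ≠ z) (hyz : y ≠ z) :
    c w x = c x y ∨ c x y = c y z := by
  by_contra h
  push_neg at h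
  apply hnp
  refine ⟨fun i => if i.1 = 0 then w else if i.1 = 1 then x else if i.1 = 2 then y else z,
    ?_, ?_⟩
  · intro i j hij
    fin_cases i <;> fin_cases j <;> simp_all
  · intro i hi
    have hi2 : i < 2 := by omega
    obtain ⟨h1, h2⟩ := h
    interval_cases i
    · simpa using h1
    · simpa using h2

lemma exists_fourth {n : ℕ} (hn : 4 ≤ n) (a b c : Fin n) :
    ∃ d : Fin n, d ≠ a ∧ d ≠ b ∧ d ≠ c := by
  by_contra h
  push_neg at h
  have hsub : (Finset.univ : Finset (Fin n)) ⊆ {a, b, c} := by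
    intro d _
    have := h d
    simp only [Finset.mem_insert, Finset.mem_singleton]
    tauto
  have e1 := Finset.card_insert_le a ({b, c} : Finset (Fin n))
  have e2 := Finset.card_insert_le b ({c} : Finset (Fin n))
  have e3 : ({c} : Finset (Fin n)).card = 1 := Finset.card_singleton c
  have e4 := Finset.card_le_card hsub
  rw [Finset.card_univ, Fintype.card_fin] at e4
  have : ({a, b, c} : Finset (Fin n)).card = (insert a ({b,c} : Finset (Fin n))).card := rfl
  have : ({b, c} : Finset (Fin n)).card = (insert b ({c} : Finset (Fin n))).card := rfl
  omega

lemma const_color {n : ℕ} {c : Fin n → Fin n → ℕ} (sym : ∀ i j, c i j = c j i)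
    (H : ∀ a b d : Fin n, a ≠ b → a ≠ d → b ≠ d → c a b = c b d) :
    ∀ u v x y : Fin n, u ≠ v → x ≠ y → c u v = c x y := by
  have step : ∀ a b d : Fin n, a ≠ b → a ≠ d → b ≠ d → c a b = c a d := by
    intro a b d hab had hbd
    calc c a b = c b a := sym a b
    _ = c a d := H b a d (Ne.symm hab) hbd had
  have step' : ∀ a b d : Fin n, a ≠ b → d ≠ b → a ≠ d → c a b = c d b := by
    intro a b d hab hdb had
    calc c a b = c b a := sym a b
    _ = c b d := step b a d (Ne.symm hab) (Ne.symm hdb) had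
    _ = c d b := sym b d
  intro u v x y huv hxy
  rcases eq_or_ne u x with hux | hux
  · subst hux
    rcases eq_or_ne v y with hvy | hvy
    · rw [hvy]
    · exact step u v y huv hxy hvy
  · rcases eq_or_ne v y with hvy | hvy
    · subst hvy
      exact step' u v x huv hxy hux
    · rcases eq_or_ne u y with huy | huy
      · subst huy
        rcases eq_or_ne v x with hvx | hvx
        · subst hvx; exact sym u v
        · calc c u v = c x v := step' u v x huv (Ne.symm hvx) hux
          _ = c x u := step x v u (Ne.symm hvx) (Ne.symm hux) (Ne.symm huv)
      · rcases eq_or_ne v x with hvx | hvx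
        · subst hvx
          calc c u v = c u y := step u v y huv huy hxy
          _ = c v y := step' u y v huy hxy huv
        · calc c u v = c u y := step u v y huv huy hvy
          _ = c x y := step' u y x huy hxy hux

/-- For every `n ≥ 4`, the maximum number of colors in an edge-coloring of `K_n`
with no properly colored `P_4` equals `2`. -/
theorem pr_P4 (n : ℕ) (hn : 4 ≤ n) :
    IsGreatest {m : ℕ | ∃ c : Fin n → Fin n → ℕ, (∀ i j, c i j = c j i) ∧
      ¬ HasPCPath n 4 c ∧ colorsUsed n c = m} 2 := by
  have v0 : Fin n := ⟨0, by omega⟩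
  constructor
  · -- membership: the star coloring at vertex ⟨0,_⟩
    refine ⟨fun i j => if i = (⟨0, by omega⟩ : Fin n) ∨ j = (⟨0, by omega⟩ : Fin n)
      then 1 else 0, ?_, ?_, ?_⟩
    · intro i j; simp [or_comm]
    · rintro ⟨p, hinj, hcol⟩
      have h1 := hcol 0 (by norm_num)
      have h2 := hcol 1 (by norm_num)
      by_cases hm : p 1 = (⟨0, by omega⟩ : Fin n) ∨ p 2 = (⟨0, by omega⟩ : Fin n)
      · rcases hm with hm | hm
        · exact h1 (by simp [hm])
        · exact h2 (by simp [hm])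
      · push_neg at hm
        have hp0 : p 0 = (⟨0, by omega⟩ : Fin n) := by
          by_contra h
          exact h1 (by simp [h, hm.1, hm.2])
        have hp3 : p 3 = (⟨0, by omega⟩ : Fin n) := by
          by_contra h
          exact h2 (by simp [h, hm.1, hm.2])
        have := hinj (hp0.trans hp3.symm)
        simp at this
    · -- exactly two colors used
      have h0 : (⟨0, by omega⟩ : Fin n) ≠ ⟨1, by omega⟩ := by
        simp [Fin.ext_iff]
      have h12 : (⟨1, by omega⟩ : Fin n) ≠ ⟨2, by omega⟩ := by
        simp [Fin.ext_iff]
      have h10 : (⟨1, by omega⟩ : Fin n) ≠ ⟨0, by omega⟩ := Ne.symm h0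
      have h20 : (⟨2, by omega⟩ : Fin n) ≠ ⟨0, by omega⟩ := by
        simp [Fin.ext_iff]
      unfold colorsUsed
      have himg : ((Finset.univ.filter fun p : Fin n × Fin n => p.1 ≠ p.2).image
          fun p => (fun i j => if i = (⟨0, by omega⟩ : Fin n) ∨
            j = (⟨0, by omega⟩ : Fin n) then 1 else 0 : Fin n → Fin n → ℕ) p.1 p.2)
          = {0, 1} := by
        apply Finset.Subset.antisymm
        · intro m hm
          simp only [Finset.mem_image, Finset.mem_filter] at hm
          obtain ⟨p, _, hp⟩ := hm
          simp only [Finset.mem_insert, Finset.mem_singleton]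
          by_cases h : p.1 = (⟨0, by omega⟩ : Fin n) ∨ p.2 = (⟨0, by omega⟩ : Fin n) <;>
            simp [h] at hp <;> omega
        · intro m hm
          simp only [Finset.mem_insert, Finset.mem_singleton] at hm
          simp only [Finset.mem_image, Finset.mem_filter]
          rcases hm with rfl | rfl
          · exact ⟨(⟨1, by omega⟩, ⟨2, by omega⟩), by simp [h12], by simp [h10, h20]⟩
          · exact ⟨(⟨0, by omega⟩, ⟨1, by omega⟩), by simp [h0], by simp⟩
      rw [himg]
      simp
  · -- upper bound
    rintro m ⟨c, sym, hnp, rfl⟩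
    by_contra hgt
    push_neg at hgt
    have h3 : 3 ≤ colorsUsed n c := hgt
    by_cases hP3 : ∃ a b d : Fin n, a ≠ b ∧ a ≠ d ∧ b ≠ d ∧ c a b ≠ c b d
    · obtain ⟨a, b, d, hab, had, hbd, hcol⟩ := hP3
      -- every edge has color c a b or c b d
      have fact1 : ∀ e : Fin n, e ≠ a → e ≠ b → e ≠ d → c a e = c a b := by
        intro e hea heb hed
        rcases key hnp hea heb hed hab had hbd with h | h
        · rw [sym a e]; exact h
        · exact absurd h hcol
      have fact2 : ∀ e : Fin n, e ≠ a → e ≠ b → e ≠ d → c d e = c b d := by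
        intro e hea heb hed
        rcases key hnp hab had (Ne.symm hea) hbd (Ne.symm heb) (Ne.symm hed) with h | h
        · exact absurd h hcol
        · exact h.symm
      have fact3 : c a d = c a b ∨ c a d = c b d := by
        obtain ⟨e, hea, heb, hed⟩ := exists_fourth hn a b d
        rcases key hnp (Ne.symm hab) hbd (Ne.symm heb) had (Ne.symm hea)
            (Ne.symm hed) with h | h
        · left; rw [← h, sym b a]
        · right; rw [h, fact2 e hea heb hed]
      have fact4 : ∀ e : Fin n, e ≠ a → e ≠ b → e ≠ d →
          c b e = c a b ∨ c b e = c b d := by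
        intro e hea heb hed
        rcases key hnp (Ne.symm hbd) (Ne.symm hed) (Ne.symm had) (Ne.symm heb)
            (Ne.symm hab) hea with h | h
        · right; rw [← h, sym d b]
        · left; rw [h, sym e a, fact1 e hea heb hed]
      have fact5 : ∀ e f : Fin n, e ≠ a → e ≠ b → e ≠ d → f ≠ a → f ≠ b → f ≠ d →
          e ≠ f → c e f = c a b ∨ c e f = c b d := by
        intro e f hea heb hed hfa hfb hfd hef
        rcases key hnp (Ne.symm hea) (Ne.symm hfa) had hef hed hfd with h | h
        · left; rw [← h, fact1 e hea heb hed]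
        · right; rw [h, sym f d, fact2 f hfa hfb hfd]
      have main : ∀ u v : Fin n, u ≠ v → c u v = c a b ∨ c u v = c b d := by
        intro u v huv
        rcases eq_or_ne u a with rfl | hua
        · rcases eq_or_ne v b with rfl | hvb
          · left; rfl
          · rcases eq_or_ne v d with rfl | hvd
            · exact fact3
            · left; exact fact1 v (Ne.symm huv) hvb hvd
        · rcases eq_or_ne u b with rfl | hub
          · rcases eq_or_ne v a with rfl | hva
            · left; exact sym u v
            · rcases eq_or_ne v d with rfl | hvd
              · right; rfl
              · exact fact4 v hva (Ne.symm huv) hvd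
          · rcases eq_or_ne u d with rfl | hud
            · rcases eq_or_ne v a with rfl | hva
              · rw [sym u v]; exact fact3
              · rcases eq_or_ne v b with rfl | hvb
                · right; exact sym u v
                · right; exact fact2 v hva hvb (Ne.symm huv)
            · rcases eq_or_ne v a with rfl | hva
              · rw [sym u v]; left; exact fact1 u hua hub hud
              · rcases eq_or_ne v b with rfl | hvb
                · rw [sym u v]; exact fact4 u hua hub hud
                · rcases eq_or_ne v d with rfl | hvd
                  · rw [sym u v]; right; exact fact2 u hua hub hud
                  · exact fact5 u v hua hub hud hva hvb hvd huv
      have hsub : ((Finset.univ.filter fun p : Fin n × Fin n => p.1 ≠ p.2).image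
          fun p => c p.1 p.2) ⊆ {c a b, c b d} := by
        intro m hm
        simp only [Finset.mem_image, Finset.mem_filter] at hm
        obtain ⟨p, ⟨_, hp⟩, rfl⟩ := hm
        simpa using main p.1 p.2 hp
      have hle : colorsUsed n c ≤ 2 := by
        unfold colorsUsed
        exact (Finset.card_le_card hsub).trans
          ((Finset.card_insert_le _ _).trans (by simp))
      omega
    · push_neg at hP3
      have hmono := const_color sym fun a b d h1 h2 h3 => hP3 a b d h1 h2 h3
      have h01 : (⟨0, by omega⟩ : Fin n) ≠ ⟨1, by omega⟩ := by simp [Fin.ext_iff]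
      have hsub : ((Finset.univ.filter fun p : Fin n × Fin n => p.1 ≠ p.2).image
          fun p => c p.1 p.2) ⊆ {c ⟨0, by omega⟩ ⟨1, by omega⟩} := by
        intro m hm
        simp only [Finset.mem_image, Finset.mem_filter] at hm
        obtain ⟨p, ⟨_, hp⟩, rfl⟩ := hm
        simp [hmono p.1 p.2 ⟨0, by omega⟩ ⟨1, by omega⟩ hp h01]
      have hle : colorsUsed n c ≤ 1 := by
        unfold colorsUsed
        exact (Finset.card_le_card hsub).trans (by simp)
      omega
end

section
/- For every n ≥ 5, the maximum number of colors in an edge-coloring of K_n with no properly colored path on 5 vertices equals 3. -/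
/-- the extremal coloring -/
def minColor (n : ℕ) : Fin n → Fin n → ℕ := fun i j => min (min (i : ℕ) (j : ℕ)) 2

lemma mk_path {n : ℕ} (c : Fin n → Fin n → ℕ) (u1 u2 u3 u4 u5 : Fin n)
    (d12 : u1 ≠ u2) (d13 : u1 ≠ u3) (d14 : u1 ≠ u4) (d15 : u1 ≠ u5)
    (d23 : u2 ≠ u3) (d24 : u2 ≠ u4) (d25 : u2 ≠ u5)
    (d34 : u3 ≠ u4) (d35 : u3 ≠ u5) (d45 : u4 ≠ u5)
    (h1 : c u1 u2 ≠ c u2 u3) (h2 : c u2 u3 ≠ c u3 u4) (h3 : c u3 u4 ≠ c u4 u5) :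
    HasPCPath n 5 c := by
  refine ⟨![u1, u2, u3, u4, u5], ?_, ?_⟩
  · intro i j hij
    fin_cases i <;> fin_cases j <;> simp_all
  · intro i h
    have h3' : i < 3 := by omega
    interval_cases i
    · simpa using h1
    · simpa using h2
    · simpa using h3

lemma exists_out {n : ℕ} (hn : 5 ≤ n) (v1 v2 v3 v4 : Fin n) :
    ∃ w : Fin n, w ≠ v1 ∧ w ≠ v2 ∧ w ≠ v3 ∧ w ≠ v4 := by
  by_contra hcon
  push_neg at hcon
  have hsub : (Finset.univ : Finset (Fin n)) ⊆ {v1, v2, v3, v4} := by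
    intro w _
    have := hcon w
    simp only [Finset.mem_insert, Finset.mem_singleton]
    tauto
  have h1 := Finset.card_le_card hsub
  have h2 : ({v1, v2, v3, v4} : Finset (Fin n)).card ≤ 4 := by
    apply le_trans (Finset.card_insert_le _ _)
    have := Finset.card_insert_le v2 ({v3, v4} : Finset (Fin n))
    have := Finset.card_insert_le v3 ({v4} : Finset (Fin n))
    simp_all
    omega
  simp [Finset.card_univ] at h1
  omega

set_option maxHeartbeats 1000000 in
lemma L1 {n : ℕ} (c : Fin n → Fin n → ℕ) (hsym : ∀ i j, c i j = c j i)
    (H : ∀ u1 u2 u3 u4 u5 : Fin n, u1 ≠ u2 → u1 ≠ u3 → u1 ≠ u4 → u1 ≠ u5 → u2 ≠ u3 → u2 ≠ u4 →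
      u2 ≠ u5 → u3 ≠ u4 → u3 ≠ u5 → u4 ≠ u5 →
      c u1 u2 = c u2 u3 ∨ c u2 u3 = c u3 u4 ∨ c u3 u4 = c u4 u5)
    (v1 v2 v3 v4 w : Fin n)
    (h12 : v1 ≠ v2) (h13 : v1 ≠ v3) (h14 : v1 ≠ v4) (h15 : v1 ≠ w)
    (h23 : v2 ≠ v3) (h24 : v2 ≠ v4) (h25 : v2 ≠ w) (h34 : v3 ≠ v4) (h35 : v3 ≠ w)
    (h45 : v4 ≠ w) (hab : c v1 v2 ≠ c v2 v3) (hbd : c v2 v3 ≠ c v3 v4) :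
    ∀ x y : Fin n, (x = v1 ∨ x = v2 ∨ x = v3 ∨ x = v4 ∨ x = w) →
      (y = v1 ∨ y = v2 ∨ y = v3 ∨ y = v4 ∨ y = w) → x ≠ y →
      c x y = c v1 v2 ∨ c x y = c v2 v3 ∨ c x y = c v3 v4 := by
  have s21 : c v2 v1 = c v1 v2 := hsym _ _
  have s31 : c v3 v1 = c v1 v3 := hsym _ _
  have s41 : c v4 v1 = c v1 v4 := hsym _ _
  have s51 : c w v1 = c v1 w := hsym _ _
  have s32 : c v3 v2 = c v2 v3 := hsym _ _
  have s42 : c v4 v2 = c v2 v4 := hsym _ _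
  have s52 : c w v2 = c v2 w := hsym _ _
  have s43 : c v4 v3 = c v3 v4 := hsym _ _
  have s53 : c w v3 = c v3 w := hsym _ _
  have s54 : c w v4 = c v4 w := hsym _ _
  have F1 := H v1 v2 v3 v4 w h12 h13 h14 h15 h23 h24 h25 h34 h35 h45
  have m45 : c v4 w = c v3 v4 := by omega
  have F2 := H w v1 v2 v3 v4 h15.symm h25.symm h35.symm h45.symm h12 h13 h14 h23 h24 h34
  have m15 : c v1 w = c v1 v2 := by omega
  clear F2
  have F3 := H v2 v3 v4 v1 w h23 h24 h12.symm h25 h34 h13.symm h35 h14.symm h45 h15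
  have m14 : c v1 v4 = c v1 v2 ∨ c v1 v4 = c v3 v4 := by omega
  clear F3
  have F4 := H v1 v2 v3 w v4 h12 h13 h15 h14 h23 h25 h24 h35 h34 h45.symm
  have m35 : c v3 w = c v2 v3 ∨ c v3 w = c v3 v4 := by omega
  clear F4
  have F5 := H v1 w v2 v3 v4 h15 h12 h13 h14 h25.symm h35.symm h45.symm h23 h24 h34
  have m25 : c v2 w = c v1 v2 ∨ c v2 w = c v2 v3 := by omega
  clear F5
  clear F1
  have F6 := H v4 v1 v3 v2 w h14.symm h34.symm h24.symm h45 h13 h12 h15 h23.symm h35 h25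
  have F7 := H v4 v3 v1 v2 w h34.symm h14.symm h24.symm h45 h13.symm h23.symm h35 h12 h15 h25
  have m13 : c v1 v3 = c v1 v2 ∨ c v1 v3 = c v2 v3 ∨ c v1 v3 = c v3 v4 := by omega
  clear F6 F7
  have F8 := H v1 v2 v4 v3 w h12 h14 h13 h15 h24 h23 h25 h34.symm h45 h35
  have F9 := H v1 v4 v2 v3 w h14 h12 h13 h15 h24.symm h34.symm h45 h23 h25 h35
  have m24 : c v2 v4 = c v1 v2 ∨ c v2 v4 = c v2 v3 ∨ c v2 v4 = c v3 v4 := by omega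
  clear F8 F9
  intro x y hx hy hxy
  rcases hx with rfl | rfl | rfl | rfl | rfl <;> rcases hy with rfl | rfl | rfl | rfl | rfl <;>
    first
      | exact absurd rfl hxy
      | omega

set_option maxHeartbeats 1000000 in
lemma L2 {n : ℕ} (c : Fin n → Fin n → ℕ) (hsym : ∀ i j, c i j = c j i)
    (H : ∀ u1 u2 u3 u4 u5 : Fin n, u1 ≠ u2 → u1 ≠ u3 → u1 ≠ u4 → u1 ≠ u5 → u2 ≠ u3 → u2 ≠ u4 →
      u2 ≠ u5 → u3 ≠ u4 → u3 ≠ u5 → u4 ≠ u5 →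
      c u1 u2 = c u2 u3 ∨ c u2 u3 = c u3 u4 ∨ c u3 u4 = c u4 u5)
    (v1 v2 v3 v4 w x : Fin n)
    (h12 : v1 ≠ v2) (h13 : v1 ≠ v3) (h14 : v1 ≠ v4)
    (h23 : v2 ≠ v3) (h24 : v2 ≠ v4) (h34 : v3 ≠ v4)
    (h1w : v1 ≠ w) (h2w : v2 ≠ w) (h3w : v3 ≠ w) (h4w : v4 ≠ w)
    (h1x : v1 ≠ x) (h2x : v2 ≠ x) (h3x : v3 ≠ x) (h4x : v4 ≠ x)
    (hwx : w ≠ x) (hab : c v1 v2 ≠ c v2 v3) (hbd : c v2 v3 ≠ c v3 v4) :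
    c w x = c v1 v2 ∨ c w x = c v2 v3 ∨ c w x = c v3 v4 := by
  have sw4 : c w v4 = c v4 w := hsym _ _
  have sw3 : c w v3 = c v3 w := hsym _ _
  have sx1 : c x v1 = c v1 x := hsym _ _
  have sxw : c x w = c w x := hsym _ _
  have F1 := H v1 v2 v3 v4 w h12 h13 h14 h1w h23 h24 h2w h34 h3w h4w
  have F4 := H v1 v2 v3 w v4 h12 h13 h1w h14 h23 h2w h24 h3w h34 h4w.symm
  have E16 := H x v1 v2 v3 v4 h1x.symm h2x.symm h3x.symm h4x.symm h12 h13 h14 h23 h24 h34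
  have G1 := H v1 v2 v3 w x h12 h13 h1w h1x h23 h2w h2x h3w h3x hwx
  have G2 := H v1 x w v3 v4 h1x h1w h13 h14 hwx.symm h3x.symm h4x.symm h3w.symm h4w.symm h34
  omega

lemma allEq {n : ℕ} (c : Fin n → Fin n → ℕ) (hsym : ∀ i j, c i j = c j i)
    (h3 : ∀ x y z : Fin n, x ≠ y → x ≠ z → y ≠ z → c x y = c y z)
    (i j k l : Fin n) (hij : i ≠ j) (hkl : k ≠ l) : c i j = c k l := by
  by_cases hjk : j = k
  · subst hjk
    by_cases hil : i = l
    · subst hil; exact hsym _ _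
    · exact h3 i j l hij hil hkl
  · by_cases hjl : j = l
    · subst hjl
      by_cases hik : i = k
      · subst hik; rfl
      · exact (h3 i j k hij hik hjk).trans (hsym _ _)
    · by_cases hik : i = k
      · subst hik
        exact (hsym _ _).trans (h3 j i l hij.symm hjl hkl)
      · by_cases hil : i = l
        · subst hil
          exact (hsym _ _).trans ((h3 j i k hij.symm hjk hik).trans (hsym _ _))
        · exact (h3 i j k hij hik hjk).trans (h3 j k l hjk hjl hkl)

set_option maxHeartbeats 2000000 in
/-- For every `n ≥ 5`, the maximum number of colors in an edge-coloring of `K_n`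
with no properly colored `P_5` equals `3`. -/
theorem pr_P5 (n : ℕ) (hn : 5 ≤ n) :
    IsGreatest {m : ℕ | ∃ c : Fin n → Fin n → ℕ, (∀ i j, c i j = c j i) ∧
      ¬ HasPCPath n 5 c ∧ colorsUsed n c = m} 3 := by
  constructor
  · -- membership: the coloring minColor
    refine ⟨minColor n, ?_, ?_, ?_⟩
    · intro i j; simp only [minColor]; omega
    · rintro ⟨p, hinj, hpc⟩
      have np : ∀ a b : Fin 5, a ≠ b → ((p a : Fin n) : ℕ) ≠ ((p b : Fin n) : ℕ) := by
        intro a b hab h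
        exact hab (hinj (Fin.val_injective h))
      have g0 : minColor n (p 0) (p 1) ≠ minColor n (p 1) (p 2) := hpc 0 (by omega)
      have g1 : minColor n (p 1) (p 2) ≠ minColor n (p 2) (p 3) := hpc 1 (by omega)
      have g2 : minColor n (p 2) (p 3) ≠ minColor n (p 3) (p 4) := hpc 2 (by omega)
      simp only [minColor] at g0 g1 g2
      have n01 := np 0 1 (by decide)
      have n02 := np 0 2 (by decide)
      have n03 := np 0 3 (by decide)
      have n04 := np 0 4 (by decide)
      have n12 := np 1 2 (by decide)
      have n13 := np 1 3 (by decide)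
      have n14 := np 1 4 (by decide)
      have n23 := np 2 3 (by decide)
      have n24 := np 2 4 (by decide)
      have n34 := np 3 4 (by decide)
      omega
    · show colorsUsed n (minColor n) = 3
      unfold colorsUsed
      have himg : ((Finset.univ.filter fun p : Fin n × Fin n => p.1 ≠ p.2).image
          fun p => minColor n p.1 p.2) = {0, 1, 2} := by
        apply Finset.Subset.antisymm
        · intro t ht
          simp only [Finset.mem_image, Finset.mem_filter] at ht
          obtain ⟨q, _, rfl⟩ := ht
          simp only [minColor, Finset.mem_insert, Finset.mem_singleton]
          omega
        · intro t ht
          simp only [Finset.mem_insert, Finset.mem_singleton] at ht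
          simp only [Finset.mem_image, Finset.mem_filter]
          rcases ht with rfl | rfl | rfl
          · exact ⟨(⟨0, by omega⟩, ⟨1, by omega⟩),
              ⟨Finset.mem_univ _, by simp [Fin.ext_iff]⟩, by norm_num [minColor]⟩
          · exact ⟨(⟨1, by omega⟩, ⟨2, by omega⟩),
              ⟨Finset.mem_univ _, by simp [Fin.ext_iff]⟩, by norm_num [minColor]⟩
          · exact ⟨(⟨2, by omega⟩, ⟨3, by omega⟩),
              ⟨Finset.mem_univ _, by simp [Fin.ext_iff]⟩, by norm_num [minColor]⟩
      rw [himg]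
      rfl
  · -- upper bound
    rintro m ⟨c, hsym, hno, rfl⟩
    have H : ∀ u1 u2 u3 u4 u5 : Fin n, u1 ≠ u2 → u1 ≠ u3 → u1 ≠ u4 → u1 ≠ u5 → u2 ≠ u3 →
        u2 ≠ u4 → u2 ≠ u5 → u3 ≠ u4 → u3 ≠ u5 → u4 ≠ u5 →
        c u1 u2 = c u2 u3 ∨ c u2 u3 = c u3 u4 ∨ c u3 u4 = c u4 u5 := by
      intro u1 u2 u3 u4 u5 d12 d13 d14 d15 d23 d24 d25 d34 d35 d45
      by_contra hcon
      push_neg at hcon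
      exact hno (mk_path c u1 u2 u3 u4 u5 d12 d13 d14 d15 d23 d24 d25 d34 d35 d45
        hcon.1 hcon.2.1 hcon.2.2)
    obtain ⟨S, hS, hmem⟩ : ∃ S : Finset ℕ, S.card ≤ 3 ∧ ∀ i j : Fin n, i ≠ j → c i j ∈ S := by
      by_cases hP4 : ∃ u1 u2 u3 u4 : Fin n, u1 ≠ u2 ∧ u1 ≠ u3 ∧ u1 ≠ u4 ∧ u2 ≠ u3 ∧ u2 ≠ u4 ∧
          u3 ≠ u4 ∧ c u1 u2 ≠ c u2 u3 ∧ c u2 u3 ≠ c u3 u4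
      · obtain ⟨v1, v2, v3, v4, h12, h13, h14, h23, h24, h34, hab, hbd⟩ := hP4
        refine ⟨{c v1 v2, c v2 v3, c v3 v4}, ?_, ?_⟩
        · apply le_trans (Finset.card_insert_le _ _)
          apply Nat.succ_le_succ
          apply le_trans (Finset.card_insert_le _ _)
          simp
        · intro i j hij
          have key : c i j = c v1 v2 ∨ c i j = c v2 v3 ∨ c i j = c v3 v4 := by
            have hi : (i = v1 ∨ i = v2 ∨ i = v3 ∨ i = v4) ∨
                (i ≠ v1 ∧ i ≠ v2 ∧ i ≠ v3 ∧ i ≠ v4) := by tauto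
            have hj : (j = v1 ∨ j = v2 ∨ j = v3 ∨ j = v4) ∨
                (j ≠ v1 ∧ j ≠ v2 ∧ j ≠ v3 ∧ j ≠ v4) := by tauto
            rcases hi with hi | ⟨hi1, hi2, hi3, hi4⟩
            · rcases hj with hj | ⟨hj1, hj2, hj3, hj4⟩
              · obtain ⟨w, hw1, hw2, hw3, hw4⟩ := exists_out hn v1 v2 v3 v4
                exact L1 c hsym H v1 v2 v3 v4 w h12 h13 h14 hw1.symm h23 h24 hw2.symm
                  h34 hw3.symm hw4.symm hab hbd i j (by tauto) (by tauto) hij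
              · exact L1 c hsym H v1 v2 v3 v4 j h12 h13 h14 hj1.symm h23 h24 hj2.symm
                  h34 hj3.symm hj4.symm hab hbd i j (by tauto) (by tauto) hij
            · rcases hj with hj | ⟨hj1, hj2, hj3, hj4⟩
              · exact L1 c hsym H v1 v2 v3 v4 i h12 h13 h14 hi1.symm h23 h24 hi2.symm
                  h34 hi3.symm hi4.symm hab hbd i j (by tauto) (by tauto) hij
              · exact L2 c hsym H v1 v2 v3 v4 i j h12 h13 h14 h23 h24 h34
                  hi1.symm hi2.symm hi3.symm hi4.symm hj1.symm hj2.symm hj3.symm hj4.symm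
                  hij hab hbd
          simp only [Finset.mem_insert, Finset.mem_singleton]
          tauto
      · push_neg at hP4
        by_cases hP3 : ∃ x y z : Fin n, x ≠ y ∧ x ≠ z ∧ y ≠ z ∧ c x y ≠ c y z
        · obtain ⟨x, y, z, hxy, hxz, hyz, hab⟩ := hP3
          have fz : ∀ u, u ≠ x → u ≠ y → u ≠ z → c z u = c y z := by
            intro u hux huy huz
            exact (hP4 x y z u hxy hxz hux.symm hyz huy.symm huz.symm hab).symm
          have fx : ∀ u, u ≠ x → u ≠ y → u ≠ z → c x u = c x y := by
            intro u hux huy huz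
            have h := hP4 u x y z hux huy huz hxy hxz hyz
            have : c u x = c x y := by
              by_contra hq
              exact hab (h hq)
            exact (hsym _ _).trans this
          have fy : ∀ u, u ≠ x → u ≠ y → u ≠ z → c y u = c x y ∨ c y u = c y z := by
            intro u hux huy huz
            by_cases hc : c x y = c y u
            · exact Or.inl hc.symm
            · have h := hP4 x y u z hxy hux.symm hxz huy.symm hyz huz hc
              have hz := fz u hux huy huz
              have : c u z = c z u := hsym _ _
              omega
          have fxz : c x z = c x y ∨ c x z = c y z := by
            obtain ⟨u, hu1, hu2, hu3, _⟩ := exists_out hn x y z z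
            by_cases hc : c y x = c x z
            · exact Or.inl (hc.symm.trans (hsym _ _))
            · have h := hP4 y x z u hxy.symm hyz hu2.symm hxz hu1.symm hu3.symm hc
              have hz := fz u hu1 hu2 hu3
              omega
          have fuu : ∀ u u', u ≠ x → u ≠ y → u ≠ z → u' ≠ x → u' ≠ y → u' ≠ z → u ≠ u' →
              c u u' = c x y ∨ c u u' = c y z := by
            intro u u' hux huy huz hvx hvy hvz huv
            by_cases hc : c x u = c u u'
            · exact Or.inl (hc.symm.trans (fx u hux huy huz))
            · have h := hP4 x u u' z hux.symm hvx.symm hxz huv huz hvz hc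
              have hz := fz u' hvx hvy hvz
              have : c u' z = c z u' := hsym _ _
              omega
          refine ⟨{c x y, c y z}, ?_, ?_⟩
          · apply le_trans (Finset.card_insert_le _ _)
            simp
          · intro i j hij
            have key : c i j = c x y ∨ c i j = c y z := by
              have hi : i = x ∨ i = y ∨ i = z ∨ (i ≠ x ∧ i ≠ y ∧ i ≠ z) := by tauto
              have hj : j = x ∨ j = y ∨ j = z ∨ (j ≠ x ∧ j ≠ y ∧ j ≠ z) := by tauto
              rcases hi with rfl | rfl | rfl | ⟨hi1, hi2, hi3⟩
              · rcases hj with rfl | rfl | rfl | ⟨hj1, hj2, hj3⟩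
                · exact absurd rfl hij
                · exact Or.inl rfl
                · exact fxz
                · exact Or.inl (fx j hj1 hj2 hj3)
              · rcases hj with rfl | rfl | rfl | ⟨hj1, hj2, hj3⟩
                · exact Or.inl (hsym _ _)
                · exact absurd rfl hij
                · exact Or.inr rfl
                · exact fy j hj1 hj2 hj3
              · rcases hj with rfl | rfl | rfl | ⟨hj1, hj2, hj3⟩
                · have := fxz
                  have hs := hsym i j
                  omega
                · exact Or.inr (hsym _ _)
                · exact absurd rfl hij
                · exact Or.inr (fz j hj1 hj2 hj3)
              · rcases hj with rfl | rfl | rfl | ⟨hj1, hj2, hj3⟩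
                · have := fx i hi1 hi2 hi3
                  have hs := hsym i j
                  omega
                · have := fy i hi1 hi2 hi3
                  have hs := hsym i j
                  omega
                · have := fz i hi1 hi2 hi3
                  have hs := hsym i j
                  omega
                · exact fuu i j hi1 hi2 hi3 hj1 hj2 hj3 hij
            simp only [Finset.mem_insert, Finset.mem_singleton]
            tauto
        · push_neg at hP3
          have h3 : ∀ x y z : Fin n, x ≠ y → x ≠ z → y ≠ z → c x y = c y z := by
            intro x y z hxy hxz hyz
            exact hP3 x y z hxy hxz hyz
          refine ⟨{c ⟨0, by omega⟩ ⟨1, by omega⟩}, by simp, ?_⟩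
          intro i j hij
          simp only [Finset.mem_singleton]
          exact allEq c hsym h3 i j ⟨0, by omega⟩ ⟨1, by omega⟩ hij (by simp [Fin.ext_iff])
    -- conclude
    have hsub : ((Finset.univ.filter fun p : Fin n × Fin n => p.1 ≠ p.2).image
        fun p => c p.1 p.2) ⊆ S := by
      intro t ht
      simp only [Finset.mem_image, Finset.mem_filter] at ht
      obtain ⟨q, ⟨_, hne⟩, rfl⟩ := ht
      exact hmem q.1 q.2 hne
    calc colorsUsed n c ≤ S.card := Finset.card_le_card hsub
      _ ≤ 3 := hS
end

section
/- Let l ≥ 3 with l ≡ r_l (mod 3), 0 ≤ r_l ≤ 2, and n ≥ l. Then pr(K_n, P_l) ≥ max{ C(l-3,2) + 1, (⌊l/3⌋ - 1)·n - C(⌊l/3⌋,2) + 1 + r_l }, i.e., there exists an edge-coloring of K_n with that many colors containing no properly colored path on l vertices. -/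
def col1 (n m x y : ℕ) : ℕ :=
  if max x y < m then n * min x y + max x y + 3 else 0

def col2 (n a r x y : ℕ) : ℕ :=
  if min x y < a then n * min x y + max x y + 3
  else if 1 ≤ r ∧ min x y = a then 1
  else if r = 2 ∧ min x y = a + 1 then 2
  else 0

lemma col2_v1 {n a r x y : ℕ} (hr : 1 ≤ r) (hx : a ≤ x) (hy : a ≤ y)
    (h : x = a ∨ y = a) : col2 n a r x y = 1 := by
  unfold col2; split_ifs <;> omega

lemma col2_plain {n a r x y : ℕ} (hx : a ≤ x) (hy : a ≤ y) (hx1 : x ≠ a) (hy1 : y ≠ a)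
    (hx2 : r ≠ 2 ∨ x ≠ a+1) (hy2 : r ≠ 2 ∨ y ≠ a+1) : col2 n a r x y = 0 := by
  unfold col2; split_ifs <;> omega

lemma col2_v2 {n a r x y : ℕ} (hr : r = 2) (hx : a ≤ x) (hy : a ≤ y) (hx1 : x ≠ a)
    (hy1 : y ≠ a) (h : x = a+1 ∨ y = a+1) : col2 n a r x y = 2 := by
  unfold col2; split_ifs <;> omega

lemma col2_r0 {n a r x y : ℕ} (hr : r = 0) (hx : a ≤ x) (hy : a ≤ y) :
    col2 n a r x y = 0 := by
  unfold col2; split_ifs <;> omega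

lemma colors_ge (n : ℕ) (c : Fin n → Fin n → ℕ) (S : Finset ℕ)
    (hS : ∀ m ∈ S, ∃ i j : Fin n, i ≠ j ∧ c i j = m) : S.card ≤ colorsUsed n c := by
  apply Finset.card_le_card
  intro m hm
  obtain ⟨i, j, hij, hc⟩ := hS m hm
  exact Finset.mem_image.2 ⟨(i, j), Finset.mem_filter.2 ⟨Finset.mem_univ _, hij⟩, hc⟩

lemma enc_inj {n x1 y1 x2 y2 : ℕ} (hy1 : y1 < n) (hy2 : y2 < n)
    (h : n * x1 + y1 + 3 = n * x2 + y2 + 3) : x1 = x2 ∧ y1 = y2 := by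
  have hn : 0 < n := by omega
  have e : n * x1 + y1 = n * x2 + y2 := by omega
  have hy : y1 = y2 := by
    have e1 : (n * x1 + y1) % n = y1 := by rw [Nat.mul_add_mod]; exact Nat.mod_eq_of_lt hy1
    have e2 : (n * x2 + y2) % n = y2 := by rw [Nat.mul_add_mod]; exact Nat.mod_eq_of_lt hy2
    rw [← e1, ← e2, e]
  subst hy
  refine ⟨?_, rfl⟩
  have e3 : n * x1 = n * x2 := by omega
  exact Nat.eq_of_mul_eq_mul_left hn e3

lemma gauss : ∀ a n : ℕ, a ≤ n →
    (∑ x ∈ Finset.range a, (n - 1 - x)) + Nat.choose (a+1) 2 = a * n := by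
  intro a
  induction a with
  | zero => intro n h; simp
  | succ a ih =>
    intro n h
    have H := ih n (by omega)
    rw [Finset.sum_range_succ]
    have h1 : Nat.choose (a+2) 2 = Nat.choose (a+1) 2 + (a+1) := by
      rw [Nat.choose_succ_succ (a+1) 1, Nat.choose_one_right, Nat.add_comm]
    have h2 : (a+1) * n = a * n + n := by ring
    rw [h1, h2]
    generalize a * n = M at H ⊢
    omega

lemma card_pairs (a n : ℕ) (h : a ≤ n) :
    (((Finset.range a) ×ˢ (Finset.range n)).filter fun p : ℕ × ℕ => p.1 < p.2).card
      + Nat.choose (a+1) 2 = a * n := by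
  rw [← gauss a n h]
  congr 1
  have hb : (((Finset.range a) ×ˢ (Finset.range n)).filter fun p : ℕ × ℕ => p.1 < p.2).card
      = ((Finset.range a).sigma fun x => Finset.range (n - 1 - x)).card := by
    apply Finset.card_bij' (fun p _ => (⟨p.1, p.2 - p.1 - 1⟩ : (_ : ℕ) × ℕ))
      (fun s _ => (s.1, s.1 + 1 + s.2))
    · intro p hp
      simp only [Finset.mem_filter, Finset.mem_product, Finset.mem_range] at hp
      simp only [Finset.mem_sigma, Finset.mem_range]
      omega
    · intro s hs
      simp only [Finset.mem_sigma, Finset.mem_range] at hs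
      simp only [Finset.mem_filter, Finset.mem_product, Finset.mem_range]
      omega
    · intro p hp
      simp only [Finset.mem_filter, Finset.mem_product, Finset.mem_range] at hp
      have : p.1 + 1 + (p.2 - p.1 - 1) = p.2 := by omega
      simp [this]
    · intro s hs
      simp only [Finset.mem_sigma, Finset.mem_range] at hs
      have : s.1 + 1 + s.2 - s.1 - 1 = s.2 := by omega
      simp [this]
  rw [hb, Finset.card_sigma]
  simp

lemma two_choose_two : ∀ m : ℕ, Nat.choose m 2 * 2 + m = m * m := by
  intro m
  induction m with
  | zero => simp
  | succ m ih =>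
    have h1 : Nat.choose (m+1) 2 = Nat.choose m 2 + m := by
      rw [Nat.choose_succ_succ m 1, Nat.choose_one_right, Nat.add_comm]
    have h2 : (m+1) * (m+1) = m * m + 2*m + 1 := by ring
    rw [h1, h2]
    generalize m * m = M at ih ⊢
    omega

lemma pc_seq {n l : ℕ} {c : ℕ → ℕ → ℕ}
    (h : HasPCPath n l (fun i j => c i.val j.val)) :
    ∃ q : ℕ → ℕ, (∀ j j', j < l → j' < l → q j = q j' → j = j') ∧
      (∀ j, j + 2 < l → c (q j) (q (j+1)) ≠ c (q (j+1)) (q (j+2))) := by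
  obtain ⟨p, hinj, hprop⟩ := h
  refine ⟨fun j => if h : j < l then (p ⟨j, h⟩).val else 0, ?_, ?_⟩
  · intro j j' hj hj' he
    dsimp only at he
    rw [dif_pos hj, dif_pos hj'] at he
    have := hinj (Fin.ext he)
    simpa using congrArg Fin.val this
  · intro j hj
    have h0 : j < l := by omega
    have h1 : j + 1 < l := by omega
    dsimp only
    rw [dif_pos h0, dif_pos h1, dif_pos hj]
    exact hprop j hj

lemma constr2_no_path (l n a r : ℕ) (hl : l = 3*(a+1) + r) (hr : r < 3) :
    ¬ HasPCPath n l (fun i j => col2 n a r i.val j.val) := by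
  intro h
  obtain ⟨q, hqinj, hprop⟩ := pc_seq h
  set t : ℕ → ℕ := fun i => ((Finset.range i).filter fun j => q j < a).card with htdef
  set s1 : ℕ → ℕ := fun i => if 1 ≤ r ∧ ∃ j ∈ Finset.range i, q j = a then 1 else 0
    with hs1def
  set s2 : ℕ → ℕ := fun i => if r = 2 ∧ ∃ j ∈ Finset.range i, q j = a + 1 then 1 else 0
    with hs2def
  have t_mono : ∀ i i', i ≤ i' → t i ≤ t i' := fun i i' h =>
    Finset.card_le_card (Finset.filter_subset_filter _ (Finset.range_subset_range.2 h))
  have t_gain : ∀ j i, q j < a → j < i → t j + 1 ≤ t i := by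
    intro j i hqj hji
    have h1 : t (j+1) = t j + 1 := by
      simp only [htdef]
      rw [Finset.range_add_one, Finset.filter_insert, if_pos hqj,
        Finset.card_insert_of_notMem (by simp)]
    have h2 := t_mono (j+1) i hji
    omega
  have t_le : t l ≤ a := by
    have h1 : t l = ((Finset.range l).filter fun j => q j < a).card := by simp only [htdef]
    have h2 : ((Finset.range l).filter fun j => q j < a).card ≤ (Finset.range a).card := by
      apply Finset.card_le_card_of_injOn (fun j => q j)
      · intro j hj; simp only [Finset.mem_coe, Finset.mem_filter, Finset.mem_range] at hj ⊢; exact hj.2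
      · intro j hj j' hj' he
        simp only [Finset.coe_filter, Set.mem_setOf_eq, Finset.mem_range] at hj hj'
        exact hqinj j j' hj.1 hj'.1 he
    rw [h1]
    simpa using h2
  have s1_le : ∀ i, s1 i ≤ 1 := by
    intro i; simp only [hs1def]; split_ifs <;> omega
  have s2_le : ∀ i, s2 i ≤ 1 := by
    intro i; simp only [hs2def]; split_ifs <;> omega
  have s1_r0 : r = 0 → ∀ i, s1 i = 0 := by
    intro h0 i; simp only [hs1def]; rw [if_neg]; rintro ⟨h1, -⟩; omega
  have s2_nr2 : r ≠ 2 → ∀ i, s2 i = 0 := by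
    intro h0 i; simp only [hs2def]; rw [if_neg]; rintro ⟨h1, -⟩; omega
  have s1_mono : ∀ i i', i ≤ i' → s1 i ≤ s1 i' := by
    intro i i' h; simp only [hs1def]; split_ifs with h1 h2
    · omega
    · exfalso
      obtain ⟨ha, j, hj, hqa⟩ := h1
      exact h2 ⟨ha, j, Finset.mem_range.2 (by simp only [Finset.mem_range] at hj; omega), hqa⟩
    all_goals omega
  have s2_mono : ∀ i i', i ≤ i' → s2 i ≤ s2 i' := by
    intro i i' h; simp only [hs2def]; split_ifs with h1 h2
    · omega
    · exfalso
      obtain ⟨ha, j, hj, hqa⟩ := h1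
      exact h2 ⟨ha, j, Finset.mem_range.2 (by simp only [Finset.mem_range] at hj; omega), hqa⟩
    all_goals omega
  have s1_one : ∀ i j, 1 ≤ r → j < i → q j = a → s1 i = 1 := by
    intro i j h1 h2 h3; simp only [hs1def]
    rw [if_pos ⟨h1, j, Finset.mem_range.2 h2, h3⟩]
  have s2_one : ∀ i j, r = 2 → j < i → q j = a + 1 → s2 i = 1 := by
    intro i j h1 h2 h3; simp only [hs2def]
    rw [if_pos ⟨h1, j, Finset.mem_range.2 h2, h3⟩]
  have s1_zero : ∀ m j0, j0 < l → q j0 = a → m ≤ j0 → s1 m = 0 := by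
    intro m j0 hj0 hq0 hm; simp only [hs1def]; rw [if_neg]
    rintro ⟨-, j, hj, hqa⟩
    simp only [Finset.mem_range] at hj
    have := hqinj j j0 (by omega) hj0 (hqa.trans hq0.symm)
    omega
  have s2_zero : ∀ m j0, j0 < l → q j0 = a + 1 → m ≤ j0 → s2 m = 0 := by
    intro m j0 hj0 hq0 hm; simp only [hs2def]; rw [if_neg]
    rintro ⟨-, j, hj, hqa⟩
    simp only [Finset.mem_range] at hj
    have := hqinj j j0 (by omega) hj0 (hqa.trans hq0.symm)
    omega
  have uniq : ∀ j j', j < l → j' < l → j ≠ j' → q j' = q j → False := by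
    intro j j' hj hj' hne he
    exact hne (hqinj j j' hj hj' he.symm)
  have key : ∀ i, i ≤ l → i ≤ 3 * t i + 2 + s1 i + s2 i := by
    intro i
    induction i using Nat.strong_induction_on with
    | _ i ih =>
    intro hil
    have stepd : ∀ d, 0 < d → d ≤ i → q (i-d) < a →
        d + s1 (i-d) + s2 (i-d) ≤ 3 + s1 i + s2 i → i ≤ 3 * t i + 2 + s1 i + s2 i := by
      intro d hd0 hdi hqd hs
      have hP := ih (i-d) (by omega) (by omega)
      have hg := t_gain (i-d) i hqd (by omega)
      omega
    by_cases hi2 : i ≤ 2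
    · omega
    push_neg at hi2
    by_cases hA : q (i-3) < a ∨ q (i-2) < a ∨ q (i-1) < a
    · rcases hA with h | h | h
      · have m1 := s1_mono (i-3) i (by omega)
        have m2 := s2_mono (i-3) i (by omega)
        exact stepd 3 (by omega) (by omega) h (by omega)
      · have m1 := s1_mono (i-2) i (by omega)
        have m2 := s2_mono (i-2) i (by omega)
        exact stepd 2 (by omega) (by omega) h (by omega)
      · have m1 := s1_mono (i-1) i (by omega)
        have m2 := s2_mono (i-1) i (by omega)
        exact stepd 1 (by omega) (by omega) h (by omega)
    push_neg at hA
    obtain ⟨hX, hY, hZ⟩ := hA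
    have e12 := hprop (i-3) (by omega)
    rw [show i-3+1 = i-2 by omega, show i-3+2 = i-1 by omega] at e12
    by_cases hr0 : r = 0
    · exact absurd ((col2_r0 (n := n) hr0 hX hY).trans (col2_r0 hr0 hY hZ).symm) e12
    have hr1 : 1 ≤ r := by omega
    by_cases hya : q (i-2) = a
    · exact absurd ((col2_v1 (n := n) hr1 hX hY (Or.inr hya)).trans
        (col2_v1 hr1 hY hZ (Or.inl hya)).symm) e12
    by_cases hxa : q (i-3) = a
    · have hs1i : s1 i = 1 := s1_one i (i-3) hr1 (by omega) hxa
      by_cases h4 : i ≤ 3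
      · omega
      push_neg at h4
      rcases Nat.lt_or_ge (q (i-4)) a with hWlt | hWge
      · have hs14 : s1 (i-4) = 0 := s1_zero (i-4) (i-3) (by omega) hxa (by omega)
        have m2 := s2_mono (i-4) i (by omega)
        exact stepd 4 (by omega) (by omega) hWlt (by omega)
      · exfalso
        have e01 := hprop (i-4) (by omega)
        rw [show i-4+1 = i-3 by omega, show i-4+2 = i-2 by omega] at e01
        exact e01 ((col2_v1 (n := n) hr1 hWge hX (Or.inr hxa)).trans
          (col2_v1 hr1 hX hY (Or.inl hxa)).symm)
    by_cases hza : q (i-1) = a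
    · have hs1i : s1 i = 1 := s1_one i (i-1) hr1 (by omega) hza
      by_cases hrr2 : r = 2
      · -- r = 2 subcases
        by_cases hy2 : q (i-2) = a + 1
        · -- (x, v2, v1)
          have hs2i : s2 i = 1 := s2_one i (i-2) hrr2 (by omega) hy2
          by_cases h4 : i ≤ 4
          · omega
          push_neg at h4
          have hx2 : q (i-3) ≠ a + 1 := fun hc =>
            uniq (i-2) (i-3) (by omega) (by omega) (by omega) (hc.trans hy2.symm)
          rcases Nat.lt_or_ge (q (i-4)) a with hWlt | hWge
          · have hs14 : s1 (i-4) = 0 := s1_zero (i-4) (i-1) (by omega) hza (by omega)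
            have hs24 : s2 (i-4) = 0 := s2_zero (i-4) (i-2) (by omega) hy2 (by omega)
            exact stepd 4 (by omega) (by omega) hWlt (by omega)
          · have hW1 : q (i-4) ≠ a := fun hc =>
              uniq (i-1) (i-4) (by omega) (by omega) (by omega) (hc.trans hza.symm)
            have hW2 : q (i-4) ≠ a+1 := fun hc =>
              uniq (i-2) (i-4) (by omega) (by omega) (by omega) (hc.trans hy2.symm)
            rcases Nat.lt_or_ge (q (i-5)) a with hVlt | hVge
            · have hs15 : s1 (i-5) = 0 := s1_zero (i-5) (i-1) (by omega) hza (by omega)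
              have hs25 : s2 (i-5) = 0 := s2_zero (i-5) (i-2) (by omega) hy2 (by omega)
              exact stepd 5 (by omega) (by omega) hVlt (by omega)
            · exfalso
              have hV1 : q (i-5) ≠ a := fun hc =>
                uniq (i-1) (i-5) (by omega) (by omega) (by omega) (hc.trans hza.symm)
              have hV2 : q (i-5) ≠ a+1 := fun hc =>
                uniq (i-2) (i-5) (by omega) (by omega) (by omega) (hc.trans hy2.symm)
              have e01 := hprop (i-5) (by omega)
              rw [show i-5+1 = i-4 by omega, show i-5+2 = i-3 by omega] at e01
              exact e01 ((col2_plain (n := n) hVge hWge hV1 hW1 (Or.inr hV2) (Or.inr hW2)).trans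
                (col2_plain hWge hX hW1 hxa (Or.inr hW2) (Or.inr hx2)).symm)
        · by_cases hx2 : q (i-3) = a + 1
          · -- (v2, y, v1)
            have hs2i : s2 i = 1 := s2_one i (i-3) hrr2 (by omega) hx2
            by_cases h4 : i ≤ 4
            · omega
            push_neg at h4
            rcases Nat.lt_or_ge (q (i-4)) a with hWlt | hWge
            · have hs14 : s1 (i-4) = 0 := s1_zero (i-4) (i-1) (by omega) hza (by omega)
              have hs24 : s2 (i-4) = 0 := s2_zero (i-4) (i-3) (by omega) hx2 (by omega)
              exact stepd 4 (by omega) (by omega) hWlt (by omega)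
            · exfalso
              have hW1 : q (i-4) ≠ a := fun hc =>
                uniq (i-1) (i-4) (by omega) (by omega) (by omega) (hc.trans hza.symm)
              have e01 := hprop (i-4) (by omega)
              rw [show i-4+1 = i-3 by omega, show i-4+2 = i-2 by omega] at e01
              exact e01 ((col2_v2 (n := n) hrr2 hWge hX hW1 hxa (Or.inr hx2)).trans
                (col2_v2 hrr2 hX hY hxa hya (Or.inl hx2)).symm)
          · -- (x, y, v1), x,y plain
            by_cases h4 : i ≤ 3
            · omega
            push_neg at h4
            by_cases hW2 : q (i-4) = a + 1
            · have hs2i : s2 i = 1 := s2_one i (i-4) hrr2 (by omega) hW2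
              by_cases h5 : i ≤ 4
              · omega
              push_neg at h5
              rcases Nat.lt_or_ge (q (i-5)) a with hVlt | hVge
              · have hs15 : s1 (i-5) = 0 := s1_zero (i-5) (i-1) (by omega) hza (by omega)
                have hs25 : s2 (i-5) = 0 := s2_zero (i-5) (i-4) (by omega) hW2 (by omega)
                exact stepd 5 (by omega) (by omega) hVlt (by omega)
              · exfalso
                have hV1 : q (i-5) ≠ a := fun hc =>
                  uniq (i-1) (i-5) (by omega) (by omega) (by omega) (hc.trans hza.symm)
                have hV2 : q (i-5) ≠ a+1 := fun hc =>
                  uniq (i-4) (i-5) (by omega) (by omega) (by omega) (hc.trans hW2.symm)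
                have e01 := hprop (i-5) (by omega)
                rw [show i-5+1 = i-4 by omega, show i-5+2 = i-3 by omega] at e01
                exact e01 ((col2_v2 (n := n) hrr2 hVge (by omega) hV1 (by omega)
                    (Or.inr hW2)).trans
                  (col2_v2 hrr2 (by omega) hX (by omega) hxa (Or.inl hW2)).symm)
            · rcases Nat.lt_or_ge (q (i-4)) a with hWlt | hWge
              · have hs14 : s1 (i-4) = 0 := s1_zero (i-4) (i-1) (by omega) hza (by omega)
                have m2 := s2_mono (i-4) i (by omega)
                exact stepd 4 (by omega) (by omega) hWlt (by omega)
              · exfalso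
                have hW1 : q (i-4) ≠ a := fun hc =>
                  uniq (i-1) (i-4) (by omega) (by omega) (by omega) (hc.trans hza.symm)
                have e01 := hprop (i-4) (by omega)
                rw [show i-4+1 = i-3 by omega, show i-4+2 = i-2 by omega] at e01
                exact e01 ((col2_plain (n := n) hWge hX hW1 hxa (Or.inr hW2) (Or.inr hx2)).trans
                  (col2_plain hX hY hxa hya (Or.inr hx2) (Or.inr hy2)).symm)
      · -- r = 1, (x, y, v1), x,y plain
        by_cases h4 : i ≤ 3
        · omega
        push_neg at h4
        rcases Nat.lt_or_ge (q (i-4)) a with hWlt | hWge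
        · have hs14 : s1 (i-4) = 0 := s1_zero (i-4) (i-1) (by omega) hza (by omega)
          have m2 := s2_mono (i-4) i (by omega)
          exact stepd 4 (by omega) (by omega) hWlt (by omega)
        · exfalso
          have hW1 : q (i-4) ≠ a := fun hc =>
            uniq (i-1) (i-4) (by omega) (by omega) (by omega) (hc.trans hza.symm)
          have e01 := hprop (i-4) (by omega)
          rw [show i-4+1 = i-3 by omega, show i-4+2 = i-2 by omega] at e01
          exact e01 ((col2_plain (n := n) hWge hX hW1 hxa (Or.inl hrr2) (Or.inl hrr2)).trans
            (col2_plain hX hY hxa hya (Or.inl hrr2) (Or.inl hrr2)).symm)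
    · -- x, y, z all ≠ a
      by_cases hrr2 : r = 2
      · by_cases hy2 : q (i-2) = a + 1
        · exact absurd ((col2_v2 (n := n) hrr2 hX hY hxa hya (Or.inr hy2)).trans
            (col2_v2 hrr2 hY hZ hya hza (Or.inl hy2)).symm) e12
        by_cases hx2 : q (i-3) = a + 1
        · -- (v2, y, z)
          have hs2i : s2 i = 1 := s2_one i (i-3) hrr2 (by omega) hx2
          by_cases h4 : i ≤ 3
          · omega
          push_neg at h4
          by_cases hWa : q (i-4) = a
          · have hs1i : s1 i = 1 := s1_one i (i-4) hr1 (by omega) hWa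
            by_cases h5 : i ≤ 4
            · omega
            push_neg at h5
            rcases Nat.lt_or_ge (q (i-5)) a with hVlt | hVge
            · have hs15 : s1 (i-5) = 0 := s1_zero (i-5) (i-4) (by omega) hWa (by omega)
              have hs25 : s2 (i-5) = 0 := s2_zero (i-5) (i-3) (by omega) hx2 (by omega)
              exact stepd 5 (by omega) (by omega) hVlt (by omega)
            · exfalso
              have e01 := hprop (i-5) (by omega)
              rw [show i-5+1 = i-4 by omega, show i-5+2 = i-3 by omega] at e01
              exact e01 ((col2_v1 (n := n) hr1 hVge (by omega) (Or.inr hWa)).trans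
                (col2_v1 hr1 (by omega) hX (Or.inl hWa)).symm)
          · rcases Nat.lt_or_ge (q (i-4)) a with hWlt | hWge
            · have hs24 : s2 (i-4) = 0 := s2_zero (i-4) (i-3) (by omega) hx2 (by omega)
              have m1 := s1_mono (i-4) i (by omega)
              exact stepd 4 (by omega) (by omega) hWlt (by omega)
            · exfalso
              have hW2 : q (i-4) ≠ a + 1 := fun hc =>
                uniq (i-3) (i-4) (by omega) (by omega) (by omega) (hc.trans hx2.symm)
              have e01 := hprop (i-4) (by omega)
              rw [show i-4+1 = i-3 by omega, show i-4+2 = i-2 by omega] at e01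
              exact e01 ((col2_v2 (n := n) hrr2 hWge hX hWa hxa (Or.inr hx2)).trans
                (col2_v2 hrr2 hX hY hxa hya (Or.inl hx2)).symm)
        by_cases hz2 : q (i-1) = a + 1
        · -- (x, y, v2)
          have hs2i : s2 i = 1 := s2_one i (i-1) hrr2 (by omega) hz2
          by_cases h4 : i ≤ 3
          · omega
          push_neg at h4
          by_cases hWa : q (i-4) = a
          · have hs1i : s1 i = 1 := s1_one i (i-4) hr1 (by omega) hWa
            by_cases h5 : i ≤ 4
            · omega
            push_neg at h5
            rcases Nat.lt_or_ge (q (i-5)) a with hVlt | hVge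
            · have hs15 : s1 (i-5) = 0 := s1_zero (i-5) (i-4) (by omega) hWa (by omega)
              have hs25 : s2 (i-5) = 0 := s2_zero (i-5) (i-1) (by omega) hz2 (by omega)
              exact stepd 5 (by omega) (by omega) hVlt (by omega)
            · exfalso
              have e01 := hprop (i-5) (by omega)
              rw [show i-5+1 = i-4 by omega, show i-5+2 = i-3 by omega] at e01
              exact e01 ((col2_v1 (n := n) hr1 hVge (by omega) (Or.inr hWa)).trans
                (col2_v1 hr1 (by omega) hX (Or.inl hWa)).symm)
          · rcases Nat.lt_or_ge (q (i-4)) a with hWlt | hWge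
            · have hs24 : s2 (i-4) = 0 := s2_zero (i-4) (i-1) (by omega) hz2 (by omega)
              have m1 := s1_mono (i-4) i (by omega)
              exact stepd 4 (by omega) (by omega) hWlt (by omega)
            · exfalso
              have hW2 : q (i-4) ≠ a + 1 := fun hc =>
                uniq (i-1) (i-4) (by omega) (by omega) (by omega) (hc.trans hz2.symm)
              have e01 := hprop (i-4) (by omega)
              rw [show i-4+1 = i-3 by omega, show i-4+2 = i-2 by omega] at e01
              exact e01 ((col2_plain (n := n) hWge hX hWa hxa (Or.inr hW2) (Or.inr hx2)).trans
                (col2_plain hX hY hxa hya (Or.inr hx2) (Or.inr hy2)).symm)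
        · exact absurd ((col2_plain (n := n) hX hY hxa hya (Or.inr hx2) (Or.inr hy2)).trans
            (col2_plain hY hZ hya hza (Or.inr hy2) (Or.inr hz2)).symm) e12
      · exact absurd ((col2_plain (n := n) hX hY hxa hya (Or.inl hrr2) (Or.inl hrr2)).trans
          (col2_plain hY hZ hya hza (Or.inl hrr2) (Or.inl hrr2)).symm) e12
  have hfin := key l (le_refl l)
  rcases (by omega : r = 0 ∨ r = 1 ∨ r = 2) with h | h | h
  · have h1 := s1_r0 h l
    have h2 := s2_nr2 (by omega) l
    omega
  · have h1 := s1_le l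
    have h2 := s2_nr2 (by omega) l
    omega
  · have h1 := s1_le l
    have h2 := s2_le l
    omega

lemma constr1_no_path (l n : ℕ) (hl : 3 ≤ l) :
    ¬ HasPCPath n l (fun i j => col1 n (l-3) i.val j.val) := by
  intro h
  obtain ⟨q, hqinj, hprop⟩ := pc_seq h
  by_cases hex : ∃ j : Fin (l-2), l - 3 ≤ q (j.val + 1)
  · obtain ⟨j, hj⟩ := hex
    have hj2 : j.val + 2 < l := by omega
    apply hprop j.val hj2
    have e1 : col1 n (l-3) (q j.val) (q (j.val+1)) = 0 := by
      unfold col1; split_ifs with h; · exfalso; omega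
      · rfl
    have e2 : col1 n (l-3) (q (j.val+1)) (q (j.val+2)) = 0 := by
      unfold col1; split_ifs with h; · exfalso; omega
      · rfl
    rw [e1, e2]
  · push_neg at hex
    have hcard := Fintype.card_le_of_injective
      (fun j : Fin (l-2) => (⟨q (j.val + 1), hex j⟩ : Fin (l-3))) ?inj
    · simp only [Fintype.card_fin] at hcard
      omega
    case inj =>
      intro j j' h
      have hv : q (j.val + 1) = q (j'.val + 1) := by simpa using congrArg Fin.val h
      have := hqinj _ _ (by omega) (by omega) hv
      exact Fin.ext (by omega)

lemma constr1_count (l n : ℕ) (hl : 3 ≤ l) (hn : l ≤ n) :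
    Nat.choose (l-3) 2 + 1 ≤ colorsUsed n (fun i j => col1 n (l-3) i.val j.val) := by
  set m := l - 3 with hm
  set P := ((Finset.range m ×ˢ Finset.range m).filter fun p : ℕ × ℕ => p.1 < p.2) with hP
  set S := (P.image fun p : ℕ × ℕ => n * p.1 + p.2 + 3) ∪ {0} with hS
  have hach : ∀ v ∈ S, ∃ i j : Fin n, i ≠ j ∧ col1 n m i.val j.val = v := by
    intro v hv
    rw [hS, Finset.mem_union] at hv
    rcases hv with hv | hv
    · obtain ⟨p, hp, he⟩ := Finset.mem_image.1 hv
      rw [hP] at hp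
      simp only [Finset.mem_filter, Finset.mem_product, Finset.mem_range] at hp
      obtain ⟨⟨h1, h2⟩, h3⟩ := hp
      refine ⟨⟨p.1, by omega⟩, ⟨p.2, by omega⟩, ?_, ?_⟩
      · intro hc
        have := congrArg Fin.val hc
        simp only [] at this
        omega
      · show col1 n m p.1 p.2 = v
        rw [← he]
        unfold col1
        rw [min_eq_left (by omega), max_eq_right (by omega), if_pos (by omega)]
    · simp only [Finset.mem_singleton] at hv
      refine ⟨⟨l-3, by omega⟩, ⟨l-2, by omega⟩, ?_, ?_⟩
      · intro hc
        have := congrArg Fin.val hc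
        simp only [] at this
        omega
      · show col1 n m (l-3) (l-2) = v
        rw [hv]
        unfold col1
        rw [if_neg (by omega)]
  have hcard := colors_ge n _ S hach
  have hdisj : Disjoint (P.image fun p : ℕ × ℕ => n * p.1 + p.2 + 3) ({0} : Finset ℕ) := by
    rw [Finset.disjoint_singleton_right]
    intro hmem
    obtain ⟨p, hp, he⟩ := Finset.mem_image.1 hmem
    omega
  have hcS : S.card = P.card + 1 := by
    rw [hS, Finset.card_union_of_disjoint hdisj, Finset.card_singleton,
      Finset.card_image_of_injOn]
    intro p hp p' hp' he
    rw [hP] at hp hp'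
    simp only [Finset.coe_filter, Set.mem_setOf_eq, Finset.mem_product, Finset.mem_range] at hp hp'
    have := enc_inj (show p.2 < n by omega) (show p'.2 < n by omega) he
    exact Prod.ext this.1 this.2
  have hP2 : P.card + Nat.choose (m+1) 2 = m * m := card_pairs m m (le_refl m)
  have pascal : Nat.choose (m+1) 2 = Nat.choose m 2 + m := by
    rw [Nat.choose_succ_succ m 1, Nat.choose_one_right, Nat.add_comm]
  have tri := two_choose_two m
  have hfin : Nat.choose m 2 + 1 ≤ S.card := by
    rw [hcS]
    rw [pascal] at hP2
    generalize m * m = M at hP2 tri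
    omega
  omega

lemma constr2_count (l n a r : ℕ) (hl : l = 3*(a+1)+r) (hr : r < 3) (hn : l ≤ n) :
    a * n - Nat.choose (a+1) 2 + 1 + r
      ≤ colorsUsed n (fun i j => col2 n a r i.val j.val) := by
  set P := ((Finset.range a ×ˢ Finset.range n).filter fun p : ℕ × ℕ => p.1 < p.2) with hP
  set S := (P.image fun p : ℕ × ℕ => n * p.1 + p.2 + 3) ∪ Finset.range (r+1) with hS
  have hach : ∀ v ∈ S, ∃ i j : Fin n, i ≠ j ∧ col2 n a r i.val j.val = v := by
    intro v hv
    rw [hS, Finset.mem_union] at hv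
    rcases hv with hv | hv
    · obtain ⟨p, hp, he⟩ := Finset.mem_image.1 hv
      rw [hP] at hp
      simp only [Finset.mem_filter, Finset.mem_product, Finset.mem_range] at hp
      obtain ⟨⟨h1, h2⟩, h3⟩ := hp
      refine ⟨⟨p.1, by omega⟩, ⟨p.2, by omega⟩, ?_, ?_⟩
      · intro hc
        have := congrArg Fin.val hc
        simp only [] at this
        omega
      · show col2 n a r p.1 p.2 = v
        rw [← he]
        unfold col2
        rw [min_eq_left (by omega), max_eq_right (by omega), if_pos (by omega)]
    · simp only [Finset.mem_range] at hv
      rcases (by omega : v = 0 ∨ (v = 1 ∧ 1 ≤ r) ∨ (v = 2 ∧ r = 2)) with h0 | ⟨h0, hr1⟩ | ⟨h0, hr2⟩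
      · refine ⟨⟨a+r, by omega⟩, ⟨a+r+1, by omega⟩, ?_, ?_⟩
        · intro hc
          have := congrArg Fin.val hc
          simp only [] at this
          omega
        · show col2 n a r (a+r) (a+r+1) = v
          rw [h0]; unfold col2; split_ifs <;> omega
      · refine ⟨⟨a, by omega⟩, ⟨a+1, by omega⟩, ?_, ?_⟩
        · intro hc
          have := congrArg Fin.val hc
          simp only [] at this
          omega
        · show col2 n a r a (a+1) = v
          rw [h0]; unfold col2; split_ifs <;> omega
      · refine ⟨⟨a+1, by omega⟩, ⟨a+2, by omega⟩, ?_, ?_⟩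
        · intro hc
          have := congrArg Fin.val hc
          simp only [] at this
          omega
        · show col2 n a r (a+1) (a+2) = v
          rw [h0]; unfold col2; split_ifs <;> omega
  have hcard := colors_ge n _ S hach
  have hdisj : Disjoint (P.image fun p : ℕ × ℕ => n * p.1 + p.2 + 3) (Finset.range (r+1)) := by
    rw [Finset.disjoint_left]
    intro v hv hv2
    obtain ⟨p, hp, he⟩ := Finset.mem_image.1 hv
    simp only [Finset.mem_range] at hv2
    omega
  have hcS : S.card = P.card + (r+1) := by
    rw [hS, Finset.card_union_of_disjoint hdisj, Finset.card_range,
      Finset.card_image_of_injOn]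
    intro p hp p' hp' he
    rw [hP] at hp hp'
    simp only [Finset.coe_filter, Set.mem_setOf_eq, Finset.mem_product, Finset.mem_range] at hp hp'
    have := enc_inj (show p.2 < n by omega) (show p'.2 < n by omega) he
    exact Prod.ext this.1 this.2
  have hP2 : P.card + Nat.choose (a+1) 2 = a * n := card_pairs a n (by omega)
  have hfin : a * n - Nat.choose (a+1) 2 + 1 + r ≤ S.card := by
    rw [hcS]
    generalize a * n = M at hP2 ⊢
    omega
  omega


lemma col1_sym (n m x y : ℕ) : col1 n m x y = col1 n m y x := by
  unfold col1; rw [min_comm, max_comm]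

lemma col2_sym (n a r x y : ℕ) : col2 n a r x y = col2 n a r y x := by
  unfold col2; rw [min_comm, max_comm]

/-- Lower bound for `pr(K_n, P_l)`: there is an edge-coloring of `K_n` with at least
`max { C(l-3,2)+1, (⌊l/3⌋-1)n - C(⌊l/3⌋,2) + 1 + r_l }` colors and no properly
colored `P_l`, where `l ≡ r_l (mod 3)`. -/
theorem pr_path_lower (l n : ℕ) (hl : 3 ≤ l) (hn : l ≤ n) :
    ∃ c : Fin n → Fin n → ℕ, (∀ i j, c i j = c j i) ∧ ¬ HasPCPath n l c ∧
      max (Nat.choose (l - 3) 2 + 1)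
        ((l / 3 - 1) * n - Nat.choose (l / 3) 2 + 1 + l % 3) ≤ colorsUsed n c := by
  rcases le_total ((l / 3 - 1) * n - Nat.choose (l / 3) 2 + 1 + l % 3)
      (Nat.choose (l - 3) 2 + 1) with hc | hc
  · refine ⟨fun i j => col1 n (l-3) i.val j.val, fun i j => col1_sym n (l-3) i.val j.val,
      constr1_no_path l n hl, ?_⟩
    rw [max_eq_left hc]
    exact constr1_count l n hl hn
  · obtain ⟨a, r, ha, hrr, hlar, hr3⟩ :
        ∃ a r, l / 3 - 1 = a ∧ l % 3 = r ∧ l = 3*(a+1) + r ∧ r < 3 :=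
      ⟨l / 3 - 1, l % 3, rfl, rfl, by omega, by omega⟩
    refine ⟨fun i j => col2 n a r i.val j.val, fun i j => col2_sym n a r i.val j.val,
      constr2_no_path l n a r hlar hr3, ?_⟩
    rw [max_eq_right hc, ha, hrr]
    have hk : l / 3 = a + 1 := by omega
    rw [hk]
    exact constr2_count l n a r hlar hr3 hn
end

section
/- Let k ≥ 4 with k - 1 ≡ r (mod 3), 0 ≤ r ≤ 2, and n ≥ k. Then pr(K_n, C_k) ≥ max{ C(k-1,2) + n - k + 1, ⌊(k-1)/3⌋·n - C(⌊(k-1)/3⌋+1, 2) + 1 + r }, i.e., there is an edge-coloring of K_n with that many colors and no properly colored cycle of length k. -/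
/-- The edge-colored `K_n` contains a properly colored cycle on `k` vertices. -/
def HasPCCycle (n k : ℕ) (c : Fin n → Fin n → ℕ) : Prop :=
  ∃ p : Fin k → Fin n, Function.Injective p ∧
    ∀ i : Fin k,
      c (p i) (p ⟨(i.1 + 1) % k, Nat.mod_lt _ (Nat.lt_of_le_of_lt (Nat.zero_le _) i.isLt)⟩) ≠
        c (p ⟨(i.1 + 1) % k, Nat.mod_lt _ (Nat.lt_of_le_of_lt (Nat.zero_le _) i.isLt)⟩)
          (p ⟨(i.1 + 2) % k, Nat.mod_lt _ (Nat.lt_of_le_of_lt (Nat.zero_le _) i.isLt)⟩)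

lemma pairInj {n i j i' j' : ℕ} (hj : j < n) (hj' : j' < n)
    (h : i * n + j = i' * n + j') : i = i' ∧ j = j' := by
  have hn : 0 < n := lt_of_le_of_lt (Nat.zero_le _) hj
  have e1 : j = j' := by
    have := congrArg (· % n) h
    simpa [Nat.add_comm, Nat.add_mul_mod_self_right, Nat.mod_eq_of_lt hj,
      Nat.mod_eq_of_lt hj'] using this
  refine ⟨?_, e1⟩
  subst e1
  have : i * n = i' * n := by omega
  exact Nat.eq_of_mul_eq_mul_right hn this

lemma cardValLt (n m : ℕ) (h : m ≤ n) :
    (Finset.univ.filter fun v : Fin n => v.1 < m).card = m := by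
  rw [show (Finset.univ.filter fun v : Fin n => v.1 < m) = (Finset.range m).attachFin
    (fun a ha => lt_of_lt_of_le (Finset.mem_range.mp ha) h) from ?_, Finset.card_attachFin,
    Finset.card_range]
  ext v; simp [Finset.mem_attachFin]

lemma colors_lb {n : ℕ} (c : Fin n → Fin n → ℕ) (T : Finset ℕ)
    (hT : ∀ a ∈ T, ∃ i j : Fin n, i ≠ j ∧ c i j = a) : T.card ≤ colorsUsed n c := by
  apply Finset.card_le_card
  intro a ha
  obtain ⟨i, j, hij, hcij⟩ := hT a ha
  exact Finset.mem_image.mpr ⟨(i, j), Finset.mem_filter.mpr ⟨Finset.mem_univ _, hij⟩, hcij⟩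

lemma con1 (k n : ℕ) (hk : 4 ≤ k) (hn : k ≤ n) :
    ∃ c : Fin n → Fin n → ℕ, (∀ i j, c i j = c j i) ∧ ¬ HasPCCycle n k c ∧
      Nat.choose (k - 1) 2 + n - k + 1 ≤ colorsUsed n c := by
  haveI : NeZero k := ⟨by omega⟩
  set c : Fin n → Fin n → ℕ := fun i j =>
    if k - 1 ≤ max i.1 j.1 then max i.1 j.1 else n + (min i.1 j.1) * n + max i.1 j.1 with hc
  refine ⟨c, ?_, ?_, ?_⟩
  · intro i j; simp only [hc, max_comm i.1 j.1, min_comm i.1 j.1]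
  · rintro ⟨p, hinj, hp⟩
    have hp' : ∀ i : Fin k, c (p i) (p (i+1)) ≠ c (p (i+1)) (p (i+1+1)) := by
      intro i
      have h1 : (⟨(i.1 + 1) % k, Nat.mod_lt _ (Nat.lt_of_le_of_lt (Nat.zero_le _) i.isLt)⟩ : Fin k)
          = i + 1 := by
        ext; simp only [Fin.add_def, Fin.val_one', Nat.mod_eq_of_lt (show 1 < k by omega)]
      have h2 : (⟨(i.1 + 2) % k, Nat.mod_lt _ (Nat.lt_of_le_of_lt (Nat.zero_le _) i.isLt)⟩ : Fin k)
          = i + 1 + 1 := by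
        ext; simp only [Fin.add_def, Fin.val_one', Nat.mod_eq_of_lt (show 1 < k by omega),
          Nat.mod_add_mod]
      have := hp i
      rwa [h1, h2] at this
    haveI : Nonempty (Fin k) := ⟨⟨0, by omega⟩⟩
    obtain ⟨i0, hi0⟩ : ∃ i0 : Fin k, ∀ i, (p i).1 ≤ (p i0).1 := Finite.exists_max _
    have hbig : k - 1 ≤ (p i0).1 := by
      by_contra hlt
      push_neg at hlt
      have hsub : Finset.univ.image p ⊆ Finset.univ.filter fun v : Fin n => v.1 < k - 1 := by
        intro v hv
        simp only [Finset.mem_image] at hv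
        obtain ⟨i, _, rfl⟩ := hv
        simp only [Finset.mem_filter, Finset.mem_univ, true_and]
        exact lt_of_le_of_lt (hi0 i) hlt
      have := Finset.card_le_card hsub
      rw [Finset.card_image_of_injective _ hinj, cardValLt n (k-1) (by omega)] at this
      simp at this; omega
    have h10 : (1 : Fin k) ≠ 0 := by
      intro h
      have := congrArg Fin.val h
      simp [Fin.val_one'] at this
      omega
    have hja : (p (i0 - 1)).1 < (p i0).1 := by
      refine lt_of_le_of_ne (hi0 _) fun h => h10 ?_
      have := hinj (Fin.ext h)
      exact sub_eq_self.mp this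
    have hjb : (p (i0 + 1)).1 < (p i0).1 := by
      refine lt_of_le_of_ne (hi0 _) fun h => h10 ?_
      have := hinj (Fin.ext h)
      exact (add_eq_left).mp this
    apply hp' (i0 - 1)
    rw [sub_add_cancel]
    have m1 : max (p (i0-1)).1 (p i0).1 = (p i0).1 := max_eq_right hja.le
    have m2 : max (p i0).1 (p (i0+1)).1 = (p i0).1 := max_eq_left hjb.le
    simp only [hc, m1, m2, if_pos hbig]
  · have ceval : ∀ (a b : ℕ) (ha : a < n) (hb : b < n), c ⟨a, ha⟩ ⟨b, hb⟩ =
        if k - 1 ≤ max a b then max a b else n + min a b * n + max a b := fun _ _ _ _ => rfl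
    have hT : ∀ a ∈ (Finset.Ico (k-1) n) ∪
        (((Finset.range (k-1)).sigma fun j => Finset.range j).image fun q => n + q.2 * n + q.1),
        ∃ i j : Fin n, i ≠ j ∧ c i j = a := by
      intro a ha
      rcases Finset.mem_union.mp ha with h | h
      · rw [Finset.mem_Ico] at h
        refine ⟨⟨a, h.2⟩, ⟨0, by omega⟩, ?_, ?_⟩
        · intro hcon; have := congrArg Fin.val hcon; simp at this; omega
        · rw [ceval, Nat.max_zero, if_pos h.1]
      · obtain ⟨q, hq, rfl⟩ := Finset.mem_image.mp h
        obtain ⟨jj, ii⟩ := q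
        simp only [Finset.mem_sigma, Finset.mem_range] at hq
        obtain ⟨hjj, hii⟩ := hq
        refine ⟨⟨ii, by omega⟩, ⟨jj, by omega⟩, ?_, ?_⟩
        · intro hcon; have := congrArg Fin.val hcon; simp at this; omega
        · rw [ceval, max_eq_right hii.le, min_eq_left hii.le, if_neg (by omega)]
    refine le_trans ?_ (colors_lb c _ hT)
    rw [Finset.card_union_of_disjoint, Nat.card_Ico,
      Finset.card_image_of_injOn, Finset.card_sigma]
    · simp only [Finset.card_range]
      have h1 := Finset.sum_range_id_mul_two (k-1)
      have h2 := Nat.choose_two_right (k-1)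
      omega
    · rintro ⟨j1, i1⟩ h1 ⟨j2, i2⟩ h2 heq
      simp only [Finset.mem_coe, Finset.mem_sigma, Finset.mem_range] at h1 h2
      have heq' : n + i1 * n + j1 = n + i2 * n + j2 := heq
      obtain ⟨e1, e2⟩ := pairInj (n := n) (show j1 < n by omega) (show j2 < n by omega)
        (show i1 * n + j1 = i2 * n + j2 by omega)
      subst e1; subst e2; rfl
    · rw [Finset.disjoint_left]
      intro a ha hb
      rw [Finset.mem_Ico] at ha
      simp only [Finset.mem_image] at hb
      obtain ⟨q, _, hq⟩ := hb
      omega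
lemma con2 (k n : ℕ) (hk : 4 ≤ k) (hn : k ≤ n) :
    ∃ c : Fin n → Fin n → ℕ, (∀ i j, c i j = c j i) ∧ ¬ HasPCCycle n k c ∧
      ((k - 1) / 3) * n - Nat.choose ((k - 1) / 3 + 1) 2 + 1 + (k - 1) % 3 ≤ colorsUsed n c := by
  haveI : NeZero k := ⟨by omega⟩
  set t := (k - 1) / 3 with htdef
  set r := (k - 1) % 3 with hrdef
  have hk1 : k = 3 * t + r + 1 := by omega
  have ht1 : 1 ≤ t := by omega
  have hr3 : r < 3 := by omega
  set c : Fin n → Fin n → ℕ := fun i j =>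
    if i.1 < t ∨ j.1 < t then 3 + (min i.1 j.1) * n + max i.1 j.1
    else if 1 ≤ r ∧ (i.1 = t ∨ j.1 = t) then 1
    else if r = 2 ∧ (i.1 = t + 1 ∨ j.1 = t + 1) then 2
    else 0 with hc
  have lem0 : ∀ v w : Fin n, t ≤ v.1 → t ≤ w.1 → (1 ≤ r → v.1 ≠ t ∧ w.1 ≠ t) →
      (r = 2 → v.1 ≠ t + 1 ∧ w.1 ≠ t + 1) → c v w = 0 := by
    intro v w h1 h2 h3 h4
    simp only [hc]
    rw [if_neg (by omega), if_neg (by omega), if_neg (by omega)]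
  have lem1 : ∀ v w : Fin n, 1 ≤ r → t ≤ v.1 → t ≤ w.1 → (v.1 = t ∨ w.1 = t) → c v w = 1 := by
    intro v w hr h1 h2 h3
    simp only [hc]
    rw [if_neg (by omega), if_pos ⟨hr, h3⟩]
  have lem2 : ∀ v w : Fin n, r = 2 → t ≤ v.1 → t ≤ w.1 → v.1 ≠ t → w.1 ≠ t →
      (v.1 = t + 1 ∨ w.1 = t + 1) → c v w = 2 := by
    intro v w hr h1 h2 h3 h4 h5
    simp only [hc]
    rw [if_neg (by omega), if_neg (by omega), if_pos ⟨hr, h5⟩]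
  refine ⟨c, ?_, ?_, ?_⟩
  · intro i j
    simp only [hc, max_comm i.1 j.1, min_comm i.1 j.1, or_comm]
  · rintro ⟨p, hinj, hp⟩
    have hp' : ∀ i : Fin k, c (p i) (p (i + 1)) ≠ c (p (i + 1)) (p (i + 1 + 1)) := by
      intro i
      have h1 : (⟨(i.1 + 1) % k, Nat.mod_lt _ (Nat.lt_of_le_of_lt (Nat.zero_le _) i.isLt)⟩ : Fin k)
          = i + 1 := by
        ext; simp only [Fin.add_def, Fin.val_one', Nat.mod_eq_of_lt (show 1 < k by omega)]
      have h2 : (⟨(i.1 + 2) % k, Nat.mod_lt _ (Nat.lt_of_le_of_lt (Nat.zero_le _) i.isLt)⟩ : Fin k)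
          = i + 1 + 1 := by
        ext; simp only [Fin.add_def, Fin.val_one', Nat.mod_eq_of_lt (show 1 < k by omega),
          Nat.mod_add_mod]
      have := hp i
      rwa [h1, h2] at this
    -- window predicates
    set wA : Fin k → Prop := fun i => (p i).1 < t ∨ (p (i+1)).1 < t ∨ (p (i+1+1)).1 < t with hwA
    set wX : Fin k → Prop := fun i => (p i).1 = t ∨ (p (i+1)).1 = t ∨ (p (i+1+1)).1 = t with hwX
    set wY : Fin k → Prop :=
      fun i => (p i).1 = t+1 ∨ (p (i+1)).1 = t+1 ∨ (p (i+1+1)).1 = t+1 with hwY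
    have cover : ∀ i, ¬ wA i → ¬ wX i → ¬ wY i → False := by
      intro i h1 h2 h3
      simp only [hwA, hwX, hwY, not_or] at h1 h2 h3
      exact hp' i (by
        rw [lem0 _ _ (by omega) (by omega) (by omega) (by omega),
          lem0 _ _ (by omega) (by omega) (by omega) (by omega)])
    have cover1 : r ≤ 1 → ∀ i, ¬ wA i → ¬ wX i → False := by
      intro hr i h1 h2
      simp only [hwA, hwX, not_or] at h1 h2
      exact hp' i (by
        rw [lem0 _ _ (by omega) (by omega) (by omega) (by omega),
          lem0 _ _ (by omega) (by omega) (by omega) (by omega)])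
    have cover0 : r = 0 → ∀ i, ¬ wA i → False := by
      intro hr i h1
      simp only [hwA, not_or] at h1
      exact hp' i (by
        rw [lem0 _ _ (by omega) (by omega) (by omega) (by omega),
          lem0 _ _ (by omega) (by omega) (by omega) (by omega)])
    have midX : ∀ j : Fin k, 1 ≤ r → (p j).1 = t → t ≤ (p (j - 1)).1 → t ≤ (p (j + 1)).1 →
        False := by
      intro j hr hj h1 h2
      apply hp' (j - 1)
      rw [sub_add_cancel,
        lem1 _ _ hr h1 (by omega) (Or.inr hj), lem1 _ _ hr (by omega) h2 (Or.inl hj)]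
    have midY : ∀ j : Fin k, r = 2 → (p j).1 = t + 1 →
        t ≤ (p (j - 1)).1 → t ≤ (p (j + 1)).1 →
        (p (j - 1)).1 ≠ t → (p (j + 1)).1 ≠ t → False := by
      intro j hr hj h1 h2 h3 h4
      apply hp' (j - 1)
      rw [sub_add_cancel,
        lem2 _ _ hr h1 (by omega) h3 (by omega) (Or.inr hj),
        lem2 _ _ hr (by omega) h2 (by omega) h4 (Or.inl hj)]
    -- sets
    set A : Finset (Fin k) := Finset.univ.filter (fun i => (p i).1 < t) with hA
    have hAcard : A.card ≤ t := by
      have hsub : A.image p ⊆ Finset.univ.filter fun v : Fin n => v.1 < t := by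
        intro v hv
        obtain ⟨i, hi, rfl⟩ := Finset.mem_image.mp hv
        simp only [hA, Finset.mem_filter] at hi ⊢
        exact ⟨Finset.mem_univ _, hi.2⟩
      have := Finset.card_le_card hsub
      rwa [Finset.card_image_of_injective _ hinj, cardValLt n t (by omega)] at this
    set WA : Finset (Fin k) := Finset.univ.filter wA with hWA
    set WX : Finset (Fin k) := Finset.univ.filter (fun i => ¬ wA i ∧ wX i) with hWX
    set WY : Finset (Fin k) := Finset.univ.filter (fun i => ¬ wA i ∧ ¬ wX i ∧ wY i) with hWY
    have hWAcard : WA.card ≤ 3 * t := by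
      have hsub : WA ⊆ A ∪ A.image (fun a => a - 1) ∪ A.image (fun a => a - 1 - 1) := by
        intro i hi
        simp only [hWA, hwA, Finset.mem_filter, Finset.mem_univ, true_and] at hi
        simp only [Finset.mem_union, Finset.mem_image, hA, Finset.mem_filter, Finset.mem_univ,
          true_and]
        rcases hi with h | h | h
        · exact Or.inl (Or.inl h)
        · exact Or.inl (Or.inr ⟨i + 1, h, by rw [add_sub_cancel_right]⟩)
        · exact Or.inr ⟨i + 1 + 1, h, by rw [add_sub_cancel_right, add_sub_cancel_right]⟩
      calc WA.card ≤ _ := Finset.card_le_card hsub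
        _ ≤ (A ∪ A.image (fun a => a - 1)).card + (A.image (fun a => a - 1 - 1)).card :=
          Finset.card_union_le _ _
        _ ≤ (A.card + (A.image (fun a => a - 1)).card) + (A.image (fun a => a - 1 - 1)).card :=
          Nat.add_le_add_right (Finset.card_union_le _ _) _
        _ ≤ 3 * t := by
          have i1 := Finset.card_image_le (s := A) (f := fun a => a - 1)
          have i2 := Finset.card_image_le (s := A) (f := fun a => a - 1 - 1)
          omega
    -- no middle x/y
    have noMidX : ∀ i : Fin k, 1 ≤ r → ¬ wA i → (p (i + 1)).1 ≠ t := by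
      intro i hr hnA hmid
      simp only [hwA, not_or] at hnA
      exact midX (i + 1) hr hmid (by rw [add_sub_cancel_right]; omega) (by omega)
    have noMidY : ∀ i : Fin k, r = 2 → ¬ wA i → ¬ wX i → (p (i + 1)).1 ≠ t + 1 := by
      intro i hr hnA hnX hmid
      simp only [hwA, not_or] at hnA
      simp only [hwX, not_or] at hnX
      exact midY (i + 1) hr hmid (by rw [add_sub_cancel_right]; omega) (by omega)
        (by rw [add_sub_cancel_right]; exact hnX.1) hnX.2.2
    have hWXcard : 1 ≤ r → WX.card ≤ 1 := by
      intro hr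
      rw [Finset.card_le_one]
      intro a ha b hb
      simp only [hWX, Finset.mem_filter, Finset.mem_univ, true_and] at ha hb
      obtain ⟨hnAa, hXa⟩ := ha
      obtain ⟨hnAb, hXb⟩ := hb
      have ha' : (p a).1 = t ∨ (p (a+1+1)).1 = t := by
        rcases hXa with h | h | h
        · exact Or.inl h
        · exact absurd h (noMidX a hr hnAa)
        · exact Or.inr h
      have hb' : (p b).1 = t ∨ (p (b+1+1)).1 = t := by
        rcases hXb with h | h | h
        · exact Or.inl h
        · exact absurd h (noMidX b hr hnAb)
        · exact Or.inr h
      simp only [hwA, not_or] at hnAa hnAb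
      rcases ha' with h1 | h1 <;> rcases hb' with h2 | h2
      · exact hinj (Fin.ext (h1.trans h2.symm))
      · -- x at a and at b+2 : a = b+1+1
        have hab : a = b + 1 + 1 := hinj (Fin.ext (h1.trans h2.symm))
        exfalso
        refine midX a hr h1 ?_ (by omega)
        have : a - 1 = b + 1 := by rw [hab]; rw [add_sub_cancel_right]
        rw [this]; omega
      · have hab : a + 1 + 1 = b := hinj (Fin.ext (h1.trans h2.symm))
        exfalso
        refine midX b hr h2 ?_ (by omega)
        have : b - 1 = a + 1 := by rw [← hab, add_sub_cancel_right]
        rw [this]; omega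
      · have : a + 1 + 1 = b + 1 + 1 := hinj (Fin.ext (h1.trans h2.symm))
        exact add_right_cancel (add_right_cancel this)
    have hWYcard : r = 2 → WY.card ≤ 1 := by
      intro hr
      rw [Finset.card_le_one]
      intro a ha b hb
      simp only [hWY, Finset.mem_filter, Finset.mem_univ, true_and] at ha hb
      obtain ⟨hnAa, hnXa, hYa⟩ := ha
      obtain ⟨hnAb, hnXb, hYb⟩ := hb
      have ha' : (p a).1 = t + 1 ∨ (p (a+1+1)).1 = t + 1 := by
        rcases hYa with h | h | h
        · exact Or.inl h
        · exact absurd h (noMidY a hr hnAa hnXa)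
        · exact Or.inr h
      have hb' : (p b).1 = t + 1 ∨ (p (b+1+1)).1 = t + 1 := by
        rcases hYb with h | h | h
        · exact Or.inl h
        · exact absurd h (noMidY b hr hnAb hnXb)
        · exact Or.inr h
      simp only [hwA, not_or] at hnAa hnAb
      simp only [hwX, not_or] at hnXa hnXb
      rcases ha' with h1 | h1 <;> rcases hb' with h2 | h2
      · exact hinj (Fin.ext (h1.trans h2.symm))
      · have hab : a = b + 1 + 1 := hinj (Fin.ext (h1.trans h2.symm))
        exfalso
        have e : a - 1 = b + 1 := by rw [hab, add_sub_cancel_right]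
        refine midY a hr h1 ?_ (by omega) ?_ hnXa.2.1
        · rw [e]; omega
        · rw [e]; exact hnXb.2.1
      · have hab : a + 1 + 1 = b := hinj (Fin.ext (h1.trans h2.symm))
        exfalso
        have e : b - 1 = a + 1 := by rw [← hab, add_sub_cancel_right]
        refine midY b hr h2 ?_ (by omega) ?_ hnXb.2.1
        · rw [e]; omega
        · rw [e]; exact hnXa.2.1
      · have : a + 1 + 1 = b + 1 + 1 := hinj (Fin.ext (h1.trans h2.symm))
        exact add_right_cancel (add_right_cancel this)
    -- counting
    have hcover : (Finset.univ : Finset (Fin k)) ⊆ WA ∪ WX ∪ WY := by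
      intro i _
      simp only [hWA, hWX, hWY, Finset.mem_union, Finset.mem_filter, Finset.mem_univ, true_and]
      by_cases hA1 : wA i
      · exact Or.inl (Or.inl hA1)
      by_cases hX1 : wX i
      · exact Or.inl (Or.inr ⟨hA1, hX1⟩)
      by_cases hY1 : wY i
      · exact Or.inr ⟨hA1, hX1, hY1⟩
      · exact absurd (cover i hA1 hX1 hY1) not_false
    have hcount : k ≤ WA.card + WX.card + WY.card := by
      have h1 : (Finset.univ : Finset (Fin k)).card = k := by simp
      calc k = (Finset.univ : Finset (Fin k)).card := h1.symm
        _ ≤ (WA ∪ WX ∪ WY).card := Finset.card_le_card hcover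
        _ ≤ (WA ∪ WX).card + WY.card := Finset.card_union_le _ _
        _ ≤ WA.card + WX.card + WY.card := by gcongr; exact Finset.card_union_le _ _
    have hr012 : r = 0 ∨ r = 1 ∨ r = 2 := by omega
    rcases hr012 with hr | hr | hr
    · -- WX and WY empty
      have hWXe : WX = ∅ := by
        rw [Finset.eq_empty_iff_forall_notMem]
        intro i hi
        simp only [hWX, Finset.mem_filter] at hi
        exact cover0 hr i hi.2.1
      have hWYe : WY = ∅ := by
        rw [Finset.eq_empty_iff_forall_notMem]
        intro i hi
        simp only [hWY, Finset.mem_filter] at hi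
        exact cover0 hr i hi.2.1
      rw [hWXe, hWYe] at hcount
      simp at hcount
      omega
    · have hWYe : WY = ∅ := by
        rw [Finset.eq_empty_iff_forall_notMem]
        intro i hi
        simp only [hWY, Finset.mem_filter] at hi
        exact cover1 (by omega) i hi.2.1 hi.2.2.1
      rw [hWYe] at hcount
      simp at hcount
      have := hWXcard (by omega)
      omega
    · have h1 := hWXcard (by omega)
      have h2 := hWYcard hr
      omega
  · -- color count
    have ceval : ∀ (a b : ℕ) (ha : a < n) (hb : b < n), c ⟨a, ha⟩ ⟨b, hb⟩ =
        if a < t ∨ b < t then 3 + (min a b) * n + max a b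
        else if 1 ≤ r ∧ (a = t ∨ b = t) then 1
        else if r = 2 ∧ (a = t + 1 ∨ b = t + 1) then 2
        else 0 := fun _ _ _ _ => rfl
    have hT : ∀ a ∈ (Finset.range (1 + r)) ∪
        (((Finset.range t).sigma fun i => Finset.Ico (i+1) n).image fun q => 3 + q.1 * n + q.2),
        ∃ i j : Fin n, i ≠ j ∧ c i j = a := by
      intro a ha
      rcases Finset.mem_union.mp ha with h | h
      · rw [Finset.mem_range] at h
        have h3 : a = 0 ∨ (a = 1 ∧ 1 ≤ r) ∨ (a = 2 ∧ r = 2) := by omega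
        rcases h3 with rfl | ⟨rfl, hr⟩ | ⟨rfl, hr⟩
        · refine ⟨⟨t + r, by omega⟩, ⟨t + r + 1, by omega⟩, ?_, ?_⟩
          · intro hcon; have := congrArg Fin.val hcon; simp at this
          · rw [ceval, if_neg (by omega), if_neg (by omega), if_neg (by omega)]
        · refine ⟨⟨t, by omega⟩, ⟨t + 1, by omega⟩, ?_, ?_⟩
          · intro hcon; have := congrArg Fin.val hcon; simp at this
          · rw [ceval, if_neg (by omega), if_pos ⟨hr, Or.inl rfl⟩]
        · refine ⟨⟨t + 1, by omega⟩, ⟨t + 2, by omega⟩, ?_, ?_⟩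
          · intro hcon; have := congrArg Fin.val hcon; simp at this
          · rw [ceval, if_neg (by omega), if_neg (by omega), if_pos ⟨hr, Or.inl rfl⟩]
      · obtain ⟨q, hq, rfl⟩ := Finset.mem_image.mp h
        obtain ⟨ii, jj⟩ := q
        simp only [Finset.mem_sigma, Finset.mem_range, Finset.mem_Ico] at hq
        obtain ⟨hii, hjj1, hjj2⟩ := hq
        refine ⟨⟨ii, by omega⟩, ⟨jj, by omega⟩, ?_, ?_⟩
        · intro hcon; have := congrArg Fin.val hcon; simp at this; omega
        · rw [ceval, if_pos (Or.inl hii)]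
          rw [min_eq_left (by omega), max_eq_right (by omega)]
    refine le_trans ?_ (colors_lb c _ hT)
    rw [Finset.card_union_of_disjoint, Finset.card_range,
      Finset.card_image_of_injOn, Finset.card_sigma]
    · have hsum : ∑ i ∈ Finset.range t, (Finset.Ico (i+1) n).card
          = t * (n - t) + t.choose 2 := by
        have e1 : ∀ i ∈ Finset.range t, (Finset.Ico (i+1) n).card = n - (i+1) := by
          intro i _; rw [Nat.card_Ico]
        rw [Finset.sum_congr rfl e1, ← Finset.sum_range_reflect]
        have e2 : ∀ i ∈ Finset.range t, n - (t - 1 - i + 1) = (n - t) + i := by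
          intro i hi; simp only [Finset.mem_range] at hi; omega
        rw [Finset.sum_congr rfl e2, Finset.sum_add_distrib, Finset.sum_const,
          Finset.card_range, smul_eq_mul]
        have h1 := Finset.sum_range_id_mul_two t
        have h2 := Nat.choose_two_right t
        omega
      rw [hsum]
      have e3 : (t+1).choose 2 = t + t.choose 2 := by
        rw [Nat.choose_succ_succ, Nat.choose_one_right]
      have e4 : t * n = t * (n - t) + t * t := by
        conv_lhs => rw [show n = (n - t) + t by omega]
        ring
      have e5 : t * (t - 1) + t = t * t := by
        cases t with
        | zero => simp
        | succ s => simp only [Nat.succ_sub_one]; ring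
      have h1 := Finset.sum_range_id_mul_two t
      have h2 := Nat.choose_two_right t
      omega
    · rintro ⟨i1, j1⟩ h1 ⟨i2, j2⟩ h2 heq
      simp only [Finset.mem_coe, Finset.mem_sigma, Finset.mem_range, Finset.mem_Ico] at h1 h2
      have heq' : 3 + i1 * n + j1 = 3 + i2 * n + j2 := heq
      obtain ⟨e1, e2⟩ := pairInj (n := n) (show j1 < n by omega) (show j2 < n by omega)
        (show i1 * n + j1 = i2 * n + j2 by omega)
      subst e1; subst e2; rfl
    · rw [Finset.disjoint_left]
      intro a ha hb
      rw [Finset.mem_range] at ha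
      obtain ⟨q, _, hq⟩ := Finset.mem_image.mp hb
      omega

/-- Lower bound for `pr(K_n, C_k)`: there is an edge-coloring of `K_n` with at least
`max { C(k-1,2)+n-k+1, ⌊(k-1)/3⌋n - C(⌊(k-1)/3⌋+1,2) + 1 + r }` colors and no
properly colored `C_k`, where `k-1 ≡ r (mod 3)`. -/
theorem pr_cycle_lower (k n : ℕ) (hk : 4 ≤ k) (hn : k ≤ n) :
    ∃ c : Fin n → Fin n → ℕ, (∀ i j, c i j = c j i) ∧ ¬ HasPCCycle n k c ∧
      max (Nat.choose (k - 1) 2 + n - k + 1)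
        (((k - 1) / 3) * n - Nat.choose ((k - 1) / 3 + 1) 2 + 1 + (k - 1) % 3)
        ≤ colorsUsed n c := by
  rcases le_total (((k - 1) / 3) * n - Nat.choose ((k - 1) / 3 + 1) 2 + 1 + (k - 1) % 3)
      (Nat.choose (k - 1) 2 + n - k + 1) with h | h
  · obtain ⟨c, h1, h2, h3⟩ := con1 k n hk hn
    exact ⟨c, h1, h2, max_le h3 (le_trans h h3)⟩
  · obtain ⟨c, h1, h2, h3⟩ := con2 k n hk hn
    exact ⟨c, h1, h2, max_le (le_trans h h3) h3⟩
end

section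
/- For every n ≥ 4, the maximum number of colors in an edge-coloring of K_n with no properly colored 4-cycle equals n. -/
/-- The color `a` appears only on edges incident to `v`. -/
def OnlyAt {n : ℕ} (c : Fin n → Fin n → ℕ) (v : Fin n) (a : ℕ) : Prop :=
  ∀ i j : Fin n, i ≠ j → c i j = a → i = v ∨ j = v

lemma mkPC4 {n : ℕ} (c : Fin n → Fin n → ℕ) (a b x y : Fin n)
    (hab : a ≠ b) (hax : a ≠ x) (hay : a ≠ y) (hbx : b ≠ x) (hby : b ≠ y) (hxy : x ≠ y)
    (e1 : c a b ≠ c b x) (e2 : c b x ≠ c x y) (e3 : c x y ≠ c y a) (e4 : c y a ≠ c a b) :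
    HasPCCycle n 4 c := by
  refine ⟨![a, b, x, y], ?_, ?_⟩
  · intro i j hij
    fin_cases i <;> fin_cases j <;> simp_all
  · intro i
    fin_cases i
    · exact e1
    · exact e2
    · exact e3
    · exact e4

/-- If `v` has two exclusive colors witnessed at `s` and `t`, then for every other
vertex `y`, the edges `s y` and `t y` share a color (else a PC C4 `v s y t`). -/
lemma step_S {n : ℕ} (c : Fin n → Fin n → ℕ) (hsym : ∀ i j, c i j = c j i)
    (hno : ¬ HasPCCycle n 4 c) (v s t y : Fin n)
    (hs : s ≠ v) (ht : t ≠ v) (hst : s ≠ t) (hc : c v s ≠ c v t)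
    (Os : OnlyAt c v (c v s)) (Ot : OnlyAt c v (c v t))
    (hyv : y ≠ v) (hys : y ≠ s) (hyt : y ≠ t) : c s y = c t y := by
  by_contra hne
  apply hno
  refine mkPC4 c v s y t hs.symm hyv.symm ht.symm hys.symm hst hyt ?_ ?_ ?_ ?_
  · intro h
    rcases Os s y (fun h2 => hys h2.symm) h.symm with h3 | h3
    · exact hs h3
    · exact hyv h3
  · intro h
    exact hne (h.trans (hsym y t))
  · intro h
    rcases Ot y t hyt (h.trans (hsym t v)) with h3 | h3
    · exact hyv h3
    · exact ht h3
  · intro h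
    exact hc ((hsym v t).trans h).symm

/-- If every vertex has two exclusive colors, there is a properly colored `C4`. -/
lemma main_L {n : ℕ} (hn : 4 ≤ n) (c : Fin n → Fin n → ℕ) (hsym : ∀ i j, c i j = c j i)
    (H : ∀ v : Fin n, ∃ x1 x2, x1 ≠ v ∧ x2 ≠ v ∧
      OnlyAt c v (c v x1) ∧ OnlyAt c v (c v x2) ∧ c v x1 ≠ c v x2) :
    HasPCCycle n 4 c := by
  by_contra hno
  obtain ⟨u, x1, x2, hx1u, hx2u, O1, O2, h12⟩ :
      ∃ u x1 x2 : Fin n, x1 ≠ u ∧ x2 ≠ u ∧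
        OnlyAt c u (c u x1) ∧ OnlyAt c u (c u x2) ∧ c u x1 ≠ c u x2 := by
    obtain ⟨x1, x2, h⟩ := H ⟨0, by omega⟩
    exact ⟨_, x1, x2, h⟩
  have hx12 : x1 ≠ x2 := fun h => h12 (by rw [h])
  -- the exclusive pair of x1 must be {u, x2}, and similarly for x2
  have key1 : ∀ w : Fin n, w ≠ x1 → OnlyAt c x1 (c x1 w) → (w = u ∨ w = x2) := by
    intro w hw Ow
    by_contra hcon
    push_neg at hcon
    obtain ⟨hwu, hwx2⟩ := hcon
    have h1 : c x1 w = c x2 w :=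
      step_S c hsym hno u x1 x2 w hx1u hx2u hx12 h12 O1 O2 hwu hw hwx2
    rcases Ow x2 w (fun h => hwx2 h.symm) h1.symm with h3 | h3
    · exact hx12 h3.symm
    · exact hw h3
  have key2 : ∀ w : Fin n, w ≠ x2 → OnlyAt c x2 (c x2 w) → (w = u ∨ w = x1) := by
    intro w hw Ow
    by_contra hcon
    push_neg at hcon
    obtain ⟨hwu, hwx1⟩ := hcon
    have h1 : c x1 w = c x2 w :=
      step_S c hsym hno u x1 x2 w hx1u hx2u hx12 h12 O1 O2 hwu hwx1 hw
    rcases Ow x1 w (fun h => hwx1 h.symm) h1 with h3 | h3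
    · exact hx12 h3
    · exact hw h3
  have hD : OnlyAt c x1 (c x1 u) ∧ OnlyAt c x1 (c x1 x2) ∧ c x1 u ≠ c x1 x2 := by
    obtain ⟨s, t, hs, ht, Os, Ot, hstc⟩ := H x1
    have hst : s ≠ t := fun h => hstc (by rw [h])
    rcases key1 s hs Os with rfl | rfl <;> rcases key1 t ht Ot with rfl | rfl
    · exact absurd rfl hst
    · exact ⟨Os, Ot, hstc⟩
    · exact ⟨Ot, Os, hstc.symm⟩
    · exact absurd rfl hst
  have hE : OnlyAt c x2 (c x2 u) ∧ OnlyAt c x2 (c x2 x1) ∧ c x2 u ≠ c x2 x1 := by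
    obtain ⟨s, t, hs, ht, Os, Ot, hstc⟩ := H x2
    have hst : s ≠ t := fun h => hstc (by rw [h])
    rcases key2 s hs Os with rfl | rfl <;> rcases key2 t ht Ot with rfl | rfl
    · exact absurd rfl hst
    · exact ⟨Os, Ot, hstc⟩
    · exact ⟨Ot, Os, hstc.symm⟩
    · exact absurd rfl hst
  -- edges from u, x1 and x2 to any outside vertex all share a color
  have E2 : ∀ y : Fin n, y ≠ u → y ≠ x1 → y ≠ x2 → c u y = c x2 y := by
    intro y hyu hyx1 hyx2
    exact step_S c hsym hno x1 u x2 y (fun h => hx1u h.symm) hx12.symm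
      (fun h => hx2u h.symm) hD.2.2 hD.1 hD.2.1 hyx1 hyu hyx2
  have E3 : ∀ y : Fin n, y ≠ u → y ≠ x1 → y ≠ x2 → c u y = c x1 y := by
    intro y hyu hyx1 hyx2
    exact step_S c hsym hno x2 u x1 y (fun h => hx2u h.symm) hx12
      (fun h => hx1u h.symm) hE.2.2 hE.1 hE.2.1 hyx2 hyu hyx1
  -- edges between outside vertices take one of the two adjacent "radial" colors
  have st4 : ∀ y z : Fin n, y ≠ u → y ≠ x1 → y ≠ x2 → z ≠ u → z ≠ x1 → z ≠ x2 →
      y ≠ z → (c y z = c u y ∨ c y z = c u z) := by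
    intro y z hyu hyx1 hyx2 hzu hzx1 hzx2 hyz
    by_contra hcon
    push_neg at hcon
    obtain ⟨hc1, hc2⟩ := hcon
    apply hno
    refine mkPC4 c u x1 y z hx1u.symm hyu.symm hzu.symm hyx1.symm hzx1.symm hyz ?_ ?_ ?_ ?_
    · intro h
      rcases O1 x1 y hyx1.symm h.symm with h3 | h3
      · exact hx1u h3
      · exact hyu h3
    · intro h
      exact hc1 (((E3 y hyu hyx1 hyx2).symm ▸ h).symm)
    · intro h
      exact hc2 (h.trans (hsym z u))
    · intro h
      rcases hD.1 z u hzu (h.trans (hsym u x1)) with h3 | h3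
      · exact hzx1 h3
      · exact hx1u h3.symm
  -- pick a vertex y outside {u, x1, x2}
  obtain ⟨y, hy⟩ : ∃ y : Fin n, y ∉ ({u, x1, x2} : Finset (Fin n)) := by
    by_contra h
    push_neg at h
    have hsub : (Finset.univ : Finset (Fin n)) ⊆ {u, x1, x2} := fun z _ => h z
    have := Finset.card_le_card hsub
    simp only [Finset.card_univ, Fintype.card_fin] at this
    have h3 : ({u, x1, x2} : Finset (Fin n)).card ≤ 3 := by
      apply le_trans (Finset.card_insert_le _ _)
      have := Finset.card_insert_le x1 ({x2} : Finset (Fin n))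
      simp at this ⊢
      omega
    omega
  simp only [Finset.mem_insert, Finset.mem_singleton, not_or] at hy
  obtain ⟨hyu, hyx1, hyx2⟩ := hy
  obtain ⟨s, t, hs, ht, Os, Ot, hstc⟩ := H y
  -- but then y cannot have two exclusive colors
  have claim : ∀ w : Fin n, w ≠ y → OnlyAt c y (c y w) → c y w = c u y := by
    intro w hw Ow
    by_cases hwu : w = u
    · rw [hwu]; exact hsym y u
    by_cases hwx1 : w = x1
    · rw [hwx1, hsym y x1, ← E3 y hyu hyx1 hyx2]
    by_cases hwx2 : w = x2
    · rw [hwx2, hsym y x2, ← E2 y hyu hyx1 hyx2]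
    rcases st4 y w hyu hyx1 hyx2 hwu hwx1 hwx2 (fun h => hw h.symm) with h | h
    · exact h
    · rcases Ow u w (fun h2 => hwu h2.symm) (h.symm) with h3 | h3
      · exact absurd h3 (fun h4 => hyu h4.symm)
      · exact absurd h3 hw
  exact hstc ((claim s hs Os).trans (claim t ht Ot).symm)

lemma pc_transfer (m : ℕ) (c : Fin (m+1) → Fin (m+1) → ℕ) (v : Fin (m+1))
    (h : HasPCCycle m 4 (fun i j => c (v.succAbove i) (v.succAbove j))) :
    HasPCCycle (m+1) 4 c := by
  obtain ⟨p, hinj, hp⟩ := h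
  exact ⟨fun i => v.succAbove (p i), (Fin.succAbove_right_injective).comp hinj,
    fun i => hp i⟩

lemma colors_step (m : ℕ) (c : Fin (m+1) → Fin (m+1) → ℕ)
    (hsym : ∀ i j, c i j = c j i) (v : Fin (m+1))
    (hone : ∀ x1 x2 : Fin (m+1), x1 ≠ v → x2 ≠ v →
      OnlyAt c v (c v x1) → OnlyAt c v (c v x2) → c v x1 = c v x2) :
    colorsUsed (m+1) c ≤ colorsUsed m (fun i j => c (v.succAbove i) (v.succAbove j)) + 1 := by
  set c' : Fin m → Fin m → ℕ := fun i j => c (v.succAbove i) (v.succAbove j) with hc'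
  set A' : Finset ℕ :=
    ((Finset.univ.filter fun p : Fin m × Fin m => p.1 ≠ p.2).image fun p => c' p.1 p.2) with hA'
  obtain ⟨a₀, ha₀⟩ : ∃ a₀, ∀ j, j ≠ v → OnlyAt c v (c v j) → c v j = a₀ := by
    by_cases hex : ∃ x : Fin (m+1), x ≠ v ∧ OnlyAt c v (c v x)
    · obtain ⟨x, hx, hOx⟩ := hex
      exact ⟨c v x, fun j hj hOj => hone j x hj hx hOj hOx⟩
    · refine ⟨0, fun j hj hOj => absurd ⟨j, hj, hOj⟩ hex⟩
  have hmemA' : ∀ i j : Fin (m+1), i ≠ j → i ≠ v → j ≠ v → c i j ∈ A' := by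
    intro i j hij hiv hjv
    obtain ⟨i', hi'⟩ := Fin.exists_succAbove_eq hiv
    obtain ⟨j', hj'⟩ := Fin.exists_succAbove_eq hjv
    have hij' : i' ≠ j' := fun h => hij (by rw [← hi', ← hj', h])
    rw [hA']
    apply Finset.mem_image.2
    exact ⟨(i', j'), Finset.mem_filter.2 ⟨Finset.mem_univ _, hij'⟩, by simp [hc', hi', hj']⟩
  have hAtV : ∀ j : Fin (m+1), j ≠ v → c v j ∈ insert a₀ A' := by
    intro j hjv
    by_cases hO : OnlyAt c v (c v j)
    · rw [ha₀ j hjv hO]; exact Finset.mem_insert_self _ _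
    · rw [OnlyAt] at hO
      push_neg at hO
      obtain ⟨i', j', hij', hc2, hiv', hjv'⟩ := hO
      exact Finset.mem_insert_of_mem (hc2 ▸ hmemA' i' j' hij' hiv' hjv')
  have hsub : ((Finset.univ.filter fun p : Fin (m+1) × Fin (m+1) => p.1 ≠ p.2).image
      fun p => c p.1 p.2) ⊆ insert a₀ A' := by
    intro b hb
    obtain ⟨⟨i, j⟩, hmem, rfl⟩ := Finset.mem_image.1 hb
    have hij : i ≠ j := (Finset.mem_filter.1 hmem).2
    by_cases hiv : i = v
    · subst hiv; exact hAtV j (fun h => hij h.symm)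
    by_cases hjv : j = v
    · subst hjv; rw [hsym]; exact hAtV i hiv
    exact Finset.mem_insert_of_mem (hmemA' i j hij hiv hjv)
  calc colorsUsed (m+1) c ≤ (insert a₀ A').card := Finset.card_le_card hsub
    _ ≤ A'.card + 1 := Finset.card_insert_le _ _

lemma base3 (c : Fin 3 → Fin 3 → ℕ) (hsym : ∀ i j, c i j = c j i) :
    colorsUsed 3 c ≤ 3 := by
  have hsub : ((Finset.univ.filter fun p : Fin 3 × Fin 3 => p.1 ≠ p.2).image
      fun p => c p.1 p.2) ⊆ {c 0 1, c 0 2, c 1 2} := by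
    intro b hb
    obtain ⟨⟨i, j⟩, hmem, rfl⟩ := Finset.mem_image.1 hb
    have hij : i ≠ j := (Finset.mem_filter.1 hmem).2
    fin_cases i <;> fin_cases j <;> simp_all [Finset.mem_insert] <;>
      first
        | exact Or.inl (hsym _ _)
        | exact Or.inr (Or.inl (hsym _ _))
        | exact Or.inr (Or.inr (hsym _ _))
  calc colorsUsed 3 c ≤ ({c 0 1, c 0 2, c 1 2} : Finset ℕ).card := Finset.card_le_card hsub
    _ ≤ 3 := by
        apply le_trans (Finset.card_insert_le _ _)
        have := Finset.card_insert_le (c 0 2) ({c 1 2} : Finset ℕ)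
        simp at this ⊢
        omega

lemma upper : ∀ n : ℕ, 3 ≤ n → ∀ c : Fin n → Fin n → ℕ, (∀ i j, c i j = c j i) →
    ¬ HasPCCycle n 4 c → colorsUsed n c ≤ n := by
  intro n
  induction n with
  | zero => intro h; omega
  | succ m ih =>
    intro hm c hsym hno
    rcases Nat.lt_or_ge m 3 with hlt | hge
    · have hm2 : m = 2 := by omega
      subst hm2
      exact base3 c hsym
    · by_cases hB : ∀ v : Fin (m+1), ∃ x1 x2, x1 ≠ v ∧ x2 ≠ v ∧
          OnlyAt c v (c v x1) ∧ OnlyAt c v (c v x2) ∧ c v x1 ≠ c v x2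
      · exact absurd (main_L (by omega) c hsym hB) hno
      · push_neg at hB
        obtain ⟨v, hv⟩ := hB
        have h1 := colors_step m c hsym v hv
        have h2 : colorsUsed m (fun i j => c (v.succAbove i) (v.succAbove j)) ≤ m := by
          apply ih hge
          · intro i j; exact hsym _ _
          · intro hpc; exact hno (pc_transfer m c v hpc)
        omega

def goodColoring (n : ℕ) : Fin n → Fin n → ℕ :=
  fun i j => if i.val = 0 then j.val else if j.val = 0 then i.val else 0

lemma good_sym (n : ℕ) : ∀ i j : Fin n, goodColoring n i j = goodColoring n j i := by
  intro i j
  simp only [goodColoring]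
  split_ifs <;> omega

lemma good_no_pc (n : ℕ) : ¬ HasPCCycle n 4 (goodColoring n) := by
  rintro ⟨p, hinj, hp⟩
  have hzero : ∀ a b : Fin n, a.1 ≠ 0 → b.1 ≠ 0 → goodColoring n a b = 0 := by
    intro a b ha hb; simp [goodColoring, ha, hb]
  have hp0 : goodColoring n (p 0) (p 1) ≠ goodColoring n (p 1) (p 2) := hp 0
  have hp1 : goodColoring n (p 1) (p 2) ≠ goodColoring n (p 2) (p 3) := hp 1
  have hp2 : goodColoring n (p 2) (p 3) ≠ goodColoring n (p 3) (p 0) := hp 2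
  have hp3 : goodColoring n (p 3) (p 0) ≠ goodColoring n (p 0) (p 1) := hp 3
  have hne : ∀ i j : Fin 4, i ≠ j → (p i).1 = 0 → (p j).1 ≠ 0 := by
    intro i j hij hi hj
    exact hij (hinj (Fin.ext (hi.trans hj.symm)))
  by_cases h0 : (p 0).1 = 0
  · exact hp1 ((hzero _ _ (hne 0 1 (by decide) h0) (hne 0 2 (by decide) h0)).trans
      (hzero _ _ (hne 0 2 (by decide) h0) (hne 0 3 (by decide) h0)).symm)
  by_cases h1 : (p 1).1 = 0
  · exact hp2 ((hzero _ _ (hne 1 2 (by decide) h1) (hne 1 3 (by decide) h1)).trans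
      (hzero _ _ (hne 1 3 (by decide) h1) (hne 1 0 (by decide) h1)).symm)
  by_cases h2 : (p 2).1 = 0
  · exact hp3 ((hzero _ _ (hne 2 3 (by decide) h2) (hne 2 0 (by decide) h2)).trans
      (hzero _ _ (hne 2 0 (by decide) h2) (hne 2 1 (by decide) h2)).symm)
  · exact hp0 ((hzero _ _ h0 h1).trans (hzero _ _ h1 h2).symm)

lemma good_count (n : ℕ) (hn : 4 ≤ n) : colorsUsed n (goodColoring n) = n := by
  have him : ((Finset.univ.filter fun p : Fin n × Fin n => p.1 ≠ p.2).image
      fun p => goodColoring n p.1 p.2) = Finset.range n := by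
    ext b
    simp only [Finset.mem_image, Finset.mem_filter, Finset.mem_univ, true_and,
      Finset.mem_range, Prod.exists]
    constructor
    · rintro ⟨i, j, hij, rfl⟩
      simp only [goodColoring]
      split_ifs
      · exact j.isLt
      · exact i.isLt
      · omega
    · intro hb
      by_cases hb0 : b = 0
      · refine ⟨⟨1, by omega⟩, ⟨2, by omega⟩, ?_, ?_⟩
        · simp [Fin.ext_iff]
        · simp [goodColoring, hb0]
      · refine ⟨⟨0, by omega⟩, ⟨b, hb⟩, ?_, ?_⟩
        · simp [Fin.ext_iff]; omega
        · simp [goodColoring]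
  rw [colorsUsed, him, Finset.card_range]

/-- For every `n ≥ 4`, the maximum number of colors in an edge-coloring of `K_n`
with no properly colored `C_4` equals `n`. -/
theorem pr_C4 (n : ℕ) (hn : 4 ≤ n) :
    IsGreatest {m : ℕ | ∃ c : Fin n → Fin n → ℕ, (∀ i j, c i j = c j i) ∧
      ¬ HasPCCycle n 4 c ∧ colorsUsed n c = m} n := by
  constructor
  · exact ⟨goodColoring n, good_sym n, good_no_pc n, good_count n hn⟩
  · rintro m ⟨c, hsym, hno, rfl⟩
    exact upper n (by omega) c hsym hno
end

section
/- For every n ≥ 4, the maximum number of colors in an edge-coloring of K_n with no properly colored copy of K_4 minus an edge equals ⌊3(n-1)/2⌋. -/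
/-- The edge-colored `K_n` contains a properly colored copy of `K_4` minus an edge
(on vertices `x y z w` with the edge `zw` missing): any two adjacent edges of the
copy receive distinct colors. -/
def HasPCK4minus (n : ℕ) (c : Fin n → Fin n → ℕ) : Prop :=
  ∃ x y z w : Fin n, x ≠ y ∧ x ≠ z ∧ x ≠ w ∧ y ≠ z ∧ y ≠ w ∧ z ≠ w ∧
    c x y ≠ c x z ∧ c x y ≠ c x w ∧ c x z ≠ c x w ∧
    c x y ≠ c y z ∧ c x y ≠ c y w ∧ c y z ≠ c y w ∧
    c x z ≠ c y z ∧ c x w ≠ c y w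

def myc (n i j : ℕ) : ℕ :=
  if i = j then 0 else
  if max i j = min i j + 1 ∧ (min i j) % 2 = n % 2 then 3 * ((max i j - n % 2) / 2)
  else if (max i j) % 2 = n % 2 then 3 * ((max i j - n % 2) / 2) + 1
  else 3 * ((max i j - n % 2) / 2) + 2

lemma myc_symm (n i j : ℕ) : myc n i j = myc n j i := by
  unfold myc
  rcases eq_or_ne i j with h | h
  · simp [h]
  · rw [if_neg h, if_neg h.symm, max_comm, min_comm]

lemma myc_down_eq (n v p q : ℕ) (hp : p < v) (hq : q < v)
    (hpp : ¬ (v = p + 1 ∧ p % 2 = n % 2)) (hqq : ¬ (v = q + 1 ∧ q % 2 = n % 2)) :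
    myc n p v = myc n q v := by
  unfold myc
  rw [if_neg (by omega : ¬ p = v), if_neg (by omega : ¬ q = v)]
  rw [max_eq_right hp.le, max_eq_right hq.le, min_eq_left hp.le, min_eq_left hq.le]
  rw [if_neg hpp, if_neg hqq]

/-- Among three edges going down from a common top vertex, two get equal colors. -/
lemma myc_three (n v p q s : ℕ) (hp : p < v) (hq : q < v) (hs : s < v)
    (hpq : p ≠ q) (hps : p ≠ s) (hqs : q ≠ s) :
    myc n p v = myc n q v ∨ myc n p v = myc n s v ∨ myc n q v = myc n s v := by
  by_cases h1 : v = p + 1 ∧ p % 2 = n % 2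
  · right; right; exact myc_down_eq n v q s hq hs (by omega) (by omega)
  · by_cases h2 : v = q + 1 ∧ q % 2 = n % 2
    · right; left; exact myc_down_eq n v p s hp hs h1 (by omega)
    · left; exact myc_down_eq n v p q hp hq h1 h2

lemma myc_noPC (n : ℕ) : ¬ HasPCK4minus n (fun i j => myc n i.1 j.1) := by
  rintro ⟨x, y, z, w, hxy, hxz, hxw, hyz, hyw, hzw,
    e1, e2, e3, e4, e5, e6, e7, e8⟩
  simp only [ne_eq] at e1 e2 e3 e4 e5 e6 e7 e8
  set X := (x : ℕ) with hX
  set Y := (y : ℕ) with hY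
  set Z := (z : ℕ) with hZ
  set W := (w : ℕ) with hW
  have dxy : X ≠ Y := fun h => hxy (Fin.ext h)
  have dxz : X ≠ Z := fun h => hxz (Fin.ext h)
  have dxw : X ≠ W := fun h => hxw (Fin.ext h)
  have dyz : Y ≠ Z := fun h => hyz (Fin.ext h)
  have dyw : Y ≠ W := fun h => hyw (Fin.ext h)
  have dzw : Z ≠ W := fun h => hzw (Fin.ext h)
  have hcase : (Y < X ∧ Z < X ∧ W < X) ∨ (X < Y ∧ Z < Y ∧ W < Y) ∨
      (X < Z ∧ Y < Z ∧ W < Z) ∨ (X < W ∧ Y < W ∧ Z < W) := by omega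
  rcases hcase with ⟨h1, h2, h3⟩ | ⟨h1, h2, h3⟩ | ⟨h1, h2, h3⟩ | ⟨h1, h2, h3⟩
  · -- X is the maximum: the three edges at hub x go down
    have := myc_three n X Y Z W h1 h2 h3 dyz dyw dzw
    rw [← myc_symm n X Y, ← myc_symm n X Z, ← myc_symm n X W] at this
    tauto
  · -- Y is the maximum: hub y's edges go down
    have := myc_three n Y X Z W h1 h2 h3 dxz dxw dzw
    rw [← myc_symm n Y Z, ← myc_symm n Y W] at this
    -- colors: myc X Y, myc Y Z, myc Y W : e4 e5 e6
    tauto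
  · -- Z is the maximum: edges xz, yz go down to z; they differ ⇒ one is a pair edge
    by_cases hp : Z = X + 1 ∧ X % 2 = n % 2
    · -- x is z's partner; then y, w < x and edges xy, xw are both plain at x
      have hyx : Y < X := by omega
      have hwx : W < X := by omega
      have : myc n Y X = myc n W X := by
        apply myc_down_eq n X Y W hyx hwx <;> omega
      rw [← myc_symm n X Y, ← myc_symm n X W] at this
      exact e2 this
    · by_cases hq : Z = Y + 1 ∧ Y % 2 = n % 2
      · have hxy' : X < Y := by omega
        have hwy : W < Y := by omega
        have : myc n X Y = myc n W Y := by
          apply myc_down_eq n Y X W hxy' hwy <;> omega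
        rw [← myc_symm n Y W] at this
        exact e5 this
      · have : myc n X Z = myc n Y Z := myc_down_eq n Z X Y h1 h2 hp hq
        exact e7 this
  · -- W is the maximum
    by_cases hp : W = X + 1 ∧ X % 2 = n % 2
    · have hyx : Y < X := by omega
      have hzx : Z < X := by omega
      have : myc n Y X = myc n Z X := by
        apply myc_down_eq n X Y Z hyx hzx <;> omega
      rw [← myc_symm n X Y, ← myc_symm n X Z] at this
      exact e1 this
    · by_cases hq : W = Y + 1 ∧ Y % 2 = n % 2
      · have hxy' : X < Y := by omega
        have hzy : Z < Y := by omega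
        have : myc n X Y = myc n Z Y := by
          apply myc_down_eq n Y X Z hxy' hzy <;> omega
        rw [← myc_symm n Y Z] at this
        exact e4 this
      · exact e8 (myc_down_eq n W X Y h1 h2 hp hq)

def mycTarget (n : ℕ) : Finset ℕ :=
  if n % 2 = 1 then Finset.range (3 * (n / 2))
  else insert 0 (Finset.Ico 3 (3 * (n / 2)))

lemma myc_mem_target (n i j : ℕ) (hij : i ≠ j) (hi : i < n) (hj : j < n) :
    myc n i j ∈ mycTarget n := by
  have hmax : max i j < n := by omega
  have hminmax : min i j < max i j := by omega
  unfold myc mycTarget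
  rw [if_neg hij]
  split_ifs with h1 h2 h3 h4 h5 h6 h7 <;>
    simp only [Finset.mem_range, Finset.mem_insert, Finset.mem_Ico] <;> omega

lemma target_subset (n : ℕ) (hn : 2 ≤ n) (t : ℕ) (ht : t ∈ mycTarget n) :
    ∃ a b : ℕ, a < n ∧ b < n ∧ a ≠ b ∧ myc n a b = t := by
  unfold mycTarget at ht
  have hr : n % 2 = 0 ∨ n % 2 = 1 := by omega
  set r := n % 2 with hrdef
  have htt : t < 3 * (n / 2) ∧ (r = 0 → t = 0 ∨ 3 ≤ t) := by
    rcases hr with h | h <;> rw [h] at ht <;> simp_all [Finset.mem_range, Finset.mem_Ico] <;> omega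
  set k := t / 3 with hk
  have hs : t % 3 = 0 ∨ t % 3 = 1 ∨ t % 3 = 2 := by omega
  rcases hs with hs | hs | hs
  · -- pair edge (2k+r, 2k+r+1)
    refine ⟨2 * k + r, 2 * k + r + 1, by omega, by omega, by omega, ?_⟩
    unfold myc
    rw [if_neg (by omega)]
    rw [max_eq_right (by omega), min_eq_left (by omega)]
    rw [if_pos ⟨rfl, by omega⟩]
    omega
  · -- lower star edge (0, 2k+r)
    refine ⟨0, 2 * k + r, by omega, by omega, by omega, ?_⟩
    unfold myc
    rw [if_neg (by omega)]
    rw [max_eq_right (by omega), min_eq_left (by omega)]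
    rw [if_neg (by omega), if_pos (by omega)]
    omega
  · -- upper star edge (0, 2k+r+1)
    refine ⟨0, 2 * k + r + 1, by omega, by omega, by omega, ?_⟩
    unfold myc
    rw [if_neg (by omega)]
    rw [max_eq_right (by omega), min_eq_left (by omega)]
    rw [if_neg (by omega), if_neg (by omega)]
    omega

lemma myc_colorsUsed (n : ℕ) (hn : 2 ≤ n) :
    colorsUsed n (fun i j => myc n i.1 j.1) = 3 * (n - 1) / 2 := by
  have himg : ((Finset.univ.filter fun p : Fin n × Fin n => p.1 ≠ p.2).image
      fun p => myc n p.1.1 p.2.1) = mycTarget n := by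
    apply Finset.ext
    intro t
    constructor
    · intro ht
      rcases Finset.mem_image.1 ht with ⟨p, hp, hpt⟩
      rcases Finset.mem_filter.1 hp with ⟨-, hne⟩
      have hne' : p.1.1 ≠ p.2.1 := fun h => hne (Fin.ext h)
      have := myc_mem_target n p.1.1 p.2.1 hne' p.1.isLt p.2.isLt
      rwa [hpt] at this
    · intro ht
      rcases target_subset n hn t ht with ⟨a, b, ha, hb, hab, habt⟩
      apply Finset.mem_image.2
      refine ⟨(⟨a, ha⟩, ⟨b, hb⟩), ?_, habt⟩
      exact Finset.mem_filter.2 ⟨Finset.mem_univ _, by simp [Fin.ext_iff, hab]⟩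
  unfold colorsUsed
  rw [himg]
  unfold mycTarget
  have hr : n % 2 = 0 ∨ n % 2 = 1 := by omega
  rcases hr with h | h
  · rw [if_neg (by omega)]
    rw [Finset.card_insert_of_notMem (by simp)]
    rw [Nat.card_Ico]
    omega
  · rw [if_pos h, Finset.card_range]
    omega

open Finset
open scoped Classical

/-- colors used on edges within `V` -/
def colF (c : ℕ → ℕ → ℕ) (V : Finset ℕ) : Finset ℕ :=
  ((V ×ˢ V).filter fun p => p.1 ≠ p.2).image fun p => c p.1 p.2

/-- no properly colored K4 minus an edge within `V` -/
def PCf (c : ℕ → ℕ → ℕ) (V : Finset ℕ) : Prop :=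
  ∀ x ∈ V, ∀ y ∈ V, ∀ z ∈ V, ∀ w ∈ V, x ≠ y → x ≠ z → x ≠ w → y ≠ z → y ≠ w → z ≠ w →
    c x y ≠ c x z → c x y ≠ c x w → c x z ≠ c x w → c x y ≠ c y z → c x y ≠ c y w →
    c y z ≠ c y w → c x z ≠ c y z → c x w ≠ c y w → False

/-- `t` is a color all of whose edges (inside `V`) touch `v` -/
def IsEx (c : ℕ → ℕ → ℕ) (V : Finset ℕ) (v t : ℕ) : Prop :=
  ∀ i ∈ V, ∀ j ∈ V, i ≠ j → c i j = t → i = v ∨ j = v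

/-- `t` is a color all of whose edges (inside `V`) touch `u` or `v` -/
def IsExP (c : ℕ → ℕ → ℕ) (V : Finset ℕ) (u v t : ℕ) : Prop :=
  ∀ i ∈ V, ∀ j ∈ V, i ≠ j → c i j = t → i = u ∨ j = u ∨ i = v ∨ j = v

noncomputable def exSet (c : ℕ → ℕ → ℕ) (V : Finset ℕ) (v : ℕ) : Finset ℕ :=
  (colF c V).filter (IsEx c V v)

noncomputable def exPairSet (c : ℕ → ℕ → ℕ) (V : Finset ℕ) (u v : ℕ) : Finset ℕ :=
  (colF c V).filter (IsExP c V u v)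

lemma mem_colF {c : ℕ → ℕ → ℕ} {V : Finset ℕ} {t : ℕ} :
    t ∈ colF c V ↔ ∃ i ∈ V, ∃ j ∈ V, i ≠ j ∧ c i j = t := by
  unfold colF
  simp only [mem_image, mem_filter, mem_product, Prod.exists]
  constructor
  · rintro ⟨i, j, ⟨⟨hi, hj⟩, hne⟩, ht⟩
    exact ⟨i, hi, j, hj, hne, ht⟩
  · rintro ⟨i, hi, j, hj, hne, ht⟩
    exact ⟨i, j, ⟨⟨hi, hj⟩, hne⟩, ht⟩

lemma colF_subset_union_exSet (c : ℕ → ℕ → ℕ) (V : Finset ℕ) (v : ℕ) :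
    colF c V ⊆ exSet c V v ∪ colF c (V.erase v) := by
  intro t ht
  by_cases hex : IsEx c V v t
  · exact mem_union_left _ (mem_filter.2 ⟨ht, hex⟩)
  · apply mem_union_right
    unfold IsEx at hex
    push_neg at hex
    obtain ⟨i, hi, j, hj, hne, hc, hiv, hjv⟩ := hex
    exact mem_colF.2 ⟨i, mem_erase.2 ⟨hiv, hi⟩, j, mem_erase.2 ⟨hjv, hj⟩, hne, hc⟩

lemma colF_card_le_erase (c : ℕ → ℕ → ℕ) (V : Finset ℕ) (v : ℕ) :
    (colF c V).card ≤ (exSet c V v).card + (colF c (V.erase v)).card :=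
  le_trans (card_le_card (colF_subset_union_exSet c V v)) (card_union_le _ _)

lemma colF_subset_union_exPair (c : ℕ → ℕ → ℕ) (V : Finset ℕ) (u v : ℕ) :
    colF c V ⊆ exPairSet c V u v ∪ colF c ((V.erase u).erase v) := by
  intro t ht
  by_cases hex : IsExP c V u v t
  · exact mem_union_left _ (mem_filter.2 ⟨ht, hex⟩)
  · apply mem_union_right
    unfold IsExP at hex
    push_neg at hex
    obtain ⟨i, hi, j, hj, hne, hc, h1, h2, h3, h4⟩ := hex
    exact mem_colF.2 ⟨i, mem_erase.2 ⟨h3, mem_erase.2 ⟨h1, hi⟩⟩,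
      j, mem_erase.2 ⟨h4, mem_erase.2 ⟨h2, hj⟩⟩, hne, hc⟩

lemma colF_card_le_erase2 (c : ℕ → ℕ → ℕ) (V : Finset ℕ) (u v : ℕ) :
    (colF c V).card ≤ (exPairSet c V u v).card + (colF c ((V.erase u).erase v)).card :=
  le_trans (card_le_card (colF_subset_union_exPair c V u v)) (card_union_le _ _)

/-- an exclusive color is witnessed by an edge at `v` (using symmetry) -/
lemma exSet_witness {c : ℕ → ℕ → ℕ} {V : Finset ℕ} {v t : ℕ}
    (hsym : ∀ i j, c i j = c j i) (hv : v ∈ V) (ht : t ∈ exSet c V v) :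
    ∃ a ∈ V, a ≠ v ∧ c v a = t := by
  obtain ⟨hcol, hex⟩ := mem_filter.1 ht
  obtain ⟨i, hi, j, hj, hne, hc⟩ := mem_colF.1 hcol
  rcases hex i hi j hj hne hc with h | h
  · subst h
    exact ⟨j, hj, fun hh => hne hh.symm, hc⟩
  · subst h
    exact ⟨i, hi, fun hh => hne hh, by rw [hsym]; exact hc⟩

example : True := trivial

/-- values of edges avoiding `v` differ from `v`-exclusive colors -/
lemma ex_ne {c : ℕ → ℕ → ℕ} {V : Finset ℕ} {v t : ℕ} (hex : IsEx c V v t)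
    {i j : ℕ} (hi : i ∈ V) (hj : j ∈ V) (hij : i ≠ j) (hiv : i ≠ v) (hjv : j ≠ v) :
    c i j ≠ t := by
  intro h
  rcases hex i hi j hj hij h with h' | h' <;> [exact hiv h'; exact hjv h']

section Quads

variable {c : ℕ → ℕ → ℕ} {V : Finset ℕ}

/-- PL2: a witness `t` of an exclusive color `μ` of `a` (with `μ ≠ c a b`)
satisfies `c u t ∈ {α, β}`. -/
lemma quad_PL2 (hPC : PCf c V) {u a b t α β μ : ℕ}
    (hu : u ∈ V) (ha : a ∈ V) (hb : b ∈ V) (ht : t ∈ V)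
    (dua : u ≠ a) (dub : u ≠ b) (dut : u ≠ t) (dab : a ≠ b) (dat : a ≠ t) (dbt : b ≠ t)
    (hα : c u a = α) (hexα : IsEx c V u α)
    (hβ : c u b = β) (hexβ : IsEx c V u β) (hαβ : α ≠ β)
    (hμ : c a t = μ) (hexμ : IsEx c V a μ) (hμγ : μ ≠ c a b) :
    c u t = α ∨ c u t = β := by
  by_contra hcon
  push_neg at hcon
  obtain ⟨h1, h2⟩ := hcon
  refine hPC u hu a ha b hb t ht dua dub dut dab dat dbt ?_ ?_ ?_ ?_ ?_ ?_ ?_ ?_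
  · rw [hα, hβ]; exact hαβ
  · rw [hα]; exact fun h => h1 h.symm
  · rw [hβ]; exact fun h => h2 h.symm
  · rw [hα]; exact fun h => ex_ne hexα ha hb dab dua.symm dub.symm h.symm
  · rw [hα, hμ]; exact fun h => ex_ne hexα ha ht dat dua.symm dut.symm (hμ.trans h.symm)
  · rw [hμ]; exact fun h => hμγ h.symm
  · rw [hβ]; exact fun h => ex_ne hexβ ha hb dab dua.symm dub.symm h.symm
  · rw [hμ]; exact fun h => ex_ne hexμ hu ht dut dua dat.symm h

/-- Λ: forbidden configuration: two exclusive edges out of `u` (colors `α,β`) to `a,t`,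
and two exclusive edges out of `a` (colors `μ,μ'`) to `t,t''`. -/
lemma quad_Lambda (hsym : ∀ i j, c i j = c j i) (hPC : PCf c V) {u a t t'' α β μ μ' : ℕ}
    (hu : u ∈ V) (ha : a ∈ V) (ht : t ∈ V) (ht'' : t'' ∈ V)
    (dua : u ≠ a) (dut : u ≠ t) (dut'' : u ≠ t'') (dat : a ≠ t) (dat'' : a ≠ t'') (dtt'' : t ≠ t'')
    (hα : c u a = α) (hexα : IsEx c V u α)
    (hβ : c u t = β) (hexβ : IsEx c V u β) (hαβ : α ≠ β)
    (hμ : c a t = μ) (hexμ : IsEx c V a μ)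
    (hμ' : c a t'' = μ') (hexμ' : IsEx c V a μ') (hμμ' : μ ≠ μ') : False := by
  refine hPC a ha t ht u hu t'' ht'' dat dua.symm dat'' dut.symm dtt'' dut''
    ?_ ?_ ?_ ?_ ?_ ?_ ?_ ?_
  · rw [hμ, hsym a u, hα]
    exact fun h => ex_ne hexα ha ht dat dua.symm dut.symm (hμ.trans h)
  · rw [hμ, hμ']; exact hμμ'
  · rw [hsym a u, hα, hμ']
    exact fun h => ex_ne hexα ha ht'' dat'' dua.symm dut''.symm (hμ'.trans h.symm)
  · rw [hμ, hsym t u, hβ]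
    exact fun h => ex_ne hexβ ha ht dat dua.symm dut.symm (hμ.trans h)
  · rw [hμ]; exact fun h => ex_ne hexμ ht ht'' dtt'' dat.symm dat''.symm h.symm
  · rw [hsym t u, hβ]; exact fun h => ex_ne hexβ ht ht'' dtt'' dut.symm dut''.symm h.symm
  · rw [hsym a u, hsym t u, hα, hβ]; exact hαβ
  · rw [hμ']; exact fun h => ex_ne hexμ' ht ht'' dtt'' dat.symm dat''.symm h.symm

end Quads

section Quads2

variable {c : ℕ → ℕ → ℕ} {V : Finset ℕ}

/-- Step 1: with `π = c u v` a singleton color, the second exclusives of `u` and `v`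
lean on a common vertex. -/
lemma quad_step1 (hPC : PCf c V) {u v s s' π σu σv : ℕ}
    (hu : u ∈ V) (hv : v ∈ V) (hs : s ∈ V) (hs' : s' ∈ V)
    (duv : u ≠ v) (dus : u ≠ s) (dus' : u ≠ s') (dvs : v ≠ s) (dvs' : v ≠ s') (dss' : s ≠ s')
    (hπ : c u v = π) (hexπu : IsEx c V u π) (hexπv : IsEx c V v π)
    (hσu : c u s = σu) (hexσu : IsEx c V u σu) (hσuπ : σu ≠ π)
    (hσv : c v s' = σv) (hexσv : IsEx c V v σv) (hσvπ : σv ≠ π) :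
    c u s' = σu ∨ c v s = σv := by
  by_contra hcon
  push_neg at hcon
  obtain ⟨h1, h2⟩ := hcon
  refine hPC u hu v hv s hs s' hs' duv dus dus' dvs dvs' dss' ?_ ?_ ?_ ?_ ?_ ?_ ?_ ?_
  · rw [hπ, hσu]; exact fun h => hσuπ h.symm
  · rw [hπ]; exact fun h => ex_ne hexπv hu hs' dus' duv dvs'.symm h.symm
  · rw [hσu]; exact fun h => h1 h.symm
  · rw [hπ]; exact fun h => ex_ne hexπu hv hs dvs duv.symm dus.symm h.symm
  · rw [hπ, hσv]; exact fun h => hσvπ h.symm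
  · rw [hσv]; exact h2
  · rw [hσu]; exact fun h => ex_ne hexσu hv hs dvs duv.symm dus.symm h.symm
  · rw [hσv]; exact fun h => ex_ne hexσv hu hs' dus' duv dvs'.symm h

/-- Step 3: two separated witnesses of a pair-exclusive fourth color give a PC copy. -/
lemma quad_step3 (hPC : PCf c V) {u v x y π τ : ℕ}
    (hu : u ∈ V) (hv : v ∈ V) (hx : x ∈ V) (hy : y ∈ V)
    (duv : u ≠ v) (dux : u ≠ x) (duy : u ≠ y) (dvx : v ≠ x) (dvy : v ≠ y) (dxy : x ≠ y)
    (hπ : c u v = π) (hexπu : IsEx c V u π) (hexπv : IsEx c V v π) (hτπ : τ ≠ π)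
    (hux : c u x = τ) (hvy : c v y = τ) (huy : c u y ≠ τ) (hvx : c v x ≠ τ) : False := by
  refine hPC u hu v hv x hx y hy duv dux duy dvx dvy dxy ?_ ?_ ?_ ?_ ?_ ?_ ?_ ?_
  · rw [hπ, hux]; exact fun h => hτπ h.symm
  · rw [hπ]; exact fun h => ex_ne hexπv hu hy duy duv dvy.symm h.symm
  · rw [hux]; exact fun h => huy h.symm
  · rw [hπ]; exact fun h => ex_ne hexπu hv hx dvx duv.symm dux.symm h.symm
  · rw [hπ, hvy]; exact fun h => hτπ h.symm
  · rw [hvy]; exact hvx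
  · rw [hux]; exact fun h => hvx h.symm
  · rw [hvy]; exact huy

/-- Step 4: with a common base vertex `s` and a fourth pair color `τ` on edge `u x`,
the color of `s x` is forced to `σv` or `τ`. -/
lemma quad_step4 (hsym : ∀ i j, c i j = c j i) (hPC : PCf c V) {u v s x π σu σv τ : ℕ}
    (hu : u ∈ V) (hv : v ∈ V) (hs : s ∈ V) (hx : x ∈ V)
    (duv : u ≠ v) (dus : u ≠ s) (dux : u ≠ x) (dvs : v ≠ s) (dvx : v ≠ x) (dsx : s ≠ x)
    (hπ : c u v = π)
    (hσu : c u s = σu) (hexσu : IsEx c V u σu)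
    (hσv : c v s = σv)
    (hσuπ : σu ≠ π) (hσvπ : σv ≠ π) (hσuσv : σu ≠ σv)
    (hux : c u x = τ) (hτπ : τ ≠ π) (hτσu : τ ≠ σu) : c s x = σv ∨ c s x = τ := by
  by_contra hcon
  push_neg at hcon
  obtain ⟨h1, h2⟩ := hcon
  refine hPC u hu s hs v hv x hx dus duv dux dvs.symm dsx dvx ?_ ?_ ?_ ?_ ?_ ?_ ?_ ?_
  · rw [hσu, hπ]; exact hσuπ
  · rw [hσu, hux]; exact fun h => hτσu h.symm
  · rw [hπ, hux]; exact fun h => hτπ h.symm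
  · rw [hσu, hsym s v, hσv]; exact hσuσv
  · rw [hσu]; exact fun h => ex_ne hexσu hs hx dsx dus.symm dux.symm h.symm
  · rw [hsym s v, hσv]; exact fun h => h1 h.symm
  · rw [hπ, hsym s v, hσv]; exact fun h => hσvπ h.symm
  · rw [hux]; exact fun h => h2 h.symm

end Quads2

section Singleton

variable {c : ℕ → ℕ → ℕ} {V : Finset ℕ}

/-- number of witnesses of color `t` at `v` -/
noncomputable def wit (c : ℕ → ℕ → ℕ) (V : Finset ℕ) (v t : ℕ) : ℕ :=
  ((V.erase v).filter fun w => c v w = t).card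

lemma exSet_subset_colF {v : ℕ} : exSet c V v ⊆ colF c V := filter_subset _ _

/-- If every vertex has two exclusive colors, then some color class is a single edge. -/
lemma singleton_exists (hsym : ∀ i j, c i j = c j i) (hPC : PCf c V)
    (hC1 : ∀ v ∈ V, 2 ≤ (exSet c V v).card) (hV : V.Nonempty) :
    ∃ u ∈ V, ∃ v ∈ V, u ≠ v ∧ IsEx c V u (c u v) ∧ IsEx c V v (c u v) := by
  classical
  set P : Finset (ℕ × ℕ) := (V ×ˢ (V.biUnion fun v => exSet c V v)).filter
      (fun p => p.2 ∈ exSet c V p.1) with hP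
  have hPne : P.Nonempty := by
    obtain ⟨v, hv⟩ := hV
    have h2 := hC1 v hv
    obtain ⟨t, ht⟩ := card_pos.1 (by omega : 0 < (exSet c V v).card)
    exact ⟨(v, t), mem_filter.2 ⟨mem_product.2 ⟨hv, mem_biUnion.2 ⟨v, hv, ht⟩⟩, ht⟩⟩
  obtain ⟨⟨u, α⟩, hmemP, hmin⟩ := P.exists_min_image (fun p => wit c V p.1 p.2) hPne
  obtain ⟨hprod, hαex⟩ := mem_filter.1 hmemP
  have hu : u ∈ V := (mem_product.1 hprod).1
  have hexα : IsEx c V u α := (mem_filter.1 hαex).2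
  obtain ⟨a, haV, hau, hac⟩ := exSet_witness hsym hu hαex
  have hamem : a ∈ (V.erase u).filter fun w => c u w = α :=
    mem_filter.2 ⟨mem_erase.2 ⟨hau, haV⟩, hac⟩
  have hwitpos : 1 ≤ wit c V u α := card_pos.2 ⟨a, hamem⟩
  by_cases hone : wit c V u α = 1
  · -- singleton case: the unique witness a also has α exclusive
    have huniq : ∀ w ∈ V.erase u, c u w = α → w = a := by
      intro w hw hcw
      by_contra hne
      have hsub : ({w, a} : Finset ℕ) ⊆ (V.erase u).filter (fun z => c u z = α) := by
        intro z hz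
        rcases mem_insert.1 hz with h | h
        · subst h; exact mem_filter.2 ⟨hw, hcw⟩
        · rw [mem_singleton.1 h]; exact hamem
      have h2 : 2 ≤ wit c V u α :=
        le_trans (le_of_eq (card_pair hne).symm) (card_le_card hsub)
      omega
    refine ⟨u, hu, a, haV, fun h => hau h.symm, ?_, ?_⟩
    · rw [hac]; exact hexα
    · rw [hac]
      intro i hi j hj hij hcij
      rcases hexα i hi j hj hij hcij with h | h
      · subst h
        exact Or.inr (huniq j (mem_erase.2 ⟨fun h => hij h.symm, hj⟩) hcij)
      · subst h
        exact Or.inl (huniq i (mem_erase.2 ⟨hij, hi⟩) (by rw [hsym]; exact hcij))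
  · -- every exclusive color has ≥ 2 witnesses: contradiction by minimality
    exfalso
    have hk2 : 2 ≤ wit c V u α := by omega
    have hua : u ≠ a := fun h => hau h.symm
    -- any color exclusive to a differs from α
    have keyne : ∀ δ, IsEx c V a δ → δ ≠ α := by
      intro δ hδ hδα
      have hk2' : 1 < ((V.erase u).filter fun w => c u w = α).card := hk2
      obtain ⟨w1, hw1, w2, hw2, h12⟩ := one_lt_card.1 hk2'
      obtain ⟨hw1e, hw1c⟩ := mem_filter.1 hw1
      obtain ⟨hw2e, hw2c⟩ := mem_filter.1 hw2
      have e1 := hδ u hu w1 (mem_of_mem_erase hw1e)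
        (fun h => (mem_erase.1 hw1e).1 h.symm) (by rw [hw1c, hδα])
      have e2 := hδ u hu w2 (mem_of_mem_erase hw2e)
        (fun h => (mem_erase.1 hw2e).1 h.symm) (by rw [hw2c, hδα])
      rcases e1 with h | h
      · exact hua h
      · rcases e2 with h' | h'
        · exact hua h'
        · exact h12 (h.trans h'.symm)
    -- second exclusive of u
    have hαex2 : α ∈ exSet c V u := hαex
    obtain ⟨β, hβer⟩ := card_pos.1 (by
      rw [card_erase_of_mem hαex2]; have := hC1 u hu; omega :
      0 < ((exSet c V u).erase α).card)
    have hβα : β ≠ α := (mem_erase.1 hβer).1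
    have hβex' : β ∈ exSet c V u := (mem_erase.1 hβer).2
    have hexβ : IsEx c V u β := (mem_filter.1 hβex').2
    obtain ⟨b, hbV, hbu, hbc⟩ := exSet_witness hsym hu hβex'
    have hab : a ≠ b := fun h => hβα (by rw [← hbc, ← h, hac])
    -- exclusive μ of a with value different from c a b
    have h2a := hC1 a haV
    obtain ⟨μ1, hμ1, μ2, hμ2, h12⟩ := one_lt_card.1 (by omega : 1 < (exSet c V a).card)
    have hchoice : ∃ μ ∈ exSet c V a, μ ≠ c a b := by
      by_cases h : μ1 = c a b
      · exact ⟨μ2, hμ2, fun hh => h12 (h.trans hh.symm)⟩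
      · exact ⟨μ1, hμ1, h⟩
    obtain ⟨μ, hμex', hμab⟩ := hchoice
    have hexμ : IsEx c V a μ := (mem_filter.1 hμex').2
    have hμα : μ ≠ α := keyne μ hexμ
    have hμβ : μ ≠ β := by
      intro h
      subst h
      rcases hexμ u hu b hbV (fun h => hbu h.symm) hbc with h | h
      · exact hua h
      · exact hab h.symm
    have hμP : (a, μ) ∈ P := mem_filter.2
      ⟨mem_product.2 ⟨haV, mem_biUnion.2 ⟨a, haV, hμex'⟩⟩, hμex'⟩
    have hminμ := hmin (a, μ) hμP
    have hT : ((V.erase a).filter fun w => c a w = μ) ⊆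
        (((V.erase u).filter fun w => c u w = α).erase a) := by
      intro t htm
      obtain ⟨hte, htc⟩ := mem_filter.1 htm
      have htV : t ∈ V := mem_of_mem_erase hte
      have hta : t ≠ a := (mem_erase.1 hte).1
      have htu : t ≠ u := by
        intro h
        subst h
        exact hμα (by rw [← htc, hsym, hac])
      have htb : t ≠ b := by
        intro h
        subst h
        exact hμab htc.symm
      have hPL2 := quad_PL2 hPC hu haV hbV htV hua (fun h => hbu h.symm)
        (fun h => htu h.symm) hab (fun h => hta h.symm) (fun h => htb h.symm)
        hac hexα hbc hexβ (fun h => hβα h.symm) htc hexμ hμab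
      rcases hPL2 with h | h
      · exact mem_erase.2 ⟨hta, mem_filter.2 ⟨mem_erase.2 ⟨htu, htV⟩, h⟩⟩
      · exfalso
        -- second exclusive μ' of a, Λ-configuration
        obtain ⟨μ', hμ'er⟩ := card_pos.1 (by
          rw [card_erase_of_mem hμex']; omega : 0 < ((exSet c V a).erase μ).card)
        have hμ'μ : μ' ≠ μ := (mem_erase.1 hμ'er).1
        have hμ'ex' : μ' ∈ exSet c V a := (mem_erase.1 hμ'er).2
        have hexμ' : IsEx c V a μ' := (mem_filter.1 hμ'ex').2
        obtain ⟨t'', ht''V, ht''a, ht''c⟩ := exSet_witness hsym haV hμ'ex'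
        have hμ'α : μ' ≠ α := keyne μ' hexμ'
        have ht''u : t'' ≠ u := by
          intro hh
          subst hh
          exact hμ'α (by rw [← ht''c, hsym, hac])
        have ht''t : t'' ≠ t := fun hh => hμ'μ (by rw [← ht''c, hh, htc])
        exact quad_Lambda hsym hPC hu haV htV ht''V hua (fun hh => htu hh.symm)
          (fun hh => ht''u hh.symm) (fun hh => hta hh.symm) (fun hh => ht''a hh.symm)
          (fun hh => ht''t hh.symm) hac hexα h hexβ (fun hh => hβα hh.symm)
          htc hexμ ht''c hexμ' (fun hh => hμ'μ hh.symm)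
    have hcard : wit c V a μ ≤ wit c V u α - 1 := by
      have hle := card_le_card hT
      rw [card_erase_of_mem hamem] at hle
      exact hle
    have hminμ' : wit c V u α ≤ wit c V a μ := hminμ
    omega

end Singleton

section Core

variable {c : ℕ → ℕ → ℕ} {V : Finset ℕ}

lemma core_contradiction (hsym : ∀ i j, c i j = c j i) (hPC : PCf c V)
    (hC1 : ∀ v ∈ V, 2 ≤ (exSet c V v).card)
    (hC2 : ∀ u ∈ V, ∀ v ∈ V, u ≠ v → 4 ≤ (exPairSet c V u v).card)
    (hV : V.Nonempty) : False := by
  classical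
  obtain ⟨u, hu, v, hv, huv, hexπu, hexπv⟩ := singleton_exists hsym hPC hC1 hV
  set π := c u v with hπdef
  have hπ : c u v = π := rfl
  have hπcol : π ∈ colF c V := mem_colF.2 ⟨u, hu, v, hv, huv, hπ⟩
  have hπex : π ∈ exSet c V u := mem_filter.2 ⟨hπcol, hexπu⟩
  have hπexv : π ∈ exSet c V v := mem_filter.2 ⟨hπcol, hexπv⟩
  -- second exclusives
  obtain ⟨σu, hσuer⟩ := card_pos.1 (by
    rw [card_erase_of_mem hπex]; have := hC1 u hu; omega :
    0 < ((exSet c V u).erase π).card)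
  have hσuπ : σu ≠ π := (mem_erase.1 hσuer).1
  have hexσu : IsEx c V u σu := (mem_filter.1 (mem_erase.1 hσuer).2).2
  obtain ⟨s, hsV, hsu, hsc⟩ := exSet_witness hsym hu (mem_erase.1 hσuer).2
  have hsv : s ≠ v := fun h => hσuπ (by rw [← hsc, h])
  obtain ⟨σv, hσver⟩ := card_pos.1 (by
    rw [card_erase_of_mem hπexv]; have := hC1 v hv; omega :
    0 < ((exSet c V v).erase π).card)
  have hσvπ : σv ≠ π := (mem_erase.1 hσver).1
  have hexσv : IsEx c V v σv := (mem_filter.1 (mem_erase.1 hσver).2).2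
  obtain ⟨s', hs'V, hs'v, hs'c⟩ := exSet_witness hsym hv (mem_erase.1 hσver).2
  have hs'u : s' ≠ u := fun h => hσvπ (by rw [← hs'c, h, hsym])
  have hσuσv : σu ≠ σv := by
    intro h
    rcases hexσv u hu s hsV hsu.symm (by rw [hsc, h]) with h' | h'
    · exact huv h'
    · exact hsv h'
  -- common base vertex t0
  have hbase : ∃ t0 ∈ V, t0 ≠ u ∧ t0 ≠ v ∧ c u t0 = σu ∧ c v t0 = σv := by
    by_cases hss : s = s'
    · exact ⟨s, hsV, hsu, hsv, hsc, by rw [hss]; exact hs'c⟩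
    · rcases quad_step1 hPC hu hv hsV hs'V huv hsu.symm hs'u.symm hsv.symm hs'v.symm
        hss hπ hexπu hexπv hsc hexσu hσuπ hs'c hexσv hσvπ with h | h
      · exact ⟨s', hs'V, hs'u, hs'v, h, hs'c⟩
      · exact ⟨s, hsV, hsu, hsv, hsc, h⟩
  obtain ⟨t0, ht0V, ht0u, ht0v, hct0u, hct0v⟩ := hbase
  -- fourth pair-exclusive color τ
  obtain ⟨τ, hτer⟩ := card_pos.1 (by
    have h4 := hC2 u hu v hv huv
    have e1 := pred_card_le_card_erase (s := exPairSet c V u v) (a := π)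
    have e2 := pred_card_le_card_erase (s := (exPairSet c V u v).erase π) (a := σu)
    have e3 := pred_card_le_card_erase
      (s := ((exPairSet c V u v).erase π).erase σu) (a := σv)
    omega : 0 < ((((exPairSet c V u v).erase π).erase σu).erase σv).card)
  have hτσv : τ ≠ σv := (mem_erase.1 hτer).1
  have hτσu : τ ≠ σu := (mem_erase.1 (mem_erase.1 hτer).2).1
  have hτπ : τ ≠ π := (mem_erase.1 (mem_erase.1 (mem_erase.1 hτer).2).2).1
  have hτmem : τ ∈ exPairSet c V u v := (mem_erase.1 (mem_erase.1 (mem_erase.1 hτer).2).2).2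
  have hτP : IsExP c V u v τ := (mem_filter.1 hτmem).2
  have hτcol : τ ∈ colF c V := (mem_filter.1 hτmem).1
  -- a witness of τ at u or v
  have hwit : ∃ w ∈ V, w ≠ u ∧ w ≠ v ∧ (c u w = τ ∨ c v w = τ) := by
    obtain ⟨i, hi, j, hj, hij, hcij⟩ := mem_colF.1 hτcol
    rcases hτP i hi j hj hij hcij with h | h | h | h
    · refine ⟨j, hj, fun hh => hij (by omega), fun hh => hτπ ?_, Or.inl ?_⟩
      · rw [← hcij, h, hh]
      · rw [← h]; exact hcij
    · refine ⟨i, hi, fun hh => hij (by omega), fun hh => hτπ ?_, Or.inl ?_⟩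
      · rw [← hcij, hh, h, hsym]
      · rw [hsym, ← h]; exact hcij
    · refine ⟨j, hj, fun hh => hτπ ?_, fun hh => hij (by omega), Or.inr ?_⟩
      · rw [← hcij, hh, h, hsym]
      · rw [← h]; exact hcij
    · refine ⟨i, hi, fun hh => hτπ ?_, fun hh => hij (by omega), Or.inr ?_⟩
      · rw [← hcij, hh, h]
      · rw [hsym, ← h]; exact hcij
  obtain ⟨w0, hw0V, hw0u, hw0v, hw0c⟩ := hwit
  by_cases hboth : ∃ x ∈ V, x ≠ u ∧ x ≠ v ∧ c u x = τ ∧ c v x = τ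
  · -- a common witness
    obtain ⟨x, hxV, hxu, hxv, hxcu, hxcv⟩ := hboth
    have hxt0 : t0 ≠ x := fun h => hτσu (by rw [← hxcu, ← h, hct0u])
    have q1 := quad_step4 hsym hPC hu hv ht0V hxV huv ht0u.symm hxu.symm ht0v.symm
      hxv.symm hxt0 hπ hct0u hexσu hct0v hσuπ hσvπ hσuσv hxcu hτπ hτσu
    have q2 := quad_step4 hsym hPC hv hu ht0V hxV (fun h => huv h.symm) ht0v.symm
      hxv.symm ht0u.symm hxu.symm hxt0 (by rw [hsym]) hct0v hexσv hct0u
      hσvπ hσuπ (fun h => hσuσv h.symm) hxcv hτπ hτσv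
    have hbad : c t0 x = τ → False := by
      intro h
      rcases hτP t0 ht0V x hxV hxt0 h with h' | h' | h' | h'
      · exact ht0u h'
      · exact hxu h'
      · exact ht0v h'
      · exact hxv h'
    rcases q1 with h1 | h1
    · rcases q2 with h2 | h2
      · exact hσuσv (h2.symm.trans h1)
      · exact hbad h2
    · exact hbad h1
  · push_neg at hboth
    rcases hw0c with hcu | hcv
    · -- τ is exclusive to u
      have hvw0 : c v w0 ≠ τ := hboth w0 hw0V hw0u hw0v hcu
      have hexτu : IsEx c V u τ := by
        intro i hi j hj hij hcij
        rcases hτP i hi j hj hij hcij with h | h | h | h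
        · exact Or.inl h
        · exact Or.inr h
        · exfalso
          have hcvj : c v j = τ := by rw [← h]; exact hcij
          have hju : j ≠ u := fun hh => hτπ (by rw [← hcvj, hh, hsym])
          have hjv : j ≠ v := fun hh => hij (by omega)
          have hjw0 : j ≠ w0 := fun hh => hvw0 (by rw [← hh]; exact hcvj)
          have hcuj : c u j ≠ τ := fun hh => (hboth j hj hju hjv hh) hcvj
          exact quad_step3 hPC hu hv hw0V hj huv hw0u.symm hju.symm hw0v.symm hjv.symm
            (fun hh => hjw0 hh.symm) hπ hexπu hexπv hτπ hcu hcvj hcuj hvw0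
        · exfalso
          have hcvi : c v i = τ := by rw [hsym, ← h]; exact hcij
          have hiu : i ≠ u := fun hh => hτπ (by rw [← hcvi, hh, hsym])
          have hiv : i ≠ v := fun hh => hij (by omega)
          have hiw0 : i ≠ w0 := fun hh => hvw0 (by rw [← hh]; exact hcvi)
          have hcui : c u i ≠ τ := fun hh => (hboth i hi hiu hiv hh) hcvi
          exact quad_step3 hPC hu hv hw0V hi huv hw0u.symm hiu.symm hw0v.symm hiv.symm
            (fun hh => hiw0 hh.symm) hπ hexπu hexπv hτπ hcu hcvi hcui hvw0
      have hw0t0 : t0 ≠ w0 := fun h => hτσu (by rw [← hcu, ← h, hct0u])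
      have q1 := quad_step4 hsym hPC hu hv ht0V hw0V huv ht0u.symm hw0u.symm ht0v.symm
        hw0v.symm hw0t0 hπ hct0u hexσu hct0v hσuπ hσvπ hσuσv hcu hτπ hτσu
      rcases q1 with h | h
      · exact ex_ne hexσv ht0V hw0V hw0t0 ht0v hw0v h
      · exact ex_ne hexτu ht0V hw0V hw0t0 ht0u hw0u h
    · -- τ is exclusive to v (mirror)
      have huw0 : c u w0 ≠ τ := fun h => (hboth w0 hw0V hw0u hw0v h) hcv
      have hexτv : IsEx c V v τ := by
        intro i hi j hj hij hcij
        rcases hτP i hi j hj hij hcij with h | h | h | h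
        · exfalso
          have hcuj : c u j = τ := by rw [← h]; exact hcij
          have hjv : j ≠ v := fun hh => hτπ (by rw [← hcuj, hh])
          have hju : j ≠ u := fun hh => hij (by omega)
          have hjw0 : j ≠ w0 := fun hh => huw0 (by rw [← hh]; exact hcuj)
          have hcvj : c v j ≠ τ := hboth j hj hju hjv hcuj
          exact quad_step3 hPC hv hu hw0V hj (fun hh => huv hh.symm) hw0v.symm hjv.symm
            hw0u.symm hju.symm (fun hh => hjw0 hh.symm) (by rw [hsym])
            hexπv hexπu hτπ hcv hcuj hcvj huw0
        · exfalso
          have hcui : c u i = τ := by rw [hsym, ← h]; exact hcij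
          have hiv : i ≠ v := fun hh => hτπ (by rw [← hcui, hh])
          have hiu : i ≠ u := fun hh => hij (by omega)
          have hiw0 : i ≠ w0 := fun hh => huw0 (by rw [← hh]; exact hcui)
          have hcvi : c v i ≠ τ := hboth i hi hiu hiv hcui
          exact quad_step3 hPC hv hu hw0V hi (fun hh => huv hh.symm) hw0v.symm hiv.symm
            hw0u.symm hiu.symm (fun hh => hiw0 hh.symm) (by rw [hsym])
            hexπv hexπu hτπ hcv hcui hcvi huw0
        · exact Or.inl h
        · exact Or.inr h
      have hw0t0 : t0 ≠ w0 := fun h => hτσv (by rw [← hcv, ← h, hct0v])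
      have q2 := quad_step4 hsym hPC hv hu ht0V hw0V (fun h => huv h.symm) ht0v.symm
        hw0v.symm ht0u.symm hw0u.symm hw0t0 (by rw [hsym]) hct0v hexσv hct0u
        hσvπ hσuπ (fun h => hσuσv h.symm) hcv hτπ hτσv
      rcases q2 with h | h
      · exact ex_ne hexσu ht0V hw0V hw0t0 ht0u hw0u h
      · exact ex_ne hexτv ht0V hw0V hw0t0 ht0v hw0v h

end Core

section Main

variable {c : ℕ → ℕ → ℕ}

lemma PCf_mono {V W : Finset ℕ} (hWV : W ⊆ V) (h : PCf c V) : PCf c W :=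
  fun x hx y hy z hz w hw => h x (hWV hx) y (hWV hy) z (hWV hz) w (hWV hw)

lemma colF_small (hsym : ∀ i j, c i j = c j i) {V : Finset ℕ} (h3 : V.card ≤ 3) :
    (colF c V).card ≤ 3 * (V.card - 1) / 2 := by
  interval_cases h : V.card
  · have : V = ∅ := card_eq_zero.1 h
    subst this
    simp [colF]
  · obtain ⟨a, ha⟩ := card_eq_one.1 h
    subst ha
    have : colF c {a} = ∅ := by
      apply eq_empty_of_forall_notMem
      intro t ht
      obtain ⟨i, hi, j, hj, hij, -⟩ := mem_colF.1 ht
      rw [mem_singleton.1 hi, mem_singleton.1 hj] at hij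
      exact hij rfl
    simp [this]
  · obtain ⟨a, b, hab, hV⟩ := card_eq_two.1 h
    subst hV
    have hsub : colF c {a, b} ⊆ {c a b} := by
      intro t ht
      obtain ⟨i, hi, j, hj, hij, hc⟩ := mem_colF.1 ht
      simp only [mem_insert, mem_singleton] at hi hj
      rcases hi with h1 | h1 <;> rcases hj with h2 | h2 <;> subst h1 <;> subst h2 <;>
        simp_all [mem_singleton] <;> rw [← hc, hsym]
    have h1 : (colF c {a, b}).card ≤ 1 := le_trans (card_le_card hsub) (by simp)
    omega
  · obtain ⟨a, b, d, hab, had, hbd, hV⟩ := card_eq_three.1 h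
    subst hV
    have hsub : colF c {a, b, d} ⊆ {c a b, c a d, c b d} := by
      intro t ht
      obtain ⟨i, hi, j, hj, hij, hc⟩ := mem_colF.1 ht
      simp only [mem_insert, mem_singleton] at hi hj ⊢
      rcases hi with h1 | h1 | h1 <;> rcases hj with h2 | h2 | h2 <;> subst h1 <;> subst h2 <;>
        first
          | exact absurd rfl hij
          | exact Or.inl hc.symm
          | exact Or.inl (hc.symm.trans (hsym _ _))
          | exact Or.inr (Or.inl hc.symm)
          | exact Or.inr (Or.inl (hc.symm.trans (hsym _ _)))
          | exact Or.inr (Or.inr hc.symm)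
          | exact Or.inr (Or.inr (hc.symm.trans (hsym _ _)))
    have : (colF c {a, b, d}).card ≤ 3 := by
      refine le_trans (card_le_card hsub) ?_
      refine le_trans (card_insert_le _ _) ?_
      have := card_insert_le (c a d) ({c b d} : Finset ℕ)
      simp only [card_singleton] at this ⊢
      omega
    omega

theorem colF_bound (hsym : ∀ i j, c i j = c j i) :
    ∀ V : Finset ℕ, PCf c V → (colF c V).card ≤ 3 * (V.card - 1) / 2 := by
  intro V
  induction V using Finset.strongInduction with
  | _ V ih =>
    intro hPC
    by_cases h3 : V.card ≤ 3
    · exact colF_small hsym h3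
    · push_neg at h3
      by_contra hcon
      push_neg at hcon
      have hC1 : ∀ v ∈ V, 2 ≤ (exSet c V v).card := by
        intro v hv
        have hIH := ih (V.erase v) (erase_ssubset hv)
          (PCf_mono (erase_subset _ _) hPC)
        have hle := colF_card_le_erase c V v
        rw [card_erase_of_mem hv] at hIH
        omega
      have hC2 : ∀ u ∈ V, ∀ v ∈ V, u ≠ v → 4 ≤ (exPairSet c V u v).card := by
        intro u hu v hv huv
        have hvV' : v ∈ V.erase u := mem_erase.2 ⟨fun h => huv h.symm, hv⟩
        have hss : (V.erase u).erase v ⊂ V :=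
          Finset.ssubset_of_subset_of_ssubset (erase_subset _ _) (erase_ssubset hu)
        have hIH := ih ((V.erase u).erase v) hss
          (PCf_mono ((erase_subset _ _).trans (erase_subset _ _)) hPC)
        have hle := colF_card_le_erase2 c V u v
        rw [card_erase_of_mem hvV', card_erase_of_mem hu] at hIH
        omega
      exact core_contradiction hsym hPC hC1 hC2 (card_pos.1 (by omega))

end Main

section Transfer

/-- the upper bound transferred to `Fin n` colorings -/
theorem colorsUsed_le (n : ℕ) (c : Fin n → Fin n → ℕ) (hsym : ∀ i j, c i j = c j i)
    (hno : ¬ HasPCK4minus n c) : colorsUsed n c ≤ 3 * (n - 1) / 2 := by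
  classical
  set c' : ℕ → ℕ → ℕ := fun i j =>
    if h : i < n ∧ j < n then c ⟨i, h.1⟩ ⟨j, h.2⟩ else 0 with hc'
  have hval : ∀ (i j : Fin n), c' i.1 j.1 = c i j := by
    intro i j
    simp only [hc']
    rw [dif_pos ⟨i.isLt, j.isLt⟩]
  have hsym' : ∀ i j, c' i j = c' j i := by
    intro i j
    simp only [hc']
    split_ifs with h1 h2 h3
    · exact hsym _ _
    · exact absurd ⟨h1.2, h1.1⟩ h2
    · exact absurd ⟨h3.2, h3.1⟩ h1
    · rfl
  have hPC : PCf c' (Finset.range n) := by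
    intro x hx y hy z hz w hw dxy dxz dxw dyz dyw dzw e1 e2 e3 e4 e5 e6 e7 e8
    rw [Finset.mem_range] at hx hy hz hw
    apply hno
    refine ⟨⟨x, hx⟩, ⟨y, hy⟩, ⟨z, hz⟩, ⟨w, hw⟩, ?_, ?_, ?_, ?_, ?_, ?_,
      ?_, ?_, ?_, ?_, ?_, ?_, ?_, ?_⟩ <;>
      first
        | exact fun h => (by omega : False) |>.elim
        | simp only [← hval]
        | skip
    all_goals first
      | (exact fun h => dxy (congrArg Fin.val h))
      | (exact fun h => dxz (congrArg Fin.val h))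
      | (exact fun h => dxw (congrArg Fin.val h))
      | (exact fun h => dyz (congrArg Fin.val h))
      | (exact fun h => dyw (congrArg Fin.val h))
      | (exact fun h => dzw (congrArg Fin.val h))
      | (rw [← hval, ← hval] at *; assumption)
      | (simpa only [hval] using e1)
      | (simpa only [hval] using e2)
      | (simpa only [hval] using e3)
      | (simpa only [hval] using e4)
      | (simpa only [hval] using e5)
      | (simpa only [hval] using e6)
      | (simpa only [hval] using e7)
      | (simpa only [hval] using e8)
  have himg : ((Finset.univ.filter fun p : Fin n × Fin n => p.1 ≠ p.2).image
      fun p => c p.1 p.2) = colF c' (Finset.range n) := by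
    apply Finset.ext
    intro t
    constructor
    · intro ht
      obtain ⟨p, hp, hpt⟩ := Finset.mem_image.1 ht
      have hne : p.1 ≠ p.2 := (Finset.mem_filter.1 hp).2
      refine mem_colF.2 ⟨p.1.1, Finset.mem_range.2 p.1.isLt, p.2.1,
        Finset.mem_range.2 p.2.isLt, fun h => hne (Fin.ext h), ?_⟩
      rw [hval]
      exact hpt
    · intro ht
      obtain ⟨i, hi, j, hj, hij, hc⟩ := mem_colF.1 ht
      rw [Finset.mem_range] at hi hj
      refine Finset.mem_image.2 ⟨(⟨i, hi⟩, ⟨j, hj⟩), ?_, ?_⟩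
      · exact Finset.mem_filter.2 ⟨Finset.mem_univ _, fun h => hij (congrArg Fin.val h)⟩
      · show c (⟨i, hi⟩ : Fin n) (⟨j, hj⟩ : Fin n) = t
        rw [← hval]
        exact hc
  have := colF_bound hsym' (Finset.range n) hPC
  rw [Finset.card_range] at this
  unfold colorsUsed
  rw [himg]
  exact this

end Transfer


/-- For every `n ≥ 4`, the maximum number of colors in an edge-coloring of `K_n`
with no properly colored copy of `K_4` minus an edge equals `⌊3(n-1)/2⌋`. -/
theorem pr_K4minus (n : ℕ) (hn : 4 ≤ n) :
    IsGreatest {m : ℕ | ∃ c : Fin n → Fin n → ℕ, (∀ i j, c i j = c j i) ∧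
      ¬ HasPCK4minus n c ∧ colorsUsed n c = m} (3 * (n - 1) / 2) := by
  constructor
  · exact ⟨fun i j => myc n i.1 j.1, fun i j => myc_symm n i.1 j.1, myc_noPC n,
      myc_colorsUsed n (by omega)⟩
  · rintro m ⟨c, hsym, hno, rfl⟩
    exact colorsUsed_le n c hsym hno
end

section
/- For every n ≥ 5, there exists an edge-coloring of K_n with at least 7n/4 + O(1) colors (precisely, at least 7(n - 4)/4 colors) containing no properly colored copy of K_{2,3}. -/
/-- The edge-colored `K_n` contains a properly colored copy of `K_{2,3}` with parts
`{a, b}` and `{x, y, z}`: adjacent edges of the copy receive distinct colors. -/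
def HasPCK23 (n : ℕ) (c : Fin n → Fin n → ℕ) : Prop :=
  ∃ a b x y z : Fin n, a ≠ b ∧ a ≠ x ∧ a ≠ y ∧ a ≠ z ∧ b ≠ x ∧ b ≠ y ∧ b ≠ z ∧
    x ≠ y ∧ x ≠ z ∧ y ≠ z ∧
    c a x ≠ c a y ∧ c a x ≠ c a z ∧ c a y ≠ c a z ∧
    c b x ≠ c b y ∧ c b x ≠ c b z ∧ c b y ≠ c b z ∧
    c a x ≠ c b x ∧ c a y ≠ c b y ∧ c a z ≠ c b z

/-- The block construction coloring: within a block (of 4 consecutive vertices),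
rainbow with globally fresh colors; between blocks, the color of the smaller block. -/
def myCol (n i j : ℕ) : ℕ :=
  if i / 4 = j / 4 then n + min i j + n * max i j else min (i / 4) (j / 4)

lemma myCol_symm (n i j : ℕ) : myCol n i j = myCol n j i := by
  unfold myCol
  rcases eq_or_ne (i / 4) (j / 4) with h | h
  · rw [if_pos h, if_pos h.symm, min_comm, max_comm]
  · rw [if_neg h, if_neg h.symm, min_comm]

lemma myCol_between {n i j : ℕ} (h : i / 4 ≠ j / 4) :
    myCol n i j = min (i / 4) (j / 4) := if_neg h

/-- The case `a/4 < b/4` of the no-PC-K23 argument. -/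
lemma noPC_aux (n a b x y z : ℕ) (hAC : a / 4 < b / 4)
    (hay' : myCol n a x ≠ myCol n a y) (haz' : myCol n a x ≠ myCol n a z)
    (hayz : myCol n a y ≠ myCol n a z)
    (hbxy : myCol n b x ≠ myCol n b y) (hbxz : myCol n b x ≠ myCol n b z)
    (hbyz : myCol n b y ≠ myCol n b z)
    (hx : myCol n a x ≠ myCol n b x) (hy : myCol n a y ≠ myCol n b y)
    (hz : myCol n a z ≠ myCol n b z) : False := by
  -- no w lies in a block below a's block
  have low : ∀ w, myCol n a w ≠ myCol n b w → ¬ (w / 4 < a / 4) := by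
    intro w hw hlt
    have h1 : a / 4 ≠ w / 4 := by omega
    have h2 : b / 4 ≠ w / 4 := by omega
    rw [myCol_between h1, myCol_between h2] at hw
    omega
  have lx := low x hx
  have ly := low y hy
  have lz := low z hz
  -- if w is outside a's block then edge a-w gets color a/4
  have keya : ∀ w, ¬ (w / 4 < a / 4) → w / 4 ≠ a / 4 → myCol n a w = a / 4 := by
    intro w h1 h2
    rw [myCol_between (fun h => h2 h.symm)]
    omega
  -- if w is in a's block then edge b-w gets color a/4
  have keyb : ∀ w, w / 4 = a / 4 → myCol n b w = a / 4 := by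
    intro w h1
    have : b / 4 ≠ w / 4 := by omega
    rw [myCol_between this]
    omega
  by_cases hx4 : x / 4 = a / 4 <;> by_cases hy4 : y / 4 = a / 4 <;>
    by_cases hz4 : z / 4 = a / 4
  · exact hbxy (by rw [keyb x hx4, keyb y hy4])
  · exact hbxy (by rw [keyb x hx4, keyb y hy4])
  · exact hbxz (by rw [keyb x hx4, keyb z hz4])
  · exact hayz (by rw [keya y ly hy4, keya z lz hz4])
  · exact hbyz (by rw [keyb y hy4, keyb z hz4])
  · exact haz' (by rw [keya x lx hx4, keya z lz hz4])
  · exact hay' (by rw [keya x lx hx4, keya y ly hy4])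
  · exact hay' (by rw [keya x lx hx4, keya y ly hy4])

/-- The construction has no properly colored K_{2,3}. -/
lemma noPC (n : ℕ) : ¬ HasPCK23 n (fun i j => myCol n i j) := by
  rintro ⟨a, b, x, y, z, hab, hax, hay, haz, hbx, hby, hbz, hxy, hxz, hyz,
    h1, h2, h3, h4, h5, h6, h7, h8, h9⟩
  simp only at h1 h2 h3 h4 h5 h6 h7 h8 h9
  rcases lt_trichotomy ((a : ℕ) / 4) ((b : ℕ) / 4) with hlt | heq | hgt
  · exact noPC_aux n a b x y z hlt h1 h2 h3 h4 h5 h6 h7 h8 h9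
  · -- a and b in the same block: all of x,y,z must be in that block, pigeonhole
    have same : ∀ w : Fin n, myCol n a w ≠ myCol n b w → (w : ℕ) / 4 = (a : ℕ) / 4 := by
      intro w hw
      by_contra hne
      have h1' : (a : ℕ) / 4 ≠ (w : ℕ) / 4 := fun h => hne h.symm
      have h2' : (b : ℕ) / 4 ≠ (w : ℕ) / 4 := fun h => hne (heq.trans h).symm
      rw [myCol_between h1', myCol_between h2', heq] at hw
      exact hw rfl
    have sx := same x h7
    have sy := same y h8
    have sz := same z h9
    have nab : (a : ℕ) ≠ (b : ℕ) := fun h => hab (Fin.val_injective h)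
    have nax : (a : ℕ) ≠ (x : ℕ) := fun h => hax (Fin.val_injective h)
    have nay : (a : ℕ) ≠ (y : ℕ) := fun h => hay (Fin.val_injective h)
    have naz : (a : ℕ) ≠ (z : ℕ) := fun h => haz (Fin.val_injective h)
    have nbx : (b : ℕ) ≠ (x : ℕ) := fun h => hbx (Fin.val_injective h)
    have nby : (b : ℕ) ≠ (y : ℕ) := fun h => hby (Fin.val_injective h)
    have nbz : (b : ℕ) ≠ (z : ℕ) := fun h => hbz (Fin.val_injective h)
    have nxy : (x : ℕ) ≠ (y : ℕ) := fun h => hxy (Fin.val_injective h)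
    have nxz : (x : ℕ) ≠ (z : ℕ) := fun h => hxz (Fin.val_injective h)
    have nyz : (y : ℕ) ≠ (z : ℕ) := fun h => hyz (Fin.val_injective h)
    omega
  · exact noPC_aux n b a x y z hgt h4 h5 h6 h1 h2 h3 h7.symm h8.symm h9.symm

/-- first coordinate of the `t`-th pair inside a block -/
def uu (t : ℕ) : ℕ := [0, 0, 0, 1, 1, 2].getD t 0

/-- second coordinate of the `t`-th pair inside a block -/
def vv (t : ℕ) : ℕ := [1, 2, 3, 2, 3, 3].getD t 0

lemma uv_facts : ∀ t < 6, uu t < vv t ∧ vv t < 4 := by decide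

lemma uv_inj : ∀ t1 < 6, ∀ t2 < 6, uu t1 = uu t2 → vv t1 = vv t2 → t1 = t2 := by decide

/-- An explicit family of `7*(n/4) - 1` colors all used by the coloring. -/
def Fcol (n q m : ℕ) : ℕ :=
  if m < q - 1 then m
  else
    n + (4 * ((m - (q - 1)) / 6) + uu ((m - (q - 1)) % 6))
      + n * (4 * ((m - (q - 1)) / 6) + vv ((m - (q - 1)) % 6))

/-- For every `n ≥ 5`, there is an edge-coloring of `K_n` with at least `7(n-4)/4`
colors and no properly colored copy of `K_{2,3}`. -/
theorem pr_K23_lower (n : ℕ) (hn : 5 ≤ n) :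
    ∃ c : Fin n → Fin n → ℕ, (∀ i j, c i j = c j i) ∧ ¬ HasPCK23 n c ∧
      7 * (n - 4) / 4 ≤ colorsUsed n c := by
  refine ⟨fun i j => myCol n i j, fun i j => myCol_symm n i j, noPC n, ?_⟩
  set q := n / 4 with hq
  have hq1 : 1 ≤ q := by omega
  have h4q : 4 * q ≤ n := by omega
  have hbound : 7 * (n - 4) / 4 ≤ 7 * q - 1 := by omega
  refine le_trans hbound ?_
  -- show 7q - 1 ≤ colorsUsed
  unfold colorsUsed
  have := Finset.card_le_card_of_injOn (f := Fcol n q)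
    (s := Finset.range (7 * q - 1))
    (t := (Finset.univ.filter fun p : Fin n × Fin n => p.1 ≠ p.2).image
      fun p => myCol n p.1 p.2)
    ?_ ?_
  · simpa using this
  · -- membership
    intro m hm
    rw [Finset.mem_coe, Finset.mem_range] at hm
    rw [Finset.mem_coe, Finset.mem_image]
    by_cases hlt : m < q - 1
    · -- between-block color m from pair (4m, 4m+4)
      have hi : 4 * m < n := by omega
      have hj : 4 * m + 4 < n := by omega
      refine ⟨(⟨4 * m, hi⟩, ⟨4 * m + 4, hj⟩), ?_, ?_⟩
      · simp only [Finset.mem_filter, Finset.mem_univ, true_and]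
        intro h
        have := congrArg Fin.val h
        simp at this
      · have hne : (4 * m) / 4 ≠ (4 * m + 4) / 4 := by omega
        show myCol n (4 * m) (4 * m + 4) = Fcol n q m
        rw [myCol_between hne, Fcol, if_pos hlt]
        omega
    · -- within-block color
      set m' := m - (q - 1) with hm'
      have hm'6 : m' < 6 * q := by omega
      set k := m' / 6 with hk
      set t := m' % 6 with ht
      have ht6 : t < 6 := Nat.mod_lt _ (by omega)
      obtain ⟨huv, hv4⟩ := uv_facts t ht6
      have hkq : k < q := by omega
      set i := 4 * k + uu t with hi
      set j := 4 * k + vv t with hj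
      have hiv : i < n := by omega
      have hjv : j < n := by omega
      refine ⟨(⟨i, hiv⟩, ⟨j, hjv⟩), ?_, ?_⟩
      · simp only [Finset.mem_filter, Finset.mem_univ, true_and]
        intro h
        have := congrArg Fin.val h
        simp only [Fin.val_mk] at this
        omega
      · have hsame : i / 4 = j / 4 := by omega
        show myCol n i j = Fcol n q m
        rw [myCol, if_pos hsame, Fcol, if_neg hlt]
        have h1 : min i j = i := by omega
        have h2 : max i j = j := by omega
        rw [h1, h2]
  · -- injectivity
    intro m1 hm1 m2 hm2 heq
    simp only [Finset.coe_range, Set.mem_Iio] at hm1 hm2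
    unfold Fcol at heq
    by_cases h1 : m1 < q - 1 <;> by_cases h2 : m2 < q - 1
    · rwa [if_pos h1, if_pos h2] at heq
    · rw [if_pos h1, if_neg h2] at heq; omega
    · rw [if_neg h1, if_pos h2] at heq; omega
    · rw [if_neg h1, if_neg h2] at heq
      set a1 := m1 - (q - 1) with ha1
      set a2 := m2 - (q - 1) with ha2
      have ha16 : a1 < 6 * q := by omega
      have ha26 : a2 < 6 * q := by omega
      have ht1 : a1 % 6 < 6 := Nat.mod_lt _ (by omega)
      have ht2 : a2 % 6 < 6 := Nat.mod_lt _ (by omega)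
      obtain ⟨huv1, hv41⟩ := uv_facts _ ht1
      obtain ⟨huv2, hv42⟩ := uv_facts _ ht2
      set i1 := 4 * (a1 / 6) + uu (a1 % 6) with hi1
      set j1 := 4 * (a1 / 6) + vv (a1 % 6) with hj1
      set i2 := 4 * (a2 / 6) + uu (a2 % 6) with hi2
      set j2 := 4 * (a2 / 6) + vv (a2 % 6) with hj2
      have hi1n : i1 < n := by omega
      have hi2n : i2 < n := by omega
      -- from n + i1 + n*j1 = n + i2 + n*j2 deduce i1 = i2 and j1 = j2
      have heq2 : i1 + n * j1 = i2 + n * j2 := by omega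
      have hmod : (i1 + n * j1) % n = (i2 + n * j2) % n := by rw [heq2]
      rw [Nat.add_mul_mod_self_left, Nat.add_mul_mod_self_left,
        Nat.mod_eq_of_lt hi1n, Nat.mod_eq_of_lt hi2n] at hmod
      have hii : i1 = i2 := hmod
      have hjj : j1 = j2 := by
        have : n * j1 = n * j2 := by omega
        exact Nat.eq_of_mul_eq_mul_left (by omega) this
      -- recover block and index
      have hkk : a1 / 6 = a2 / 6 := by omega
      have huuu : uu (a1 % 6) = uu (a2 % 6) := by omega
      have hvvv : vv (a1 % 6) = vv (a2 % 6) := by omega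
      have htt : a1 % 6 = a2 % 6 := uv_inj _ ht1 _ ht2 huuu hvvv
      omega
end

section
/- In any edge-coloring of K_n (n ≥ 4) containing a rainbow triangle with a pendant edge (a rainbow copy of K_3 with one extra edge of a fourth distinct color attached at a triangle vertex), if every vertex v has at least 2 colors that are starred at v, then K_n contains a properly colored 4-cycle. -/
/-- In the edge-coloring `c` of `K_n`, the color `a` is starred at the vertex `x`:
`a` appears on some edge, and every edge of color `a` is incident with `x`
(so the edges of color `a` form a star centered at `x`). -/
def Starred (n : ℕ) (c : Fin n → Fin n → ℕ) (a : ℕ) (x : Fin n) : Prop :=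
  (∃ i j : Fin n, i ≠ j ∧ c i j = a) ∧
    ∀ i j : Fin n, i ≠ j → c i j = a → i = x ∨ j = x

theorem hasPC4 {n : ℕ} (c : Fin n → Fin n → ℕ) (a b d e : Fin n)
    (hab : a ≠ b) (had : a ≠ d) (hae : a ≠ e) (hbd : b ≠ d) (hbe : b ≠ e) (hde : d ≠ e)
    (k1 : c a b ≠ c b d) (k2 : c b d ≠ c d e) (k3 : c d e ≠ c e a) (k4 : c e a ≠ c a b) :
    HasPCCycle n 4 c := by
  refine ⟨![a, b, d, e], ?_, ?_⟩
  · intro i j hij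
    fin_cases i <;> fin_cases j <;> simp_all
  · intro i
    fin_cases i <;> simpa using ‹_›

/-- If an edge-coloring of `K_n` (`n ≥ 4`) contains a rainbow triangle `xyz` with a
pendant edge `xu` (four edges with four pairwise distinct colors), and every vertex
has at least two colors starred at it, then `K_n` contains a properly colored `C_4`. -/
theorem pc_C4_of_rainbow_triangle_pendant (n : ℕ) (hn : 4 ≤ n)
    (c : Fin n → Fin n → ℕ) (hsym : ∀ i j, c i j = c j i)
    (x y z u : Fin n) (hxy : x ≠ y) (hxz : x ≠ z) (hxu : x ≠ u)
    (hyz : y ≠ z) (hyu : y ≠ u) (hzu : z ≠ u)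
    (h1 : c x y ≠ c y z) (h2 : c x y ≠ c x z) (h3 : c x y ≠ c x u)
    (h4 : c y z ≠ c x z) (h5 : c y z ≠ c x u) (h6 : c x z ≠ c x u)
    (hstar : ∀ v : Fin n, ∃ a b : ℕ, a ≠ b ∧ Starred n c a v ∧ Starred n c b v) :
    HasPCCycle n 4 c := by
  -- any edge not incident with v avoids any color starred at v
  have starNe : ∀ (a : ℕ) (v i j : Fin n), Starred n c a v → i ≠ j → i ≠ v → j ≠ v →
      c i j ≠ a := by
    intro a v i j hs hij hi hj h
    rcases hs.2 i j hij h with h' | h'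
    · exact hi h'
    · exact hj h'
  -- a color starred at v appears on an edge at v
  have starEdge : ∀ (a : ℕ) (v : Fin n), Starred n c a v → ∃ p, p ≠ v ∧ c v p = a := by
    intro a v hs
    obtain ⟨i, j, hij, hc⟩ := hs.1
    rcases hs.2 i j hij hc with h | h
    · subst h
      exact ⟨j, Ne.symm hij, hc⟩
    · subst h
      exact ⟨i, hij, (hsym _ i).trans hc⟩
  by_cases hsB : c z u = c y z
  · by_cases htB : c y u = c y z
    · -- Case I: monochromatic triangle y z u
      obtain ⟨a, b, hab, ha, hb⟩ := hstar u
      -- pick a starred color at u different from c x u (and automatically ≠ c y z)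
      obtain ⟨a, ha, haD⟩ : ∃ a, Starred n c a u ∧ a ≠ c x u := by
        by_cases h : a = c x u
        · exact ⟨b, hb, fun hb' => hab (h.trans hb'.symm)⟩
        · exact ⟨a, ha, h⟩
      have haB : a ≠ c y z := fun h =>
        starNe a u y z ha hyz hyu hzu h.symm
      obtain ⟨p, hpu, hcp⟩ := starEdge a u ha
      have hpx : p ≠ x := fun h => haD (by rw [← hcp, h, hsym])
      have hpy : p ≠ y := fun h => haB (by rw [← hcp, h, hsym, htB])
      have hpz : p ≠ z := fun h => haB (by rw [← hcp, h, hsym, hsB])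
      have hxpa : c x p ≠ a := starNe a u x p ha (Ne.symm hpx) hxu hpu
      have hpua : c p u = a := (hsym p u).trans hcp
      by_cases hm : c x p = c x y
      · -- cycle (z, x, p, u)
        refine hasPC4 c z x p u (Ne.symm hxz) (Ne.symm hpz) hzu (Ne.symm hpx) hxu hpu
          ?_ ?_ ?_ ?_
        · rw [hsym z x, hm]; exact fun h => h2 h.symm
        · rw [hpua]; exact hxpa
        · rw [hpua, hsym u z, hsB]; exact haB
        · rw [hsym u z, hsB, hsym z x]; exact h4
      · -- cycle (y, x, p, u)
        refine hasPC4 c y x p u (Ne.symm hxy) (Ne.symm hpy) hyu (Ne.symm hpx) hxu hpu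
          ?_ ?_ ?_ ?_
        · rw [hsym y x]; exact fun h => hm h.symm
        · rw [hpua]; exact hxpa
        · rw [hpua, hsym u y, htB]; exact haB
        · rw [hsym u y, htB, hsym y x]; exact h1.symm
    · by_cases htD : c y u = c x u
      · by_cases hsD : c z u = c x u
        · -- impossible: c z u = c y z and c z u = c x u but c y z ≠ c x u
          exact absurd (hsB.symm.trans hsD) h5
        · -- mixed case: t = D, s = B ; cycle (x, y, u, z)
          refine hasPC4 c x y u z hxy hxu hxz hyu hyz (Ne.symm hzu) ?_ ?_ ?_ ?_
          · rw [htD]; exact h3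
          · rw [htD, hsym u z, hsB]; exact fun h => h5 h.symm
          · rw [hsym u z, hsB, hsym z x]; exact h4
          · rw [hsym z x]; exact fun h => h2 h.symm
      · -- cycle (x, z, y, u) : t ∉ {B, D}
        refine hasPC4 c x z y u hxz hxy hxu hyz.symm hzu hyu ?_ ?_ ?_ ?_
        · rw [hsym z y]; exact h4.symm
        · rw [hsym z y]; exact fun h => htB h.symm
        · rw [hsym u x]; exact htD
        · rw [hsym u x]; exact h6.symm
  · by_cases hsD : c z u = c x u
    · by_cases htD : c y u = c x u
      · -- Case II: star of color D = c x u at u towards x, y, z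
        obtain ⟨a, b, hab, ha, hb⟩ := hstar u
        obtain ⟨a, ha, haD⟩ : ∃ a, Starred n c a u ∧ a ≠ c x u := by
          by_cases h : a = c x u
          · exact ⟨b, hb, fun hb' => hab (h.trans hb'.symm)⟩
          · exact ⟨a, ha, h⟩
        obtain ⟨p, hpu, hcp⟩ := starEdge a u ha
        have hpx : p ≠ x := fun h => haD (by rw [← hcp, h, hsym])
        have hpy : p ≠ y := fun h => haD (by rw [← hcp, h, hsym, htD])
        have hpz : p ≠ z := fun h => haD (by rw [← hcp, h, hsym, hsD])
        have hpza : c p z ≠ a := starNe a u p z ha (fun h => hpz h) hpu hzu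
        have hupa : c u p = a := hcp
        by_cases hr : c p z = c y z
        · -- cycle (x, u, p, z)
          refine hasPC4 c x u p z hxu hpx.symm hxz (Ne.symm hpu) (Ne.symm hzu) hpz
            ?_ ?_ ?_ ?_
          · rw [hupa]; exact fun h => haD h.symm
          · rw [hupa]; exact fun h => hpza h.symm
          · rw [hr, hsym z x]; exact h4
          · rw [hsym z x]; exact h6
        · -- cycle (y, u, p, z)
          refine hasPC4 c y u p z hyu hpy.symm hyz (Ne.symm hpu) (Ne.symm hzu) hpz
            ?_ ?_ ?_ ?_
          · rw [hupa, htD]; exact fun h => haD h.symm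
          · rw [hupa]; exact fun h => hpza h.symm
          · rw [hsym z y]; exact hr
          · rw [hsym z y, htD]; exact h5
      · by_cases htB : c y u = c y z
        · -- mixed: s = D, t = B ; cycle (x, y, u, z)
          refine hasPC4 c x y u z hxy hxu hxz hyu hyz (Ne.symm hzu) ?_ ?_ ?_ ?_
          · rw [htB]; exact h1
          · rw [htB, hsym u z, hsD]; exact h5
          · rw [hsym u z, hsD, hsym z x]; exact h6.symm
          · rw [hsym z x]; exact fun h => h2 h.symm
        · -- cycle (x, z, y, u)
          refine hasPC4 c x z y u hxz hxy hxu hyz.symm hzu hyu ?_ ?_ ?_ ?_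
          · rw [hsym z y]; exact h4.symm
          · rw [hsym z y]; exact fun h => htB h.symm
          · rw [hsym u x]; exact htD
          · rw [hsym u x]; exact h6.symm
    · -- cycle (x, y, z, u) : s ∉ {B, D}
      refine hasPC4 c x y z u hxy hxz hxu hyz hyu hzu ?_ ?_ ?_ ?_
      · exact h1
      · exact fun h => hsB h.symm
      · rw [hsym u x]; exact hsD
      · rw [hsym u x]; exact h3.symm
end

section
/- Let c be an edge-coloring of K_n with no properly colored path on l vertices, and let P = v_1…v_s be a properly colored path of maximum order s ≤ l - 1. Let G be a spanning subgraph of K_n obtained by selecting, for each color not appearing on P, exactly one edge of that color. Then for any vertex u outside P with no edge of G joining u to another vertex outside P, and any three consecutive vertices v_i, v_{i+1}, v_{i+2} of P, at most one of the edges u v_i, u v_{i+1}, u v_{i+2} belongs to G. -/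
/-- `G` is a representing subgraph of the colors of `c` not appearing on the properly
colored path `p` on `s` vertices: every edge of `G` has a color not on `p`, `G` has
exactly one edge of each of its colors, and every color not on `p` appears on an
edge of `G`. -/
def RepresentingSubgraph (n s : ℕ) (c : Fin n → Fin n → ℕ) (p : Fin s → Fin n)
    (G : SimpleGraph (Fin n)) : Prop :=
  (∀ i j : Fin n, G.Adj i j → ∀ k : ℕ, (h : k + 1 < s) →
      c (p ⟨k, by omega⟩) (p ⟨k + 1, h⟩) ≠ c i j) ∧
  (∀ i j k l : Fin n, G.Adj i j → G.Adj k l → c i j = c k l →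
      s(i, j) = s(k, l)) ∧
  (∀ i j : Fin n, i ≠ j →
      (∀ k : ℕ, (h : k + 1 < s) → c (p ⟨k, by omega⟩) (p ⟨k + 1, h⟩) ≠ c i j) →
      ∃ a b : Fin n, G.Adj a b ∧ c a b = c i j)

/-- Auxiliary: inserting a vertex `u` at position `m` of a properly colored path
on `s` vertices yields a properly colored path on `s+1` vertices, provided the
three local color conditions at the insertion point hold. -/
theorem pc_insert (n s : ℕ) (c : Fin n → Fin n → ℕ)
    (p : Fin s → Fin n) (hinj : Function.Injective p)
    (u : Fin n) (hu : u ∉ Set.range p)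
    (m : ℕ) (hm : m ≤ s)
    (hpc : ∀ i : ℕ, (h : i + 2 < s) →
      c (p ⟨i, by omega⟩) (p ⟨i + 1, by omega⟩) ≠ c (p ⟨i + 1, by omega⟩) (p ⟨i + 2, h⟩))
    (hA : ∀ a : ℕ, (h : a + 2 ≤ s) → a + 2 = m →
      c (p ⟨a, by omega⟩) (p ⟨a + 1, by omega⟩) ≠ c (p ⟨a + 1, by omega⟩) u)
    (hB : ∀ a : ℕ, (h : a + 2 ≤ s) → a + 1 = m →
      c (p ⟨a, by omega⟩) u ≠ c u (p ⟨a + 1, by omega⟩))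
    (hC : ∀ a : ℕ, (h : a + 2 ≤ s) → a = m →
      c u (p ⟨a, by omega⟩) ≠ c (p ⟨a, by omega⟩) (p ⟨a + 1, by omega⟩)) :
    HasPCPath n (s + 1) c := by
  refine ⟨fun k => if h : (k : ℕ) < m then p ⟨k, by omega⟩ else
      if h2 : (k : ℕ) = m then u else p ⟨(k : ℕ) - 1, by omega⟩, ?_, ?_⟩
  · intro a b hab
    apply Fin.ext
    dsimp only at hab
    split_ifs at hab <;>
      first
        | omega
        | (have := hinj hab; rw [Fin.mk.injEq] at this; omega)
        | (exact absurd (Set.mem_range.mpr ⟨_, hab.symm⟩) hu)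
        | (exact absurd (Set.mem_range.mpr ⟨_, hab⟩) hu)
  · intro j hj
    dsimp only
    split_ifs with h1 h2 h3 h4 h5 h6 <;> try omega
    · exact hpc j (by omega)
    · exact hA j (by omega) (by omega)
    · exact hB j (by omega) (by omega)
    · exact hC j (by omega) (by omega)
    · simp only [show j + 1 - 1 = j - 1 + 1 from by omega,
        show j + 2 - 1 = j - 1 + 2 from by omega]
      exact hpc (j - 1) (by omega)


/-- Let `c` be an edge-coloring of `K_n` with no properly colored `P_l`, let
`p = v_1 … v_s` (`s ≤ l - 1`) be a properly colored path of maximum order, and let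
`G` be a representing subgraph of the colors not on `p`. If `u` lies outside `p`
and has no `G`-edge to any other vertex outside `p`, then for any three consecutive
vertices `v_i, v_{i+1}, v_{i+2}` of `p`, at most one of the edges `u v_i`,
`u v_{i+1}`, `u v_{i+2}` belongs to `G`. -/
theorem at_most_one_of_three_consecutive (n l s : ℕ)
    (c : Fin n → Fin n → ℕ) (hsym : ∀ i j, c i j = c j i)
    (hno : ¬ HasPCPath n l c) (hsl : s ≤ l - 1)
    (p : Fin s → Fin n) (hinj : Function.Injective p)
    (hpc : ∀ i : ℕ, (h : i + 2 < s) →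
      c (p ⟨i, by omega⟩) (p ⟨i + 1, by omega⟩) ≠
        c (p ⟨i + 1, by omega⟩) (p ⟨i + 2, h⟩))
    (hmax : ∀ t : ℕ, s < t → ¬ HasPCPath n t c)
    (G : SimpleGraph (Fin n)) (hG : RepresentingSubgraph n s c p G)
    (u : Fin n) (hu : u ∉ Set.range p)
    (hiso : ∀ w : Fin n, w ∉ Set.range p → ¬ G.Adj u w)
    (i : ℕ) (h2 : i + 2 < s) :
    ¬ (G.Adj u (p ⟨i, by omega⟩) ∧ G.Adj u (p ⟨i + 1, by omega⟩)) ∧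
    ¬ (G.Adj u (p ⟨i, by omega⟩) ∧ G.Adj u (p ⟨i + 2, h2⟩)) ∧
    ¬ (G.Adj u (p ⟨i + 1, by omega⟩) ∧ G.Adj u (p ⟨i + 2, h2⟩)) := by
  obtain ⟨hcol, huniq, -⟩ := hG
  have hoff : ∀ x, G.Adj u x → ∀ k : ℕ, (h : k + 1 < s) →
      c (p ⟨k, by omega⟩) (p ⟨k + 1, h⟩) ≠ c u x := fun x hx => hcol u x hx
  have hdiff : ∀ x y : Fin n, G.Adj u x → G.Adj u y → x ≠ y → c u x ≠ c u y := by
    intro x y hx hy hxy hc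
    have h := huniq u x u y hx hy hc
    rw [Sym2.eq_iff] at h
    rcases h with ⟨-, h⟩ | ⟨-, h⟩
    · exact hxy h
    · exact hx.ne' h
  have hpne : ∀ a b : ℕ, (ha : a < s) → (hb : b < s) → a ≠ b →
      p ⟨a, ha⟩ ≠ p ⟨b, hb⟩ := by
    intro a b ha hb hab hh
    have := hinj hh; rw [Fin.mk.injEq] at this; omega
  refine ⟨?_, ?_, ?_⟩
  · rintro ⟨ha, hb⟩
    refine hmax (s + 1) (by omega)
      (pc_insert n s c p hinj u hu (i + 1) (by omega) hpc ?_ ?_ ?_)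
    · intro a h he
      obtain rfl : i = a + 1 := by omega
      exact fun hcon => hoff _ ha a (by omega) (hcon.trans (hsym _ u))
    · intro a h he
      obtain rfl : i = a := by omega
      exact fun hcon => hdiff _ _ ha hb (hpne i (i + 1) (by omega) (by omega) (by omega))
        ((hsym u _).trans hcon)
    · intro a h he
      obtain rfl : a = i + 1 := he
      exact (hoff _ hb (i + 1) (by omega)).symm
  · rintro ⟨ha, hb⟩
    by_cases hx1 : c u (p ⟨i + 1, by omega⟩) = c u (p ⟨i, by omega⟩)
    · refine hmax (s + 1) (by omega)
        (pc_insert n s c p hinj u hu (i + 2) (by omega) hpc ?_ ?_ ?_)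
      · intro a h he
        obtain rfl : i = a := by omega
        exact fun hcon => hoff _ ha i (by omega) ((hcon.trans (hsym _ u)).trans hx1)
      · intro a h he
        obtain rfl : a = i + 1 := by omega
        intro hcon
        exact hdiff _ _ ha hb (hpne i (i + 2) (by omega) (by omega) (by omega))
          (hx1.symm.trans ((hsym u _).trans hcon))
      · intro a h he
        obtain rfl : a = i + 2 := he
        exact (hoff _ hb (i + 2) (by omega)).symm
    · by_cases hx2 : c u (p ⟨i + 1, by omega⟩) = c (p ⟨i + 1, by omega⟩) (p ⟨i + 2, h2⟩)
      · refine hmax (s + 1) (by omega)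
          (pc_insert n s c p hinj u hu (i + 2) (by omega) hpc ?_ ?_ ?_)
        · intro a h he
          obtain rfl : i = a := by omega
          intro hcon
          exact hpc i h2 ((hcon.trans (hsym _ u)).trans hx2)
        · intro a h he
          obtain rfl : a = i + 1 := by omega
          intro hcon
          exact hoff _ hb (i + 1) (by omega) (hx2.symm.trans ((hsym u _).trans hcon))
        · intro a h he
          obtain rfl : a = i + 2 := he
          exact (hoff _ hb (i + 2) (by omega)).symm
      · refine hmax (s + 1) (by omega)
          (pc_insert n s c p hinj u hu (i + 1) (by omega) hpc ?_ ?_ ?_)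
        · intro a h he
          obtain rfl : i = a + 1 := by omega
          exact fun hcon => hoff _ ha a (by omega) (hcon.trans (hsym _ u))
        · intro a h he
          obtain rfl : i = a := by omega
          exact fun hcon => hx1 (hcon.symm.trans (hsym _ u))
        · intro a h he
          obtain rfl : a = i + 1 := he
          exact hx2
  · rintro ⟨ha, hb⟩
    refine hmax (s + 1) (by omega)
      (pc_insert n s c p hinj u hu (i + 2) (by omega) hpc ?_ ?_ ?_)
    · intro a h he
      obtain rfl : i = a := by omega
      exact fun hcon => hoff _ ha i (by omega) (hcon.trans (hsym _ u))
    · intro a h he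
      obtain rfl : a = i + 1 := by omega
      exact fun hcon => hdiff _ _ ha hb (hpne (i + 1) (i + 2) (by omega) (by omega) (by omega))
        ((hsym u _).trans hcon)
    · intro a h he
      obtain rfl : a = i + 2 := he
      exact (hoff _ hb (i + 2) (by omega)).symm
end
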